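/- arXiv:1704.00297 — 9 statements merged into one kernel-verified Lean document; each statement's English description precedes it below -/
import Mathlib

section
/- For a finite set S, n ∈ ℕ, and π ∈ Δ^{(n)}(S), the type class T^{(n)}_π S = {x̄ ∈ S^n : empirical distribution of x̄ equals π} satisfies exp(n·h(π) − |S|·ln(n+1)) ≤ |T^{(n)}_π S| ≤ exp(n·h(π)). -/
open scoped Classical BigOperators
open Finset

noncomputable section

/-- A probability distribution on a finite set. -/
def IsDist {S : Type*} [Fintype S] (p : S → ℝ) : Prop :=
  (∀ x, 0 ≤ p x) ∧ ∑ x, p x = 1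

/-- Shannon entropy (natural logarithm). -/
def ent {S : Type*} [Fintype S] (p : S → ℝ) : ℝ :=
  -∑ x, p x * Real.log (p x)

/-- Relative entropy (Kullback–Leibler divergence). -/
def KL {S : Type*} [Fintype S] (p q : S → ℝ) : ℝ :=
  ∑ x, p x * Real.log (p x / q x)

/-- The n-fold product (Bernoulli) distribution. -/
def powDist {S : Type*} [Fintype S] (p : S → ℝ) (n : ℕ) : (Fin n → S) → ℝ :=
  fun f => ∏ i, p (f i)

/-- Tensor product of two distributions. -/
def prodDist {S T : Type*} [Fintype S] [Fintype T] (p : S → ℝ) (q : T → ℝ) :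
    S × T → ℝ :=
  fun z => p z.1 * q z.2

/-- Empirical distribution of a sequence. -/
def emp {S : Type*} [Fintype S] {n : ℕ} (f : Fin n → S) : S → ℝ :=
  fun a => ((univ.filter (fun i => f i = a)).card : ℝ) / n

/-- A coupling (joint distribution with given marginals). -/
def IsCoupling {S T : Type*} [Fintype S] [Fintype T]
    (w : S × T → ℝ) (p : S → ℝ) (q : T → ℝ) : Prop :=
  IsDist w ∧ (∀ x, ∑ y, w (x, y) = p x) ∧ (∀ y, ∑ x, w (x, y) = q y)

/-- The intrinsic Kolmogorov–Sinai distance. -/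
def kdist {S T : Type*} [Fintype S] [Fintype T] (p : S → ℝ) (q : T → ℝ) : ℝ :=
  sInf {d : ℝ | ∃ w : S × T → ℝ, IsCoupling w p q ∧ d = 2 * ent w - ent p - ent q}

end

section Aux
open Nat Equiv

theorem fact_max (m l : ℕ) : m ! * m ^ l ≤ l ! * m ^ m := by
  rcases le_total l m with h | h
  · obtain ⟨d, rfl⟩ := Nat.exists_eq_add_of_le h
    have key : ∀ d, (l + d)! ≤ l ! * (l + d) ^ d := by
      intro d
      induction d with
      | zero => simp
      | succ d ih =>
        calc (l + (d+1))! = (l + d + 1) * (l + d)! := by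
              rw [← Nat.add_assoc, Nat.factorial_succ]
          _ ≤ (l + d + 1) * (l ! * (l + d) ^ d) := Nat.mul_le_mul_left _ ih
          _ ≤ (l + d + 1) * (l ! * (l + d + 1) ^ d) := by
              exact Nat.mul_le_mul_left _ (Nat.mul_le_mul_left _ (Nat.pow_le_pow_left (by omega) _))
          _ = l ! * (l + (d+1)) ^ (d + 1) := by ring
    calc (l + d)! * (l + d) ^ l ≤ (l ! * (l + d) ^ d) * (l+d) ^ l := Nat.mul_le_mul_right _ (key d)
      _ = l ! * (l + d) ^ (l + d) := by rw [mul_assoc, ← pow_add]; ring_nf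
  · obtain ⟨d, rfl⟩ := Nat.exists_eq_add_of_le h
    have key : ∀ d, m ! * m ^ d ≤ (m + d)! := by
      intro d
      induction d with
      | zero => simp
      | succ d ih =>
        calc m ! * m ^ (d+1) = (m ! * m ^ d) * m := by ring
          _ ≤ (m + d)! * m := Nat.mul_le_mul_right _ ih
          _ ≤ (m + d)! * (m + d + 1) := Nat.mul_le_mul_left _ (by omega)
          _ = (m + (d+1))! := by rw [← Nat.add_assoc, Nat.factorial_succ]; ring
    calc m ! * m ^ (m + d) = (m ! * m ^ d) * m ^ m := by rw [pow_add]; ring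
      _ ≤ (m + d)! * m ^ m := Nat.mul_le_mul_right _ (key d)

def fiberFstEquiv {S : Type*} (k : S → ℕ) (a : S) :
    {u : Σ b, Fin (k b) // u.1 = a} ≃ Fin (k a) where
  toFun u := Fin.cast (congrArg k u.2) u.1.2
  invFun j := ⟨⟨a, j⟩, rfl⟩
  left_inv := fun ⟨⟨b, j⟩, h⟩ => by subst h; rfl
  right_inv := fun j => rfl

theorem card_typeclass {S : Type*} [Fintype S] {n : ℕ} (k : S → ℕ) (hk : ∑ a, k a = n) :
    (univ.filter fun f : Fin n → S => ∀ a, (univ.filter fun i => f i = a).card = k a).card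
      * ∏ a, (k a)! = n ! := by
  classical
  obtain ⟨e0⟩ : Nonempty ((Σ a, Fin (k a)) ≃ Fin n) :=
    ⟨Fintype.equivOfCardEq (by simp [hk])⟩
  set f0 : Fin n → S := fun i => (e0.symm i).1 with hf0def
  have hf0 : ∀ a, Fintype.card {i // f0 i = a} = k a := by
    intro a
    rw [Fintype.card_congr ((e0.symm.subtypeEquiv (fun i => Iff.rfl)).trans (fiberFstEquiv k a))]
    simp
  have hcnt : ∀ (f : Fin n → S) (a : S),
      (univ.filter fun i => f i = a).card = Fintype.card {i // f i = a} := by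
    intro f a; rw [Fintype.card_subtype]
  have hstab : Fintype.card {σ : Perm (Fin n) // f0 ∘ σ = f0} = ∏ a, (k a)! := by
    rw [DomMulAct.stabilizer_card]
    exact Finset.prod_congr rfl fun a _ => by rw [hf0]
  have key : ∀ f : Fin n → S, (∀ a, (univ.filter fun i => f i = a).card = k a) →
      Fintype.card {σ : Perm (Fin n) // f0 ∘ σ = f} = ∏ a, (k a)! := by
    intro f hf
    have e : ∀ a, {i // f i = a} ≃ {i // f0 i = a} := fun a =>
      Fintype.equivOfCardEq (by rw [← hcnt f a, hf, hf0])
    set τ : Perm (Fin n) :=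
      (Equiv.sigmaFiberEquiv f).symm.trans
        ((Equiv.sigmaCongrRight e).trans (Equiv.sigmaFiberEquiv f0)) with hτdef
    have hτ : f0 ∘ τ = f := by
      funext i
      show f0 ((e (f i) ⟨i, rfl⟩ : {j // f0 j = f i}) : Fin n) = f i
      exact (e (f i) ⟨i, rfl⟩).2
    rw [← hstab]
    apply Fintype.card_congr
    refine Equiv.subtypeEquiv (Equiv.mulRight τ⁻¹) fun σ => ?_
    constructor
    · intro h
      funext i
      have h1 : f0 (σ (τ.symm i)) = f (τ.symm i) := congrFun h _
      have h2 : f0 (τ (τ.symm i)) = f (τ.symm i) := congrFun hτ _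
      simp only [Equiv.coe_mulRight, Equiv.Perm.coe_mul, Function.comp_apply]
      show f0 (σ (τ⁻¹ i)) = f0 i
      rw [show (τ⁻¹ : Perm (Fin n)) i = τ.symm i from rfl, h1, ← h2, Equiv.apply_symm_apply]
    · intro h
      funext i
      have h1 : f0 (σ (τ⁻¹ (τ i))) = f0 (τ i) := congrFun h (τ i)
      have h2 : f0 (τ i) = f i := congrFun hτ i
      simpa [show (τ⁻¹ : Perm (Fin n)) (τ i) = i from τ.symm_apply_apply i, h2] using h1
  have bad : ∀ f : Fin n → S, ¬ (∀ a, (univ.filter fun i => f i = a).card = k a) →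
      Fintype.card {σ : Perm (Fin n) // f0 ∘ σ = f} = 0 := by
    intro f hf
    rw [Fintype.card_eq_zero_iff]
    constructor
    intro ⟨σ, hσ⟩
    apply hf
    intro a
    have eσ : {i : Fin n // f i = a} ≃ {j : Fin n // f0 j = a} :=
      σ.subtypeEquiv (fun i => by rw [show f0 (σ i) = f i from congrFun hσ i])
    rw [hcnt, Fintype.card_congr eσ, hf0]
  have total : (n)! = ∑ f : Fin n → S, Fintype.card {σ : Perm (Fin n) // f0 ∘ σ = f} := by
    calc n ! = Fintype.card (Perm (Fin n)) := by simp [Fintype.card_perm]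
      _ = (univ : Finset (Perm (Fin n))).card := (Finset.card_univ).symm
      _ = ∑ f : Fin n → S, (univ.filter fun σ : Perm (Fin n) => f0 ∘ σ = f).card :=
          Finset.card_eq_sum_card_fiberwise (fun σ _ => mem_univ _)
      _ = ∑ f : Fin n → S, Fintype.card {σ : Perm (Fin n) // f0 ∘ σ = f} :=
          Finset.sum_congr rfl fun f _ => (Fintype.card_subtype _).symm
  rw [total, ← Finset.sum_filter_add_sum_filter_not univ
    (fun f : Fin n → S => ∀ a, (univ.filter fun i => f i = a).card = k a)]
  rw [Finset.sum_congr rfl (fun f hf => key f (mem_filter.mp hf).2),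
      Finset.sum_congr rfl (fun f hf => bad f (mem_filter.mp hf).2)]
  simp [mul_comm]

end Aux

open Nat


theorem stmt5 {S : Type*} [Fintype S] (n : ℕ) (hn : 0 < n)
    (π : S → ℝ) (hπ : IsDist π) (hden : ∀ x, ∃ k : ℕ, π x = (k : ℝ) / n) :
    Real.exp ((n : ℝ) * ent π - Fintype.card S * Real.log (n + 1))
        ≤ (Nat.card {xs : Fin n → S // emp xs = π} : ℝ) ∧
    (Nat.card {xs : Fin n → S // emp xs = π} : ℝ) ≤ Real.exp ((n : ℝ) * ent π) := by
  classical
  choose k hk using hden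
  have hn0 : (n : ℝ) ≠ 0 := Nat.cast_ne_zero.mpr hn.ne'
  have hkn : ∑ a, k a = n := by
    have h1 : ∑ a, (k a : ℝ) / n = 1 := by
      rw [← hπ.2]; exact Finset.sum_congr rfl fun a _ => (hk a).symm
    rw [← Finset.sum_div, div_eq_one_iff_eq hn0] at h1
    exact_mod_cast h1
  have hπk : ∀ a, (k a : ℝ) = n * π a := fun a => by rw [hk a]; field_simp
  set cnt : (Fin n → S) → S → ℕ := fun f a => (univ.filter fun i => f i = a).card with hcnt
  set T : Finset (Fin n → S) := univ.filter (fun f => ∀ a, cnt f a = k a) with hT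
  have hiff : ∀ f : Fin n → S, emp f = π ↔ ∀ a, cnt f a = k a := by
    intro f
    constructor
    · intro h a
      have h2 : ((cnt f a : ℝ)) / n = π a := congrFun h a
      rw [hk a] at h2
      field_simp at h2
      exact_mod_cast h2
    · intro h
      funext a
      have h3 : ((univ.filter fun i => f i = a).card : ℕ) = k a := by
        have := h a; simp only [hcnt] at this; exact this
      show ((univ.filter fun i => f i = a).card : ℝ) / n = π a
      rw [h3, hk a]
  have hNT : (Nat.card {xs : Fin n → S // emp xs = π}) = T.card := by
    rw [Nat.card_congr (Equiv.subtypeEquivRight hiff), Nat.card_eq_fintype_card,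
      Fintype.card_subtype, hT]
  set P : ℝ := ∏ a, π a ^ k a with hPdef
  have hk0 : ∀ a, π a = 0 → k a = 0 := by
    intro a ha
    have := hk a
    rw [ha, eq_comm, div_eq_zero_iff] at this
    exact_mod_cast this.resolve_right hn0
  have hP : P = Real.exp (-((n : ℝ) * ent π)) := by
    have h1 : ∀ a : S, π a ^ k a = Real.exp (k a * Real.log (π a)) := by
      intro a
      by_cases hz : π a = 0
      · rw [hz, hk0 a hz]; simp
      · have hpos : 0 < π a := (hπ.1 a).lt_of_ne' hz
        rw [← Real.log_pow, Real.exp_log (pow_pos hpos _)]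
    rw [hPdef, Finset.prod_congr rfl (fun a _ => h1 a), ← Real.exp_sum]
    congr 1
    have h4 : ∀ a : S, (k a : ℝ) * Real.log (π a) = n * (π a * Real.log (π a)) := by
      intro a; rw [hπk a]; ring
    rw [Finset.sum_congr rfl (fun a _ => h4 a), ← Finset.mul_sum, ent]
    ring
  have hPpos : 0 < P := hP ▸ Real.exp_pos _
  have hpow : ∀ f : Fin n → S, powDist π n f = ∏ a, π a ^ cnt f a := by
    intro f
    rw [powDist, ← Finset.prod_fiberwise_of_maps_to (fun i _ => mem_univ (f i))
      (fun i => π (f i))]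
    refine Finset.prod_congr rfl fun a _ => ?_
    rw [Finset.prod_congr rfl (fun i hi => by rw [(mem_filter.mp hi).2]),
      Finset.prod_const]
  have hsum1 : ∑ f : Fin n → S, powDist π n f = 1 := by
    have h5 : ∑ f : Fin n → S, powDist π n f
        = ∑ f ∈ Fintype.piFinset (fun _ : Fin n => (univ : Finset S)), ∏ i, π (f i) := by
      rw [Fintype.piFinset_univ]; rfl
    rw [h5, ← Finset.prod_univ_sum]
    simp [hπ.2]
  have hpow_nonneg : ∀ f : Fin n → S, 0 ≤ powDist π n f := fun f =>
    Finset.prod_nonneg fun i _ => hπ.1 _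
  have hTsum : ∑ f ∈ T, powDist π n f = T.card * P := by
    have h1 : ∀ f ∈ T, powDist π n f = P := by
      intro f hf
      rw [hpow f, hPdef]
      exact Finset.prod_congr rfl fun a _ => by rw [(mem_filter.mp hf).2 a]
    rw [Finset.sum_congr rfl h1, Finset.sum_const, nsmul_eq_mul]
  have hupper : (T.card : ℝ) * P ≤ 1 := by
    rw [← hTsum, ← hsum1]
    exact Finset.sum_le_sum_of_subset_of_nonneg (subset_univ T)
      (fun f _ _ => hpow_nonneg f)
  have hπprod : ∀ l : S → ℕ, (∑ a, l a = n) →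
      (∏ a, π a ^ l a) * (n : ℝ) ^ n = ∏ a, (k a : ℝ) ^ l a := by
    intro l hl
    have h1 : ∏ a, π a ^ l a = (∏ a, (k a : ℝ) ^ l a) / ∏ a, (n : ℝ) ^ l a := by
      rw [← Finset.prod_div_distrib]
      exact Finset.prod_congr rfl fun a _ => by rw [hk a, div_pow]
    rw [h1, Finset.prod_pow_eq_pow_sum, hl, div_mul_cancel₀]
    positivity
  have hmax : ∀ l : S → ℕ, (∑ a, l a = n) →
      ((univ.filter (fun f : Fin n → S => ∀ a, cnt f a = l a)).card : ℝ) * ∏ a, π a ^ l a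
        ≤ (T.card : ℝ) * P := by
    intro l hl
    set Tl := univ.filter (fun f : Fin n → S => ∀ a, cnt f a = l a) with hTl
    have hctl : Tl.card * ∏ a, (l a)! = n ! := by
      rw [hTl]; simp only [hcnt]; exact card_typeclass l hl
    have hctk : T.card * ∏ a, (k a)! = n ! := by
      rw [hT]; simp only [hcnt]; exact card_typeclass k hkn
    have hNineq : (n !) * ∏ a, ((k a)! * k a ^ l a) ≤ n ! * ∏ a, ((l a)! * k a ^ k a) :=
      Nat.mul_le_mul_left _ (Finset.prod_le_prod' fun a _ => fact_max (k a) (l a))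
    have hcast := (Nat.cast_le (α := ℝ)).mpr hNineq
    push_cast at hcast
    have hDpos : (0:ℝ) < ((∏ a, (l a)! : ℕ) : ℝ) * ((∏ a, (k a)! : ℕ) : ℝ) * (n:ℝ)^n := by
      have h1 : 0 < ∏ a, (l a)! := Finset.prod_pos fun a _ => Nat.factorial_pos _
      have h2 : 0 < ∏ a, (k a)! := Finset.prod_pos fun a _ => Nat.factorial_pos _
      have h3 : (0:ℝ) < (n:ℝ) ^ n := pow_pos (by exact_mod_cast hn) n
      exact mul_pos (mul_pos (by exact_mod_cast h1) (by exact_mod_cast h2)) h3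
    refine le_of_mul_le_mul_right ?_ hDpos
    calc (Tl.card:ℝ) * (∏ a, π a ^ l a) * (((∏ a, (l a)! : ℕ):ℝ) * ((∏ a, (k a)! : ℕ):ℝ) * (n:ℝ)^n)
        = ((Tl.card * ∏ a, (l a)! : ℕ) : ℝ) * ((∏ a, π a ^ l a) * (n:ℝ)^n)
            * ((∏ a, (k a)! : ℕ):ℝ) := by push_cast; ring
      _ = (n ! : ℝ) * (∏ a, (k a : ℝ) ^ l a) * ((∏ a, (k a)! : ℕ):ℝ) := by
            rw [hctl, hπprod l hl]
      _ = (n ! : ℝ) * ∏ a, (((k a)! : ℝ) * (k a:ℝ) ^ l a) := by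
            rw [Finset.prod_mul_distrib]; push_cast; ring
      _ ≤ (n ! : ℝ) * ∏ a, (((l a)! : ℝ) * (k a:ℝ) ^ k a) := hcast
      _ = (n ! : ℝ) * (∏ a, (k a:ℝ) ^ k a) * ((∏ a, (l a)! : ℕ):ℝ) := by
            rw [Finset.prod_mul_distrib]; push_cast; ring
      _ = ((T.card * ∏ a, (k a)! : ℕ) : ℝ) * (P * (n:ℝ)^n) * ((∏ a, (l a)! : ℕ):ℝ) := by
            rw [hctk, hPdef, hπprod k hkn]
      _ = (T.card:ℝ) * P * (((∏ a, (l a)! : ℕ):ℝ) * ((∏ a, (k a)! : ℕ):ℝ) * (n:ℝ)^n) := by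
            push_cast; ring
  set cmap : (Fin n → S) → (S → Fin (n+1)) := fun f a =>
    ⟨cnt f a, Nat.lt_succ_of_le (le_trans (Finset.card_filter_le _ _) (by simp))⟩ with hcmap
  have hfib : ∑ c : S → Fin (n+1), ∑ f ∈ univ.filter (fun f => cmap f = c), powDist π n f
      = 1 := by
    rw [Finset.sum_fiberwise_of_maps_to (fun f _ => mem_univ _), hsum1]
  have hinner : ∀ c : S → Fin (n+1),
      ∑ f ∈ univ.filter (fun f => cmap f = c), powDist π n f ≤ (T.card : ℝ) * P := by
    intro c
    by_cases hc : ∑ a, ((c a : ℕ)) = n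
    · have heq : (univ.filter (fun f => cmap f = c))
          = univ.filter (fun f : Fin n → S => ∀ a, cnt f a = (c a : ℕ)) := by
        apply Finset.filter_congr
        intro f _
        simp only [hcmap, funext_iff, Fin.ext_iff]
      rw [heq]
      have h1 : ∀ f ∈ univ.filter (fun f : Fin n → S => ∀ a, cnt f a = (c a : ℕ)),
          powDist π n f = ∏ a, π a ^ (c a : ℕ) := by
        intro f hf
        rw [hpow f]
        exact Finset.prod_congr rfl fun a _ => by rw [(mem_filter.mp hf).2 a]
      rw [Finset.sum_congr rfl h1, Finset.sum_const, nsmul_eq_mul]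
      exact hmax _ hc
    · have heq : (univ.filter (fun f => cmap f = c)) = ∅ := by
        rw [Finset.filter_eq_empty_iff]
        intro f _ hf
        apply hc
        have h1 : ∀ a, (c a : ℕ) = cnt f a := by
          intro a; rw [← hf]
        have h2 : ∑ a, cnt f a = n := by
          simp only [hcnt]
          rw [← Finset.card_eq_sum_card_fiberwise (fun (i : Fin n) _ => mem_univ (f i))]
          simp
        rw [Finset.sum_congr rfl fun a _ => h1 a, h2]
      rw [heq]
      simp only [Finset.sum_empty]
      exact mul_nonneg (Nat.cast_nonneg _) hPpos.le
  have hlow : 1 ≤ ((n:ℝ)+1) ^ (Fintype.card S) * ((T.card : ℝ) * P) := by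
    calc (1:ℝ) = ∑ c : S → Fin (n+1), ∑ f ∈ univ.filter (fun f => cmap f = c), powDist π n f :=
          hfib.symm
      _ ≤ ∑ _c : S → Fin (n+1), (T.card : ℝ) * P :=
          Finset.sum_le_sum fun c _ => hinner c
      _ = ((n:ℝ)+1) ^ (Fintype.card S) * ((T.card : ℝ) * P) := by
          rw [Finset.sum_const, nsmul_eq_mul, Finset.card_univ, Fintype.card_fun,
            Fintype.card_fin]
          push_cast
          ring
  rw [hNT]
  constructor
  · have hpow1 : ((n:ℝ)+1) ^ (Fintype.card S)
        = Real.exp ((Fintype.card S : ℝ) * Real.log ((n:ℝ)+1)) := by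
      rw [← Real.log_pow, Real.exp_log (by positivity)]
    rw [Real.exp_sub, div_le_iff₀ (Real.exp_pos _)]
    calc Real.exp ((n:ℝ) * ent π) = 1 * Real.exp ((n:ℝ) * ent π) := (one_mul _).symm
      _ ≤ (((n:ℝ)+1) ^ (Fintype.card S) * ((T.card:ℝ) * P)) * Real.exp ((n:ℝ) * ent π) :=
          mul_le_mul_of_nonneg_right hlow (Real.exp_pos _).le
      _ = (T.card : ℝ) * (((n:ℝ)+1) ^ (Fintype.card S) * (P * Real.exp ((n:ℝ) * ent π))) := by
          ring
      _ = (T.card : ℝ) * Real.exp ((Fintype.card S : ℝ) * Real.log ((n:ℝ)+1)) := by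
          rw [hP, ← Real.exp_add, neg_add_cancel, Real.exp_zero, mul_one, hpow1]
  · have h2 := mul_le_mul_of_nonneg_right hupper (Real.exp_pos ((n:ℝ) * ent π)).le
    rw [hP] at h2
    rw [one_mul, mul_assoc, ← Real.exp_add, neg_add_cancel, Real.exp_zero, mul_one] at h2
    exact h2
end

section
/- Let X = (S,p) be a finite probability space, n ∈ ℕ, and π ∈ Δ^{(n)}(S). Then the probability of the type class satisfies exp(−n·D(π‖p) − |S|·ln(n+1)) ≤ p^{⊗n}(T^{(n)}_π S) ≤ exp(−n·D(π‖p)). -/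
open scoped Classical BigOperators
open Finset

namespace Stmt6Aux

lemma fact_aux (b d : ℕ) : (b + d).factorial ≤ b.factorial * (b + d) ^ d := by
  induction d with
  | zero => simp
  | succ d ih =>
    have h1 : (b + (d + 1)).factorial = (b + d + 1) * (b + d).factorial := by
      rw [show b + (d + 1) = (b + d) + 1 from by ring, Nat.factorial_succ]
    rw [h1]
    calc (b + d + 1) * (b + d).factorial
        ≤ (b + d + 1) * (b.factorial * (b + d) ^ d) := Nat.mul_le_mul_left _ ih
      _ ≤ (b + d + 1) * (b.factorial * (b + d + 1) ^ d) :=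
          Nat.mul_le_mul_left _ (Nat.mul_le_mul_left _ (Nat.pow_le_pow_left (by omega) d))
      _ = b.factorial * (b + (d + 1)) ^ (d + 1) := by ring

lemma key_nat (a b : ℕ) : a.factorial * a ^ b ≤ b.factorial * a ^ a := by
  rcases le_total a b with h | h
  · obtain ⟨d, rfl⟩ := Nat.exists_eq_add_of_le h
    calc a.factorial * a ^ (a + d) = a.factorial * a ^ d * a ^ a := by ring
      _ ≤ a.factorial * (a + 1) ^ d * a ^ a :=
          Nat.mul_le_mul_right _ (Nat.mul_le_mul_left _ (Nat.pow_le_pow_left (Nat.le_succ a) d))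
      _ ≤ (a + d).factorial * a ^ a :=
          Nat.mul_le_mul_right _ Nat.factorial_mul_pow_le_factorial
  · obtain ⟨d, rfl⟩ := Nat.exists_eq_add_of_le h
    calc (b + d).factorial * (b + d) ^ b
        ≤ b.factorial * (b + d) ^ d * (b + d) ^ b := Nat.mul_le_mul_right _ (fact_aux b d)
      _ = b.factorial * (b + d) ^ (b + d) := by ring

variable {S : Type*} [Fintype S]

/-- count of occurrences of `x` in `f`. -/
noncomputable def cnt {n : ℕ} (f : Fin n → S) (x : S) : ℕ := (univ.filter (fun i => f i = x)).card

lemma sum_cnt {n : ℕ} (f : Fin n → S) : ∑ x, cnt f x = n := by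
  classical
  have := Finset.card_eq_sum_card_fiberwise (f := f) (s := univ) (t := univ)
    (fun i _ => mem_univ (f i))
  simpa [cnt] using this.symm

lemma prod_cnt {n : ℕ} (f : Fin n → S) (q : S → ℝ) :
    ∏ i, q (f i) = ∏ x, q x ^ cnt f x := by
  classical
  rw [← Finset.prod_fiberwise_of_maps_to (g := f) (t := univ)
      (fun i _ => mem_univ (f i)) (fun i => q (f i))]
  refine Finset.prod_congr rfl fun x _ => ?_
  rw [Finset.prod_congr rfl (fun i hi => by rw [(mem_filter.mp hi).2]), Finset.prod_const]
  rfl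

/-- permutations carrying `g` to `f` correspond to families of fiber bijections -/
noncomputable def permEquiv {n : ℕ} (f g : Fin n → S) :
    {σ : Equiv.Perm (Fin n) // ∀ i, g (σ i) = f i} ≃
      ∀ x : S, ({i // f i = x} ≃ {i // g i = x}) where
  toFun σ x :=
    { toFun := fun i => ⟨σ.1 i.1, by rw [σ.2]; exact i.2⟩
      invFun := fun j => ⟨σ.1.symm j.1, by
        have h := σ.2 (σ.1.symm j.1)
        rw [Equiv.apply_symm_apply] at h
        rw [← h]; exact j.2⟩
      left_inv := fun i => Subtype.ext (σ.1.symm_apply_apply i.1)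
      right_inv := fun j => Subtype.ext (σ.1.apply_symm_apply j.1) }
  invFun e := ⟨(Equiv.sigmaFiberEquiv f).symm.trans
      ((Equiv.sigmaCongrRight e).trans (Equiv.sigmaFiberEquiv g)), by
    intro i
    exact ((e (f i)) ⟨i, rfl⟩).2⟩
  left_inv := by
    rintro ⟨σ, hσ⟩
    apply Subtype.ext
    apply Equiv.ext
    intro i
    rfl
  right_inv := by
    intro e
    funext x
    apply Equiv.ext
    rintro ⟨i, hi⟩
    subst hi
    rfl

lemma card_perm_fiber {n : ℕ} (f g : Fin n → S) (h : ∀ x, cnt f x = cnt g x) :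
    Fintype.card {σ : Equiv.Perm (Fin n) // ∀ i, g (σ i) = f i}
      = ∏ x, (cnt g x).factorial := by
  classical
  rw [Fintype.card_congr (permEquiv f g), Fintype.card_pi]
  refine Finset.prod_congr rfl fun x _ => ?_
  have hcf : Fintype.card {i // f i = x} = cnt f x := by
    simp [Fintype.card_subtype, cnt]
  have hcg : Fintype.card {i // g i = x} = cnt g x := by
    simp [Fintype.card_subtype, cnt]
  have e : {i // f i = x} ≃ {i // g i = x} :=
    Fintype.equivOfCardEq (by rw [hcf, hcg, h x])
  rw [Fintype.card_equiv e, hcf, h x]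

lemma card_typeclass {n : ℕ} (g : Fin n → S) :
    ((univ.filter fun f : Fin n → S => ∀ x, cnt f x = cnt g x).card)
      * ∏ x, (cnt g x).factorial = n.factorial := by
  classical
  have hmaps : ∀ σ : Equiv.Perm (Fin n),
      (fun i => g (σ i)) ∈ univ.filter (fun f : Fin n → S => ∀ x, cnt f x = cnt g x) := by
    intro σ
    simp only [mem_filter, mem_univ, true_and]
    intro x
    unfold cnt
    apply Finset.card_bij (fun i _ => σ i)
    · intro i hi
      simp only [mem_filter, mem_univ, true_and] at *
      exact hi
    · intro i _ j _ hij
      exact σ.injective hij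
    · intro j hj
      refine ⟨σ.symm j, ?_, by simp⟩
      simp only [mem_filter, mem_univ, true_and] at *
      simpa using hj
  have hpart := Finset.card_eq_sum_card_fiberwise
    (f := fun σ : Equiv.Perm (Fin n) => fun i => g (σ i)) (s := univ)
    (t := univ.filter fun f : Fin n → S => ∀ x, cnt f x = cnt g x)
    (fun σ _ => hmaps σ)
  rw [Finset.card_univ, Fintype.card_perm, Fintype.card_fin] at hpart
  rw [hpart, Finset.sum_congr rfl (fun f hf => ?_), Finset.sum_const, smul_eq_mul]
  have hfe : (univ.filter fun σ : Equiv.Perm (Fin n) => (fun i => g (σ i)) = f)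
      = univ.filter fun σ : Equiv.Perm (Fin n) => ∀ i, g (σ i) = f i := by
    apply Finset.filter_congr
    intro σ _
    simp [funext_iff]
  rw [hfe, ← Fintype.card_subtype]
  exact card_perm_fiber f g (by simpa using (mem_filter.mp hf).2)

lemma exists_realize {n : ℕ} {k : S → ℕ} (h : ∑ x, k x = n) :
    ∃ g : Fin n → S, ∀ x, cnt g x = k x := by
  classical
  have e : (Σ x : S, Fin (k x)) ≃ Fin n := Fintype.equivOfCardEq (by simp [h])
  refine ⟨fun i => (e.symm i).1, fun x => ?_⟩
  unfold cnt
  have hcard : (univ.filter fun i : Fin n => (e.symm i).1 = x).card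
      = (univ.filter fun s : Σ x' : S, Fin (k x') => s.1 = x).card := by
    apply Finset.card_bij (fun i _ => e.symm i)
    · intro i hi
      simp only [mem_filter, mem_univ, true_and] at *
      exact hi
    · intro i _ j _ hij
      exact e.symm.injective hij
    · intro s hs
      refine ⟨e s, ?_, by simp⟩
      simp only [mem_filter, mem_univ, true_and] at *
      simpa using hs
  rw [hcard]
  have e2 : {s : Σ x' : S, Fin (k x') // s.1 = x} ≃ Fin (k x) :=
    { toFun := fun s => Fin.cast (congrArg k s.2) s.1.2
      invFun := fun j => ⟨⟨x, j⟩, rfl⟩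
      left_inv := by rintro ⟨⟨a, j⟩, rfl⟩; rfl
      right_inv := fun j => rfl }
  rw [← Fintype.card_subtype, Fintype.card_congr e2, Fintype.card_fin]

end Stmt6Aux

open Stmt6Aux

theorem stmt6 {S : Type*} [Fintype S] (p : S → ℝ) (hp : IsDist p)
    (hpos : ∀ x, 0 < p x) (n : ℕ) (hn : 0 < n)
    (π : S → ℝ) (hπ : IsDist π) (hden : ∀ x, ∃ k : ℕ, π x = (k : ℝ) / n) :
    Real.exp (-(n : ℝ) * KL π p - Fintype.card S * Real.log (n + 1))
        ≤ ∑ xs ∈ univ.filter (fun xs : Fin n → S => emp xs = π), powDist p n xs ∧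
    ∑ xs ∈ univ.filter (fun xs : Fin n → S => emp xs = π), powDist p n xs
        ≤ Real.exp (-(n : ℝ) * KL π p) := by
  classical
  obtain ⟨hπ0, hπ1⟩ := hπ
  obtain ⟨hp0, hp1⟩ := hp
  have hnR : (0:ℝ) < n := by exact_mod_cast hn
  have hn' : (n:ℝ) ≠ 0 := ne_of_gt hnR
  set k : S → ℕ := fun x => (hden x).choose with hkdef
  have hkx : ∀ x, π x = (k x : ℝ) / n := fun x => (hden x).choose_spec
  -- sum of k is n
  have hsumk : ∑ x, k x = n := by
    have h1 : (∑ x, (k x:ℝ)) / n = 1 := by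
      rw [Finset.sum_div, ← hπ1]
      exact Finset.sum_congr rfl fun x _ => (hkx x).symm
    have h2 : (∑ x, (k x:ℝ)) = n := by
      field_simp at h1; linarith
    exact_mod_cast h2
  -- positivity of π where k ≠ 0
  have hπpos : ∀ x, k x ≠ 0 → 0 < π x := by
    intro x hx
    rw [hkx x]
    have : (0:ℝ) < k x := by exact_mod_cast Nat.pos_of_ne_zero hx
    positivity
  -- exp forms
  have hQ : (∏ x, π x ^ k x) = Real.exp (∑ x, (k x:ℝ) * Real.log (π x)) := by
    rw [Real.exp_sum]
    refine Finset.prod_congr rfl fun x _ => ?_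
    rcases eq_or_ne (k x) 0 with h | h
    · simp [h]
    · rw [Real.exp_nat_mul, Real.exp_log (hπpos x h)]
  have hP : (∏ x, p x ^ k x) = Real.exp (∑ x, (k x:ℝ) * Real.log (p x)) := by
    rw [Real.exp_sum]
    refine Finset.prod_congr rfl fun x _ => ?_
    rw [Real.exp_nat_mul, Real.exp_log (hpos x)]
  -- relate to KL
  have hKLn : (n:ℝ) * KL π p
      = ∑ x, ((k x:ℝ) * Real.log (π x) - (k x:ℝ) * Real.log (p x)) := by
    rw [KL, Finset.mul_sum]
    refine Finset.sum_congr rfl fun x _ => ?_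
    rcases eq_or_ne (k x) 0 with h | h
    · have hπx : π x = 0 := by simp [hkx x, h]
      simp [hπx, h]
    · have hπx : 0 < π x := hπpos x h
      have hnπ : (n:ℝ) * π x = k x := by rw [hkx x]; field_simp
      rw [Real.log_div (ne_of_gt hπx) (ne_of_gt (hpos x))]
      calc (n:ℝ) * (π x * (Real.log (π x) - Real.log (p x)))
          = ((n:ℝ) * π x) * (Real.log (π x) - Real.log (p x)) := by ring
        _ = (k x:ℝ) * (Real.log (π x) - Real.log (p x)) := by rw [hnπ]
        _ = (k x:ℝ) * Real.log (π x) - (k x:ℝ) * Real.log (p x) := by ring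
  have hPQ : (∏ x, p x ^ k x)
      = Real.exp (-(n:ℝ) * KL π p) * (∏ x, π x ^ k x) := by
    rw [hP, hQ, ← Real.exp_add]
    congr 1
    rw [Finset.sum_sub_distrib] at hKLn
    linarith
  -- the filter in the statement in terms of cnt
  have hTfil : (univ.filter (fun xs : Fin n → S => emp xs = π))
      = univ.filter (fun f : Fin n → S => ∀ x, cnt f x = k x) := by
    refine Finset.filter_congr fun f _ => ?_
    constructor
    · intro h x
      have hx := congrFun h x
      rw [hkx x] at hx
      unfold emp at hx
      have : ((univ.filter (fun i => f i = x)).card : ℝ) = k x := by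
        field_simp at hx; exact_mod_cast hx
      exact_mod_cast this
    · intro h
      funext x
      rw [hkx x]
      unfold emp
      rw [show (univ.filter fun i => f i = x).card = cnt f x from rfl, h x]
  -- generic sum over a type class
  have hsum_gen : ∀ (q : S → ℝ) (c : S → ℕ),
      ∑ f ∈ univ.filter (fun f : Fin n → S => ∀ x, cnt f x = c x), ∏ i, q (f i)
        = ((univ.filter (fun f : Fin n → S => ∀ x, cnt f x = c x)).card : ℝ)
            * ∏ x, q x ^ c x := by
    intro q c
    have heach : ∀ f ∈ univ.filter (fun f : Fin n → S => ∀ x, cnt f x = c x),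
        ∏ i, q (f i) = ∏ x, q x ^ c x := by
      intro f hf
      rw [prod_cnt f q]
      exact Finset.prod_congr rfl fun x _ => by rw [(mem_filter.mp hf).2 x]
    rw [Finset.sum_congr rfl heach, Finset.sum_const, nsmul_eq_mul]
  -- total mass 1
  have htot : ∑ f : Fin n → S, ∏ i, π (f i) = 1 := by
    have h := Finset.prod_univ_sum (t := fun _ : Fin n => (univ : Finset S))
      (f := fun _ x => π x)
    simpa [hπ1] using h.symm
  -- realize k
  obtain ⟨g0, hg0⟩ := exists_realize (S := S) hsumk
  set B := (univ.filter (fun f : Fin n → S => ∀ x, cnt f x = k x)).card with hBdef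
  have hB : B * ∏ x, (k x).factorial = n.factorial := by
    have h := card_typeclass g0
    simp only [hg0] at h
    exact h
  -- B * Q ≤ 1
  have hBQ1 : (B:ℝ) * ∏ x, π x ^ k x ≤ 1 := by
    rw [← hsum_gen π k, ← htot]
    exact Finset.sum_le_sum_of_subset_of_nonneg (Finset.filter_subset _ _)
      (fun f _ _ => Finset.prod_nonneg fun i _ => hπ0 _)
  -- dominance of the type k
  have hdom : ∀ c ∈ univ.image (fun f : Fin n → S => cnt f),
      ∑ f ∈ univ.filter (fun f : Fin n → S => cnt f = c), ∏ i, π (f i)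
        ≤ (B:ℝ) * ∏ x, π x ^ k x := by
    intro c hc
    obtain ⟨g, -, rfl⟩ := Finset.mem_image.mp hc
    have hfil2 : univ.filter (fun f : Fin n → S => cnt f = cnt g)
        = univ.filter (fun f : Fin n → S => ∀ x, cnt f x = cnt g x) :=
      Finset.filter_congr fun f _ => by simp [funext_iff]
    rw [hfil2, hsum_gen π (cnt g)]
    set A := (univ.filter (fun f : Fin n → S => ∀ x, cnt f x = cnt g x)).card with hAdef
    have hA : A * ∏ x, (cnt g x).factorial = n.factorial := card_typeclass g
    have hsc : ∑ x, cnt g x = n := sum_cnt g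
    have hnat : A * ∏ x, k x ^ cnt g x ≤ B * ∏ x, k x ^ k x := by
      have hkey : ∏ x, ((k x).factorial * k x ^ cnt g x)
          ≤ ∏ x, ((cnt g x).factorial * k x ^ k x) :=
        Finset.prod_le_prod' fun x _ => key_nat (k x) (cnt g x)
      have hposf : 0 < (∏ x, (cnt g x).factorial) * (∏ x, (k x).factorial) :=
        Nat.mul_pos (Finset.prod_pos fun x _ => Nat.factorial_pos _)
          (Finset.prod_pos fun x _ => Nat.factorial_pos _)
      refine Nat.le_of_mul_le_mul_right ?_ hposf
      calc (A * ∏ x, k x ^ cnt g x) * ((∏ x, (cnt g x).factorial) * (∏ x, (k x).factorial))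
          = (A * ∏ x, (cnt g x).factorial) * (∏ x, ((k x).factorial * k x ^ cnt g x)) := by
            rw [Finset.prod_mul_distrib]; ring
        _ = n.factorial * ∏ x, ((k x).factorial * k x ^ cnt g x) := by rw [hA]
        _ ≤ n.factorial * ∏ x, ((cnt g x).factorial * k x ^ k x) :=
            Nat.mul_le_mul_left _ hkey
        _ = (B * ∏ x, (k x).factorial) * ((∏ x, (cnt g x).factorial) * (∏ x, k x ^ k x)) := by
            rw [hB, Finset.prod_mul_distrib]
        _ = (B * ∏ x, k x ^ k x) * ((∏ x, (cnt g x).factorial) * (∏ x, (k x).factorial)) := by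
            ring
    have hπc : ∀ (c : S → ℕ), (∑ x, c x = n) →
        (∏ x, π x ^ c x) = (∏ x, (k x:ℝ) ^ c x) / (n:ℝ)^n := by
      intro c hcsum
      rw [Finset.prod_congr rfl (fun x _ => by rw [hkx x, div_pow]),
        Finset.prod_div_distrib]
      congr 1
      rw [Finset.prod_pow_eq_pow_sum, hcsum]
    rw [hπc (cnt g) hsc, hπc k hsumk, ← mul_div_assoc, ← mul_div_assoc]
    have hcast : ((A * ∏ x, k x ^ cnt g x : ℕ):ℝ) ≤ ((B * ∏ x, k x ^ k x : ℕ):ℝ) :=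
      Nat.cast_le.mpr hnat
    push_cast at hcast
    exact div_le_div_of_nonneg_right hcast (by positivity)
  -- number of types
  have himgN : (univ.image (fun f : Fin n → S => cnt f)).card ≤ (n+1)^(Fintype.card S) := by
    have hsub : univ.image (fun f : Fin n → S => cnt f)
        ⊆ Fintype.piFinset (fun _ : S => Finset.range (n+1)) := by
      intro c hc
      obtain ⟨f, -, rfl⟩ := Finset.mem_image.mp hc
      rw [Fintype.mem_piFinset]
      intro x
      rw [Finset.mem_range]
      have hle : cnt f x ≤ n := by
        have h := Finset.card_filter_le (univ : Finset (Fin n)) (fun i => f i = x)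
        simpa [cnt] using h
      omega
    calc (univ.image (fun f : Fin n → S => cnt f)).card
        ≤ (Fintype.piFinset (fun _ : S => Finset.range (n+1))).card :=
          Finset.card_le_card hsub
      _ = (n+1)^(Fintype.card S) := by simp [Fintype.card_piFinset]
  -- partition of total mass by type
  have hpart : ∑ c ∈ univ.image (fun f : Fin n → S => cnt f),
      ∑ f ∈ univ.filter (fun f : Fin n → S => cnt f = c), ∏ i, π (f i) = 1 := by
    rw [Finset.sum_fiberwise_of_maps_to
      (fun f _ => Finset.mem_image_of_mem _ (Finset.mem_univ f))]
    exact htot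
  have hBQnn : (0:ℝ) ≤ (B:ℝ) * ∏ x, π x ^ k x :=
    mul_nonneg (Nat.cast_nonneg _) (Finset.prod_nonneg fun x _ => pow_nonneg (hπ0 x) _)
  have hBQ : (1:ℝ) ≤ ((n:ℝ)+1)^(Fintype.card S) * ((B:ℝ) * ∏ x, π x ^ k x) := by
    calc (1:ℝ) = ∑ c ∈ univ.image (fun f : Fin n → S => cnt f),
          ∑ f ∈ univ.filter (fun f : Fin n → S => cnt f = c), ∏ i, π (f i) := hpart.symm
      _ ≤ ∑ _c ∈ univ.image (fun f : Fin n → S => cnt f),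
          ((B:ℝ) * ∏ x, π x ^ k x) := Finset.sum_le_sum hdom
      _ = ((univ.image (fun f : Fin n → S => cnt f)).card : ℝ)
            * ((B:ℝ) * ∏ x, π x ^ k x) := by rw [Finset.sum_const, nsmul_eq_mul]
      _ ≤ ((n:ℝ)+1)^(Fintype.card S) * ((B:ℝ) * ∏ x, π x ^ k x) := by
          refine mul_le_mul_of_nonneg_right ?_ hBQnn
          have h := Nat.cast_le (α := ℝ) |>.mpr himgN
          push_cast at h
          exact h
  -- rewrite the statement's sum
  have hsumF : ∑ xs ∈ univ.filter (fun xs : Fin n → S => emp xs = π), powDist p n xs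
      = (B:ℝ) * ∏ x, p x ^ k x := by
    rw [hTfil]
    simp only [powDist]
    exact hsum_gen p k
  have hexp : Real.exp ((Fintype.card S : ℝ) * Real.log ((n:ℝ)+1))
      = ((n:ℝ)+1)^(Fintype.card S) := by
    rw [Real.exp_nat_mul, Real.exp_log (by positivity)]
  constructor
  · rw [hsumF, hPQ, Real.exp_sub, hexp]
    rw [div_le_iff₀ (by positivity)]
    calc Real.exp (-(n:ℝ) * KL π p) = Real.exp (-(n:ℝ) * KL π p) * 1 := (mul_one _).symm
      _ ≤ Real.exp (-(n:ℝ) * KL π p)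
            * (((n:ℝ)+1)^(Fintype.card S) * ((B:ℝ) * ∏ x, π x ^ k x)) :=
          mul_le_mul_of_nonneg_left hBQ (Real.exp_pos _).le
      _ = (B:ℝ) * (Real.exp (-(n:ℝ) * KL π p) * ∏ x, π x ^ k x)
            * ((n:ℝ)+1)^(Fintype.card S) := by ring
  · rw [hsumF, hPQ]
    rw [show (B:ℝ) * (Real.exp (-(n:ℝ) * KL π p) * ∏ x, π x ^ k x)
        = Real.exp (-(n:ℝ) * KL π p) * ((B:ℝ) * ∏ x, π x ^ k x) from by ring]
    exact mul_le_of_le_one_right (Real.exp_pos _).le hBQ1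
end

section
/- Let X = (S,p) be a finite probability space and let τ_n be the push-forward of p^{⊗n} under the empirical distribution map q : S^n → Δ(S). Then for every r > 0, τ_n(Δ(S) \ B_r(p)) ≤ exp(−n·r + |S|·ln(n+1)), where B_r(p) = {π : D(π‖p) ≤ r}. -/
open scoped Classical BigOperators
open Finset

section Aux
set_option linter.unusedSectionVars false

variable {S : Type*} [Fintype S]

lemma count_le {n : ℕ} (f : Fin n → S) (a : S) :
    (univ.filter (fun i => f i = a)).card ≤ n := by
  simpa using Finset.card_filter_le univ (fun i => f i = a)

lemma emp_nonneg {n : ℕ} (f : Fin n → S) (a : S) : 0 ≤ emp f a := by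
  unfold emp; positivity

lemma emp_sum {n : ℕ} (hn : 0 < n) (f : Fin n → S) : ∑ a, emp f a = 1 := by
  unfold emp
  rw [← Finset.sum_div]
  rw [show ∑ a, ((univ.filter (fun i => f i = a)).card : ℝ) = (n : ℝ) by
    rw [← Nat.cast_sum]
    norm_cast
    exact (Finset.card_eq_sum_card_fiberwise (fun x _ => mem_univ (f x))).symm.trans
      (by simp)]
  field_simp

lemma powDist_eq_prod_pow (p : S → ℝ) {n : ℕ} (f : Fin n → S) :
    powDist p n f = ∏ a, p a ^ (univ.filter (fun i => f i = a)).card := by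
  rw [powDist, ← Finset.prod_fiberwise univ f (fun i => p (f i))]
  refine Finset.prod_congr rfl fun a _ => ?_
  have : ∏ i ∈ univ.filter (fun i => f i = a), p (f i)
      = ∏ _i ∈ univ.filter (fun i => f i = a), p a :=
    Finset.prod_congr rfl fun i hi => by rw [(Finset.mem_filter.mp hi).2]
  rw [this, Finset.prod_const]

lemma powDist_nonneg {p : S → ℝ} (hp : ∀ x, 0 ≤ p x) {n : ℕ} (f : Fin n → S) :
    0 ≤ powDist p n f :=
  Finset.prod_nonneg fun i _ => hp (f i)

lemma sum_powDist {p : S → ℝ} (hp : IsDist p) (n : ℕ) :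
    ∑ f : Fin n → S, powDist p n f = 1 := by
  classical
  have : ∑ f ∈ Fintype.piFinset (fun _ : Fin n => (univ : Finset S)), ∏ i, p (f i)
      = ∏ _i : Fin n, ∑ a, p a := (Finset.prod_univ_sum _ _).symm
  simpa [powDist, hp.2] using this

lemma key_bound {p : S → ℝ} (hp : IsDist p) {n : ℕ} (hn : 0 < n) (f : Fin n → S) :
    powDist p n f ≤ powDist (emp f) n f * Real.exp (-(n : ℝ) * KL (emp f) p) := by
  by_cases hz : ∃ i, p (f i) = 0
  · obtain ⟨i, hi⟩ := hz
    have h0 : powDist p n f = 0 :=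
      Finset.prod_eq_zero (mem_univ i) hi
    rw [h0]
    exact mul_nonneg (powDist_nonneg (emp_nonneg f) f) (Real.exp_pos _).le
  · push_neg at hz
    have hppos : ∀ i, 0 < p (f i) := fun i => lt_of_le_of_ne (hp.1 (f i)) (Ne.symm (hz i))
    -- rewrite with KL expansion
    have hKL : -(n : ℝ) * KL (emp f) p
        = ∑ a, ((univ.filter (fun i => f i = a)).card : ℝ)
            * (Real.log (p a) - Real.log (emp f a)) := by
      rw [KL, Finset.mul_sum]
      refine Finset.sum_congr rfl fun a _ => ?_
      by_cases hk : (univ.filter (fun i => f i = a)).card = 0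
      · simp [emp, hk]
      · have hk0 : 0 < ((univ.filter (fun i => f i = a)).card : ℝ) := by
          positivity
        have hq : emp f a = ((univ.filter (fun i => f i = a)).card : ℝ) / n := rfl
        have hqpos : 0 < emp f a := by
          rw [hq]; positivity
        have hpa : 0 < p a := by
          obtain ⟨i, hi⟩ := Finset.card_pos.mp (Nat.pos_of_ne_zero hk)
          have := (Finset.mem_filter.mp hi).2
          simpa [this] using hppos i
        rw [Real.log_div (ne_of_gt hqpos) (ne_of_gt hpa)]
        have hnq : (n : ℝ) * emp f a = ((univ.filter (fun i => f i = a)).card : ℝ) := by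
          rw [hq]; field_simp
        calc -(n : ℝ) * (emp f a * (Real.log (emp f a) - Real.log (p a)))
            = ((n : ℝ) * emp f a) * (Real.log (p a) - Real.log (emp f a)) := by ring
          _ = _ := by rw [hnq]
    rw [hKL, Real.exp_sum, powDist_eq_prod_pow, powDist_eq_prod_pow, ← Finset.prod_mul_distrib]
    refine le_of_eq (Finset.prod_congr rfl fun a _ => ?_)
    by_cases hk : (univ.filter (fun i => f i = a)).card = 0
    · simp [hk]
    · have hqpos : 0 < emp f a := by
        unfold emp
        have : 0 < ((univ.filter (fun i => f i = a)).card : ℝ) := by positivity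
        positivity
      have hpa : 0 < p a := by
        obtain ⟨i, hi⟩ := Finset.card_pos.mp (Nat.pos_of_ne_zero hk)
        have := (Finset.mem_filter.mp hi).2
        simpa [this] using hppos i
      set k := (univ.filter (fun i => f i = a)).card
      have : Real.exp ((k : ℝ) * (Real.log (p a) - Real.log (emp f a)))
          = p a ^ k / emp f a ^ k := by
        rw [Real.exp_nat_mul, Real.exp_sub, Real.exp_log hpa, Real.exp_log hqpos]
        rw [div_pow]
      rw [this]
      field_simp

end Aux

theorem stmt7 {S : Type*} [Fintype S] (p : S → ℝ) (hp : IsDist p)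
    (n : ℕ) (hn : 0 < n) (r : ℝ) (hr : 0 < r) :
    ∑ xs ∈ univ.filter (fun xs : Fin n → S => ¬ KL (emp xs) p ≤ r), powDist p n xs
      ≤ Real.exp (-(n : ℝ) * r + Fintype.card S * Real.log (n + 1)) := by
  classical
  set bad := univ.filter (fun xs : Fin n → S => ¬ KL (emp xs) p ≤ r) with hbad
  have step1 : ∑ xs ∈ bad, powDist p n xs
      ≤ Real.exp (-(n : ℝ) * r) * ∑ xs ∈ bad, powDist (emp xs) n xs := by
    rw [Finset.mul_sum]
    refine Finset.sum_le_sum fun xs hxs => ?_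
    have hKL : r < KL (emp xs) p := lt_of_not_ge (Finset.mem_filter.mp hxs).2
    calc powDist p n xs
        ≤ powDist (emp xs) n xs * Real.exp (-(n : ℝ) * KL (emp xs) p) :=
          key_bound hp hn xs
      _ ≤ powDist (emp xs) n xs * Real.exp (-(n : ℝ) * r) := by
          refine mul_le_mul_of_nonneg_left ?_ (powDist_nonneg (emp_nonneg xs) xs)
          refine Real.exp_le_exp.mpr ?_
          have hn' : (0 : ℝ) < n := by exact_mod_cast hn
          nlinarith
      _ = Real.exp (-(n : ℝ) * r) * powDist (emp xs) n xs := mul_comm _ _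
  have step2 : ∑ xs ∈ bad, powDist (emp xs) n xs ≤ ((n : ℝ) + 1) ^ Fintype.card S := by
    have h1 : ∑ xs ∈ bad, powDist (emp xs) n xs
        ≤ ∑ xs : Fin n → S, powDist (emp xs) n xs := by
      rw [hbad]
      exact Finset.sum_le_sum_of_subset_of_nonneg (Finset.filter_subset _ _)
        (fun xs _ _ => powDist_nonneg (emp_nonneg xs) xs)
    set T : (Fin n → S) → (S → Fin (n + 1)) :=
      fun f a => ⟨(univ.filter (fun i => f i = a)).card,
        Nat.lt_succ_of_le (count_le f a)⟩ with hT
    have h2 : ∑ xs : Fin n → S, powDist (emp xs) n xs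
        = ∑ c : S → Fin (n + 1),
            ∑ xs ∈ univ.filter (fun xs => T xs = c), powDist (emp xs) n xs :=
      (Finset.sum_fiberwise univ T _).symm
    have h3 : ∀ c : S → Fin (n + 1),
        ∑ xs ∈ univ.filter (fun xs => T xs = c), powDist (emp xs) n xs ≤ 1 := by
      intro c
      by_cases hne : (univ.filter (fun xs : Fin n → S => T xs = c)).Nonempty
      · obtain ⟨f0, hf0⟩ := hne
        have hemp : ∀ xs ∈ univ.filter (fun xs : Fin n → S => T xs = c),
            emp xs = emp f0 := by
          intro xs hxs
          funext a
          have e1 : T xs = c := (Finset.mem_filter.mp hxs).2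
          have e2 : T f0 = c := (Finset.mem_filter.mp hf0).2
          have e3 : T xs a = T f0 a := by rw [e1, e2]
          have e4 : (univ.filter (fun i => xs i = a)).card
              = (univ.filter (fun i => f0 i = a)).card := congrArg Fin.val e3
          show ((univ.filter (fun i => xs i = a)).card : ℝ) / n = _
          rw [e4]; rfl
        calc ∑ xs ∈ univ.filter (fun xs : Fin n → S => T xs = c), powDist (emp xs) n xs
            = ∑ xs ∈ univ.filter (fun xs : Fin n → S => T xs = c), powDist (emp f0) n xs :=
              Finset.sum_congr rfl fun xs hxs => by rw [hemp xs hxs]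
          _ ≤ ∑ xs : Fin n → S, powDist (emp f0) n xs :=
              Finset.sum_le_sum_of_subset_of_nonneg (Finset.filter_subset _ _)
                (fun xs _ _ => powDist_nonneg (emp_nonneg f0) xs)
          _ = 1 := sum_powDist ⟨emp_nonneg f0, emp_sum hn f0⟩ n
      · rw [Finset.not_nonempty_iff_eq_empty.mp hne]; simp
    calc ∑ xs ∈ bad, powDist (emp xs) n xs
        ≤ ∑ xs : Fin n → S, powDist (emp xs) n xs := h1
      _ = _ := h2
      _ ≤ ∑ _c : S → Fin (n + 1), (1 : ℝ) := Finset.sum_le_sum fun c _ => h3 c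
      _ = ((n : ℝ) + 1) ^ Fintype.card S := by
          rw [Finset.sum_const, Finset.card_univ, Fintype.card_fun]
          push_cast [Fintype.card_fin]
          ring
  have hfin : Real.exp (-(n : ℝ) * r) * ((n : ℝ) + 1) ^ Fintype.card S
      = Real.exp (-(n : ℝ) * r + Fintype.card S * Real.log (n + 1)) := by
    rw [Real.exp_add]
    congr 1
    rw [Real.exp_nat_mul, Real.exp_log (by positivity)]
  calc ∑ xs ∈ bad, powDist p n xs
      ≤ Real.exp (-(n : ℝ) * r) * ∑ xs ∈ bad, powDist (emp xs) n xs := step1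
    _ ≤ Real.exp (-(n : ℝ) * r) * ((n : ℝ) + 1) ^ Fintype.card S :=
        mul_le_mul_of_nonneg_left step2 (Real.exp_pos _).le
    _ = _ := hfin
end

section
/- For a finite set S, n ∈ ℕ, and π ∈ Δ^{(n)}(S), the entropy of the type class (with uniform measure) satisfies n·h(π) − |S|·ln(n+1) ≤ ln|T^{(n)}_π S| ≤ n·h(π). In particular, if X = (S,p) has a rational distribution with denominator n, then n·Ent(X) − |S|·ln(n+1) ≤ Ent(T^{(n)}X) ≤ n·Ent(X), where T^{(n)}X is the true type equipped with the uniform distribution. -/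
open scoped Classical BigOperators
open Finset

set_option linter.unusedSectionVars false

namespace Stmt8Aux

lemma factA (k c : ℕ) : k.factorial * k ^ c ≤ c.factorial * k ^ k := by
  rcases le_total c k with h | h
  · obtain ⟨d, rfl⟩ := Nat.exists_eq_add_of_le h
    have key : ∀ d : ℕ, (c + d).factorial ≤ c.factorial * (c + d) ^ d := by
      intro d
      induction d with
      | zero => simp
      | succ d ih =>
        have h1 : (c + (d+1)).factorial = (c + d + 1) * (c + d).factorial := by
          rw [← Nat.add_assoc, Nat.factorial_succ]
        rw [h1]
        calc (c + d + 1) * (c + d).factorial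
            ≤ (c + d + 1) * (c.factorial * (c + d) ^ d) := by
              exact Nat.mul_le_mul_left _ ih
          _ ≤ (c + d + 1) * (c.factorial * (c + d + 1) ^ d) := by
              refine Nat.mul_le_mul_left _ (Nat.mul_le_mul_left _ ?_)
              exact Nat.pow_le_pow_left (Nat.le_succ _) d
          _ = c.factorial * (c + (d+1)) ^ (d+1) := by ring
    calc (c + d).factorial * (c + d) ^ c
        ≤ (c.factorial * (c + d) ^ d) * (c + d) ^ c := Nat.mul_le_mul_right _ (key d)
      _ = c.factorial * (c + d) ^ (c + d) := by rw [mul_assoc, ← pow_add]; ring_nf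
  · obtain ⟨d, rfl⟩ := Nat.exists_eq_add_of_le h
    have key : ∀ d : ℕ, k.factorial * k ^ d ≤ (k + d).factorial := by
      intro d
      induction d with
      | zero => simp
      | succ d ih =>
        have : k.factorial * k ^ (d+1) = (k.factorial * k ^ d) * k := by ring
        rw [this]
        calc (k.factorial * k ^ d) * k ≤ (k + d).factorial * k := Nat.mul_le_mul_right _ ih
          _ ≤ (k + d).factorial * (k + d + 1) := by
              exact Nat.mul_le_mul_left _ (by omega)
          _ = (k + (d+1)).factorial := by rw [← Nat.add_assoc, Nat.factorial_succ, Nat.mul_comm]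
    calc k.factorial * k ^ (k + d) = (k.factorial * k ^ d) * k ^ k := by rw [mul_assoc, ← pow_add, Nat.add_comm d k]
      _ ≤ (k + d).factorial * k ^ k := Nat.mul_le_mul_right _ (key d)


variable {S : Type*} [Fintype S] {n : ℕ}

/-- fiber count -/
noncomputable def N (xs : Fin n → S) (a : S) : ℕ := (univ.filter (fun i => xs i = a)).card

lemma sum_N (xs : Fin n → S) : ∑ a, N xs a = n := by
  classical
  have := Finset.card_eq_sum_card_fiberwise (f := xs) (s := univ) (t := univ)
    (fun x _ => mem_univ _)
  simpa [N] using this.symm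

lemma card_fiber (xs : Fin n → S) (a : S) :
    Fintype.card {i // xs i = a} = N xs a := by
  classical
  simp [N, Fintype.card_subtype]

/-- glue a family of fiber bijections into a permutation -/
noncomputable def glue (xs ys : Fin n → S) (e : ∀ a, {i // xs i = a} ≃ {i // ys i = a}) :
    Equiv.Perm (Fin n) :=
  ((Equiv.sigmaFiberEquiv xs).symm.trans (Equiv.sigmaCongrRight e)).trans
    (Equiv.sigmaFiberEquiv ys)

lemma glue_apply (xs ys : Fin n → S) (e : ∀ a, {i // xs i = a} ≃ {i // ys i = a})
    (i : Fin n) : glue xs ys e i = (e (xs i) ⟨i, rfl⟩ : {j // ys j = xs i}).1 := rfl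

lemma ys_glue (xs ys : Fin n → S) (e : ∀ a, {i // xs i = a} ≃ {i // ys i = a})
    (i : Fin n) : ys (glue xs ys e i) = xs i := (e (xs i) ⟨i, rfl⟩).2

/-- the fiber of σ ↦ ys ∘ σ over xs -/
noncomputable def fiberEquiv (xs ys : Fin n → S) :
    {σ : Equiv.Perm (Fin n) // ys ∘ σ = xs} ≃
      ∀ a, ({i // xs i = a} ≃ {i // ys i = a}) where
  toFun σ a := Equiv.subtypeEquiv σ.1 (fun i => by
    have := congrFun σ.2 i
    simp only [Function.comp_apply] at this
    rw [← this])
  invFun e := ⟨glue xs ys e, funext fun i => ys_glue xs ys e i⟩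
  left_inv σ := by
    apply Subtype.ext
    ext i
    simp [glue_apply]
  right_inv e := by
    funext a
    ext ⟨i, h⟩
    subst h
    simp [glue_apply]

lemma exists_seq (c : S → ℕ) (hc : ∑ a, c a = n) :
    ∃ xs : Fin n → S, ∀ a, N xs a = c a := by
  classical
  have hcard : Fintype.card (Σ a : S, Fin (c a)) = Fintype.card (Fin n) := by
    simp [Fintype.card_sigma, hc]
  let e : Fin n ≃ Σ a : S, Fin (c a) := (Fintype.equivOfCardEq hcard).symm
  refine ⟨fun i => (e i).1, fun a => ?_⟩
  rw [← card_fiber]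
  have e1 : {i : Fin n // (e i).1 = a} ≃ {s : Σ a : S, Fin (c a) // s.1 = a} :=
    Equiv.subtypeEquiv e (fun i => Iff.rfl)
  have e2 : {s : Σ a : S, Fin (c a) // s.1 = a} ≃ Fin (c a) :=
    { toFun := fun s => s.2 ▸ s.1.2
      invFun := fun x => ⟨⟨a, x⟩, rfl⟩
      left_inv := by rintro ⟨⟨a', x⟩, rfl⟩; rfl
      right_inv := fun x => rfl }
  rw [Fintype.card_congr (e1.trans e2), Fintype.card_fin]

lemma N_comp_perm (xs : Fin n → S) (σ : Equiv.Perm (Fin n)) (a : S) :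
    N (xs ∘ σ) a = N xs a := by
  classical
  rw [← card_fiber, ← card_fiber]
  exact Fintype.card_congr (Equiv.subtypeEquiv σ (fun i => Iff.rfl))

lemma card_type_mul (c : S → ℕ) (hc : ∑ a, c a = n) :
    ((univ : Finset (Fin n → S)).filter (fun xs => ∀ a, N xs a = c a)).card
      * ∏ a, (c a).factorial = n.factorial := by
  classical
  obtain ⟨ys, hys⟩ := exists_seq c hc
  have hmaps : ∀ σ : Equiv.Perm (Fin n), σ ∈ (univ : Finset (Equiv.Perm (Fin n))) →
      (ys ∘ σ) ∈ (univ : Finset (Fin n → S)).filter (fun xs => ∀ a, N xs a = c a) := by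
    intro σ _
    simp only [mem_filter, mem_univ, true_and]
    intro a; rw [N_comp_perm]; exact hys a
  have hsum := Finset.card_eq_sum_card_fiberwise hmaps
  rw [Finset.card_univ, Fintype.card_perm, Fintype.card_fin] at hsum
  have hfib : ∀ xs ∈ (univ : Finset (Fin n → S)).filter (fun xs => ∀ a, N xs a = c a),
      ((univ : Finset (Equiv.Perm (Fin n))).filter (fun σ : Equiv.Perm (Fin n) => ys ∘ ⇑σ = xs)).card
        = ∏ a, (c a).factorial := by
    intro xs hxs
    simp only [mem_filter, mem_univ, true_and] at hxs
    rw [← Fintype.card_subtype (p := fun σ : Equiv.Perm (Fin n) => ys ∘ ⇑σ = xs)]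
    rw [Fintype.card_congr (fiberEquiv xs ys), Fintype.card_pi]
    refine Finset.prod_congr rfl (fun a _ => ?_)
    have h1 : Fintype.card {i // xs i = a} = c a := by rw [card_fiber]; exact hxs a
    have h2 : Fintype.card {i // ys i = a} = c a := by rw [card_fiber]; exact hys a
    have e : {i // xs i = a} ≃ {i // ys i = a} :=
      Fintype.equivOfCardEq (h1.trans h2.symm)
    rw [Fintype.card_equiv e, h1]
  rw [Finset.sum_congr rfl hfib, Finset.sum_const, smul_eq_mul] at hsum
  exact hsum.symm


lemma main {S : Type*} [Fintype S] (n : ℕ) (hn : 0 < n) (p : S → ℝ)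
    (hp : IsDist p) (hden : ∀ x, ∃ k : ℕ, p x = (k : ℝ) / n) :
    (n : ℝ) * ent p - Fintype.card S * Real.log (n + 1)
      ≤ Real.log (Nat.card {xs : Fin n → S // emp xs = p}) ∧
    Real.log (Nat.card {xs : Fin n → S // emp xs = p}) ≤ (n : ℝ) * ent p := by
  classical
  have hn' : (0:ℝ) < n := by exact_mod_cast hn
  set k : S → ℕ := fun a => (hden a).choose with hkdef
  have hk : ∀ a, p a = (k a : ℝ) / n := fun a => (hden a).choose_spec
  have hk' : ∀ a, (k a : ℝ) = n * p a := by
    intro a; rw [hk a]; field_simp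
  have hsumk : ∑ a, k a = n := by
    have h1 : ((∑ a, k a : ℕ) : ℝ) = n := by
      push_cast
      rw [Finset.sum_congr rfl fun a _ => hk' a, ← Finset.mul_sum, hp.2, mul_one]
    exact_mod_cast h1
  set T : Finset (Fin n → S) :=
    (univ : Finset (Fin n → S)).filter (fun xs => ∀ a, N xs a = k a) with hTdef
  have hTiff : ∀ xs : Fin n → S, emp xs = p ↔ ∀ a, N xs a = k a := by
    intro xs
    constructor
    · intro h a
      have h1 : emp xs a = p a := congrFun h a
      rw [hk a, emp] at h1
      have h3 : (univ.filter (fun i => xs i = a)).card = k a := by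
        field_simp at h1; exact_mod_cast h1
      simpa [N] using h3
    · intro h
      funext a
      rw [hk a, emp]
      have h3 : (univ.filter (fun i => xs i = a)).card = k a := by
        have := h a; simpa [N] using this
      rw [h3]
  have hNatcard : Nat.card {xs : Fin n → S // emp xs = p} = T.card := by
    rw [Nat.card_eq_fintype_card, Fintype.card_subtype, hTdef]
    congr 1
    apply Finset.filter_congr
    intro xs _
    simpa using hTiff xs
  have hNxs : ∀ xs : Fin n → S, powDist p n xs = ∏ a, p a ^ N xs a := by
    intro xs
    rw [powDist, ← Finset.prod_fiberwise univ xs (fun i => p (xs i))]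
    refine Finset.prod_congr rfl fun a _ => ?_
    rw [N, ← Finset.prod_const]
    refine Finset.prod_congr rfl fun i hi => ?_
    rw [(Finset.mem_filter.mp hi).2]
  have hpownn : ∀ (c : S → ℕ), ∑ a, c a = n →
      ∏ a, p a ^ c a = (∏ a, ((k a : ℝ)) ^ c a) / (n : ℝ) ^ n := by
    intro c hc
    rw [Finset.prod_congr rfl fun a _ => by rw [hk a, div_pow], Finset.prod_div_distrib]
    congr 1
    rw [Finset.prod_pow_eq_pow_sum, hc]
  have hE : ∏ a, p a ^ k a = Real.exp (-((n : ℝ) * ent p)) := by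
    have hterm : ∀ a, p a ^ k a = Real.exp ((k a : ℝ) * Real.log (p a)) := by
      intro a
      by_cases hpa : p a = 0
      · have hka : k a = 0 := by
          have := hk' a
          rw [hpa, mul_zero] at this
          exact_mod_cast this
        simp [hpa, hka]
      · have hpos : 0 < p a := lt_of_le_of_ne (hp.1 a) (Ne.symm hpa)
        rw [← Real.log_pow, Real.exp_log (pow_pos hpos _)]
    rw [Finset.prod_congr rfl fun a _ => hterm a, ← Real.exp_sum]
    congr 1
    rw [ent, Finset.sum_congr rfl fun a _ => (by rw [hk' a]; ring :
      (k a : ℝ) * Real.log (p a) = (n : ℝ) * (p a * Real.log (p a))), ← Finset.mul_sum]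
    ring
  have hpownonneg : ∀ xs : Fin n → S, 0 ≤ powDist p n xs := by
    intro xs
    exact Finset.prod_nonneg fun i _ => hp.1 (xs i)
  have htotal : ∑ xs : Fin n → S, powDist p n xs = 1 := by
    have h1 : (∏ _i : Fin n, ∑ x, p x)
        = ∑ xs ∈ Fintype.piFinset (fun _ : Fin n => (univ : Finset S)), ∏ i, p (xs i) :=
      Finset.prod_univ_sum _ _
    rw [Fintype.piFinset_univ] at h1
    have h2 : (∏ _i : Fin n, ∑ x, p x) = 1 := by rw [hp.2]; simp
    rw [← h2, h1]
    rfl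
  have hkey : ∀ (c : S → ℕ), ∑ a, c a = n →
      ((univ : Finset (Fin n → S)).filter (fun xs => ∀ a, N xs a = c a)).card
          * ∏ a, k a ^ c a
        ≤ T.card * ∏ a, k a ^ k a := by
    intro c hc
    have h1 := card_type_mul (n := n) c hc
    have h2 := card_type_mul (n := n) k hsumk
    set A := ((univ : Finset (Fin n → S)).filter (fun xs => ∀ a, N xs a = c a)).card with hA
    have hpos : 0 < (∏ a, (c a).factorial) * ∏ a, (k a).factorial := by
      have : ∀ m : ℕ, 0 < m.factorial := Nat.factorial_pos
      positivity
    refine Nat.le_of_mul_le_mul_right ?_ hpos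
    calc A * (∏ a, k a ^ c a) * ((∏ a, (c a).factorial) * ∏ a, (k a).factorial)
        = (A * ∏ a, (c a).factorial) * (∏ a, ((k a).factorial * k a ^ c a)) := by
          rw [Finset.prod_mul_distrib]; ring
      _ = n.factorial * (∏ a, ((k a).factorial * k a ^ c a)) := by rw [h1]
      _ ≤ n.factorial * (∏ a, ((c a).factorial * k a ^ k a)) :=
          Nat.mul_le_mul_left _ (Finset.prod_le_prod' fun a _ => factA (k a) (c a))
      _ = (T.card * ∏ a, (k a).factorial) * (∏ a, ((c a).factorial * k a ^ k a)) := by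
          rw [h2]
      _ = T.card * (∏ a, k a ^ k a) * ((∏ a, (c a).factorial) * ∏ a, (k a).factorial) := by
          rw [Finset.prod_mul_distrib]; ring
  have hNle : ∀ (xs : Fin n → S) (a : S), N xs a < n + 1 := by
    intro xs a
    have h : N xs a ≤ ∑ b, N xs b :=
      Finset.single_le_sum (fun b _ => Nat.zero_le _) (mem_univ a)
    rw [sum_N] at h
    omega
  set ct : (Fin n → S) → (S → Fin (n + 1)) := fun xs a => ⟨N xs a, hNle xs a⟩ with hctdef
  have hperc : ∀ c : S → Fin (n + 1),
      ∑ xs ∈ (univ : Finset (Fin n → S)).filter (fun xs => ct xs = c), powDist p n xs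
        ≤ T.card * Real.exp (-((n : ℝ) * ent p)) := by
    intro c
    rcases Finset.eq_empty_or_nonempty
        ((univ : Finset (Fin n → S)).filter (fun xs => ct xs = c)) with he | ⟨xs0, hxs0⟩
    · rw [he, Finset.sum_empty]
      have h0 : (0:ℝ) < Real.exp (-((n : ℝ) * ent p)) := Real.exp_pos _
      exact mul_nonneg (Nat.cast_nonneg _) h0.le
    · have hxs0' : ∀ a, N xs0 a = (c a : ℕ) := fun a =>
        congrArg Fin.val (congrFun (Finset.mem_filter.mp hxs0).2 a)
      have hc0 : ∑ a, ((c a : ℕ)) = n := by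
        rw [← Finset.sum_congr rfl fun a _ => hxs0' a, sum_N]
      have hfe : (univ : Finset (Fin n → S)).filter (fun xs => ct xs = c)
          = (univ : Finset (Fin n → S)).filter (fun xs => ∀ a, N xs a = (c a : ℕ)) :=
        Finset.filter_congr fun xs _ =>
          ⟨fun h a => congrArg Fin.val (congrFun h a), fun h => funext fun a => Fin.ext (h a)⟩
      rw [hfe]
      have hsum_eq : ∑ xs ∈ (univ : Finset (Fin n → S)).filter
            (fun xs => ∀ a, N xs a = (c a : ℕ)), powDist p n xs
          = (((univ : Finset (Fin n → S)).filter
            (fun xs => ∀ a, N xs a = (c a : ℕ))).card : ℝ) * ∏ a, p a ^ (c a : ℕ) := by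
        have hx : ∀ xs ∈ (univ : Finset (Fin n → S)).filter
            (fun xs => ∀ a, N xs a = (c a : ℕ)),
            powDist p n xs = ∏ a, p a ^ (c a : ℕ) := by
          intro xs hxs
          rw [hNxs xs]
          exact Finset.prod_congr rfl fun a _ => by rw [(Finset.mem_filter.mp hxs).2 a]
        rw [Finset.sum_congr rfl hx, Finset.sum_const, nsmul_eq_mul]
      rw [hsum_eq, ← hE, hpownn _ hc0, hpownn k hsumk, mul_div_assoc', mul_div_assoc']
      rw [div_le_div_iff_of_pos_right (by positivity : (0:ℝ) < (n:ℝ)^n)]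
      exact_mod_cast hkey (fun a => (c a : ℕ)) hc0
  have hTpos : 0 < T.card := by
    obtain ⟨xs0, hxs0⟩ := exists_seq k hsumk
    exact Finset.card_pos.mpr ⟨xs0, Finset.mem_filter.mpr ⟨mem_univ _, hxs0⟩⟩
  have hL1 : (1:ℝ) ≤ (T.card : ℝ) := by exact_mod_cast hTpos
  have hLpos : (0:ℝ) < (T.card : ℝ) := lt_of_lt_of_le one_pos hL1
  -- upper bound
  have hTsum : (T.card : ℝ) * Real.exp (-((n : ℝ) * ent p)) ≤ 1 := by
    have h1 : ∑ xs ∈ T, powDist p n xs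
        = (T.card : ℝ) * Real.exp (-((n : ℝ) * ent p)) := by
      have hx : ∀ xs ∈ T, powDist p n xs = Real.exp (-((n : ℝ) * ent p)) := by
        intro xs hxs
        rw [hNxs xs,
          Finset.prod_congr rfl fun a _ => by rw [(Finset.mem_filter.mp hxs).2 a]]
        exact hE
      rw [Finset.sum_congr rfl hx, Finset.sum_const, nsmul_eq_mul]
    rw [← h1, ← htotal]
    exact Finset.sum_le_sum_of_subset_of_nonneg (Finset.subset_univ T)
      (fun xs _ _ => hpownonneg xs)
  have hupper : (T.card : ℝ) ≤ Real.exp ((n : ℝ) * ent p) := by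
    have := mul_le_mul_of_nonneg_right hTsum (le_of_lt (Real.exp_pos ((n : ℝ) * ent p)))
    rwa [mul_assoc, ← Real.exp_add, neg_add_cancel, Real.exp_zero, mul_one, one_mul] at this
  -- lower bound
  have hlow : Real.exp ((n : ℝ) * ent p)
      ≤ ((n : ℝ) + 1) ^ (Fintype.card S) * (T.card : ℝ) := by
    have h1 : (1:ℝ) ≤ ((n+1 : ℕ) ^ (Fintype.card S) : ℕ)
        * ((T.card : ℝ) * Real.exp (-((n : ℝ) * ent p))) := by
      rw [← htotal, ← Finset.sum_fiberwise univ ct (powDist p n)]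
      calc ∑ c : S → Fin (n+1), ∑ xs ∈ (univ : Finset (Fin n → S)).filter
            (fun xs => ct xs = c), powDist p n xs
          ≤ ∑ _c : S → Fin (n+1), (T.card : ℝ) * Real.exp (-((n : ℝ) * ent p)) :=
            Finset.sum_le_sum fun c _ => hperc c
        _ = ((n+1 : ℕ) ^ (Fintype.card S) : ℕ)
            * ((T.card : ℝ) * Real.exp (-((n : ℝ) * ent p))) := by
            rw [Finset.sum_const, nsmul_eq_mul, Finset.card_univ, Fintype.card_fun]
            simp
    have h2 := mul_le_mul_of_nonneg_right h1 (le_of_lt (Real.exp_pos ((n : ℝ) * ent p)))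
    rw [one_mul, mul_assoc, mul_assoc, ← Real.exp_add, neg_add_cancel, Real.exp_zero,
      mul_one] at h2
    calc Real.exp ((n : ℝ) * ent p)
        ≤ ((n+1 : ℕ) ^ (Fintype.card S) : ℕ) * (T.card : ℝ) := h2
      _ = ((n : ℝ) + 1) ^ (Fintype.card S) * (T.card : ℝ) := by push_cast; ring
  rw [hNatcard]
  constructor
  · have hlog := Real.log_le_log (Real.exp_pos _) hlow
    rw [Real.log_exp, Real.log_mul (by positivity) (ne_of_gt hLpos), Real.log_pow] at hlog
    linarith
  · rw [Real.log_le_iff_le_exp hLpos]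
    exact hupper

end Stmt8Aux

theorem stmt8 {S : Type*} [Fintype S] (n : ℕ) (hn : 0 < n)
    (π : S → ℝ) (hπ : IsDist π) (hden : ∀ x, ∃ k : ℕ, π x = (k : ℝ) / n) :
    ((n : ℝ) * ent π - Fintype.card S * Real.log (n + 1)
        ≤ Real.log (Nat.card {xs : Fin n → S // emp xs = π}) ∧
      Real.log (Nat.card {xs : Fin n → S // emp xs = π}) ≤ (n : ℝ) * ent π) ∧
    ∀ p : S → ℝ, IsDist p → (∀ x, ∃ k : ℕ, p x = (k : ℝ) / n) →
      ((n : ℝ) * ent p - Fintype.card S * Real.log (n + 1)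
          ≤ Real.log (Nat.card {xs : Fin n → S // emp xs = p}) ∧
        Real.log (Nat.card {xs : Fin n → S // emp xs = p}) ≤ (n : ℝ) * ent p) := by
  exact ⟨Stmt8Aux.main n hn π hπ hden, fun p hp hd => Stmt8Aux.main n hn p hp hd⟩
end

section
/- For finite probability spaces, the intrinsic Kolmogorov–Sinai distance k(X,Y) := inf over all couplings Z of X and Y of [2·Ent(Z) − Ent(X) − Ent(Y)] is a pseudo-metric on the class of finite probability spaces, and k(X,Y) = 0 if and only if X and Y are isomorphic (there is a measure-preserving bijection between the supports of their measures). -/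
open scoped Classical BigOperators
open Finset

/-- Isomorphism of finite probability spaces: a measure-preserving bijection
between the supports of the measures. -/
def ProbIso {S T : Type*} [Fintype S] [Fintype T] (p : S → ℝ) (q : T → ℝ) : Prop :=
  ∃ e : {x : S // p x ≠ 0} ≃ {y : T // q y ≠ 0}, ∀ x, q (e x).val = p x.val

noncomputable section KDAux

/-- Pushforward of a distribution along a map. -/
noncomputable def push {A B : Type*} [Fintype A] [Fintype B] (g : A → B) (w : A → ℝ) :
    B → ℝ := fun b => ∑ a, if g a = b then w a else 0

namespace KD

variable {A B : Type*} [Fintype A] [Fintype B]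

lemma push_nonneg (g : A → B) {w : A → ℝ} (hw : ∀ a, 0 ≤ w a) (b : B) :
    0 ≤ push g w b :=
  Finset.sum_nonneg fun a _ => by split <;> simp [hw a]

lemma le_push (g : A → B) {w : A → ℝ} (hw : ∀ a, 0 ≤ w a) (a : A) :
    w a ≤ push g w (g a) := by
  have := Finset.single_le_sum (f := fun a' => if g a' = g a then w a' else 0)
    (fun a' _ => by split <;> simp [hw a']) (Finset.mem_univ a)
  simpa [push] using this

lemma sum_push (g : A → B) (w : A → ℝ) : ∑ b, push g w b = ∑ a, w a := by
  unfold push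
  rw [Finset.sum_comm]
  simp [Finset.sum_ite_eq]

lemma push_isDist (g : A → B) {w : A → ℝ} (hw : IsDist w) : IsDist (push g w) :=
  ⟨push_nonneg g hw.1, by rw [sum_push, hw.2]⟩

lemma sum_push_mul (g : A → B) (w : A → ℝ) (f : B → ℝ) :
    ∑ b, push g w b * f b = ∑ a, w a * f (g a) := by
  unfold push
  simp_rw [Finset.sum_mul, ite_mul, zero_mul]
  rw [Finset.sum_comm]
  simp [Finset.sum_ite_eq]

lemma ent_sub_ent_push (g : A → B) (w : A → ℝ) :
    ent w - ent (push g w) =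
      ∑ a, w a * (Real.log (push g w (g a)) - Real.log (w a)) := by
  unfold ent
  rw [sum_push_mul g w (fun b => Real.log (push g w b))]
  simp [mul_sub, Finset.sum_sub_distrib]
  ring

lemma ent_push_term_nonneg (g : A → B) {w : A → ℝ} (hw : ∀ a, 0 ≤ w a) (a : A) :
    0 ≤ w a * (Real.log (push g w (g a)) - Real.log (w a)) := by
  rcases eq_or_lt_of_le (hw a) with h | h
  · simp [← h]
  · have hle := le_push g hw a
    have : Real.log (w a) ≤ Real.log (push g w (g a)) :=
      Real.log_le_log h hle
    nlinarith

lemma ent_push_le (g : A → B) {w : A → ℝ} (hw : ∀ a, 0 ≤ w a) :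
    ent (push g w) ≤ ent w := by
  have h := ent_sub_ent_push g w
  have h2 : 0 ≤ ∑ a, w a * (Real.log (push g w (g a)) - Real.log (w a)) :=
    Finset.sum_nonneg fun a _ => ent_push_term_nonneg g hw a
  linarith

lemma ent_push_eq (g : A → B) {w : A → ℝ} (hw : ∀ a, 0 ≤ w a)
    (h : ent (push g w) = ent w) (a : A) : w a = 0 ∨ w a = push g w (g a) := by
  have h0 : ∑ a, w a * (Real.log (push g w (g a)) - Real.log (w a)) = 0 := by
    have := ent_sub_ent_push g w; rw [h] at this; linarith
  have hterm := (Finset.sum_eq_zero_iff_of_nonneg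
    (fun a _ => ent_push_term_nonneg g hw a)).mp h0 a (Finset.mem_univ a)
  rcases eq_or_lt_of_le (hw a) with hwa | hwa
  · exact Or.inl hwa.symm
  · right
    have hlog : Real.log (push g w (g a)) = Real.log (w a) := by
      rcases mul_eq_zero.mp hterm with h' | h'
      · exact absurd h'.symm (ne_of_lt hwa)
      · linarith
    have hple : w a ≤ push g w (g a) := le_push g hw a
    have := Real.log_injOn_pos (Set.mem_Ioi.mpr (lt_of_lt_of_le hwa hple))
      (Set.mem_Ioi.mpr hwa) hlog
    exact this.symm

variable {S T U : Type*} [Fintype S] [Fintype T] [Fintype U]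

lemma push_fst (w : S × T → ℝ) (x : S) : push Prod.fst w x = ∑ y, w (x, y) := by
  unfold push
  rw [Fintype.sum_prod_type, Finset.sum_comm]
  simp [Finset.sum_ite_eq']

lemma push_snd (w : S × T → ℝ) (y : T) : push Prod.snd w y = ∑ x, w (x, y) := by
  unfold push
  rw [Fintype.sum_prod_type_right, Finset.sum_comm]
  simp [Finset.sum_ite_eq']

lemma ent_equiv (e : S ≃ T) (w : T → ℝ) : ent (w ∘ e) = ent w := by
  unfold ent
  rw [← Equiv.sum_comp e (fun b => w b * Real.log (w b))]
  rfl

lemma prod_coupling {p : S → ℝ} {q : T → ℝ} (hp : IsDist p) (hq : IsDist q) :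
    IsCoupling (prodDist p q) p q := by
  refine ⟨⟨fun z => mul_nonneg (hp.1 _) (hq.1 _), ?_⟩, fun x => ?_, fun y => ?_⟩
  · rw [Fintype.sum_prod_type]
    simp only [prodDist]
    rw [← Finset.sum_mul_sum]
    rw [hp.2, hq.2]; norm_num
  · simp only [prodDist, ← Finset.mul_sum, hq.2, mul_one]
  · simp only [prodDist, ← Finset.sum_mul, hp.2, one_mul]

lemma push_fst_eq {w : S × T → ℝ} {p : S → ℝ} {q : T → ℝ}
    (h : IsCoupling w p q) : push Prod.fst w = p :=
  funext fun x => by rw [push_fst, h.2.1]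

lemma push_snd_eq {w : S × T → ℝ} {p : S → ℝ} {q : T → ℝ}
    (h : IsCoupling w p q) : push Prod.snd w = q :=
  funext fun y => by rw [push_snd, h.2.2]

lemma ent_left_le {w : S × T → ℝ} {p : S → ℝ} {q : T → ℝ}
    (h : IsCoupling w p q) : ent p ≤ ent w := by
  rw [← push_fst_eq h]; exact ent_push_le _ h.1.1

lemma ent_right_le {w : S × T → ℝ} {p : S → ℝ} {q : T → ℝ}
    (h : IsCoupling w p q) : ent q ≤ ent w := by
  rw [← push_snd_eq h]; exact ent_push_le _ h.1.1

/-- The defining set of `kdist`. -/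
def kset (p : S → ℝ) (q : T → ℝ) : Set ℝ :=
  {d : ℝ | ∃ w : S × T → ℝ, IsCoupling w p q ∧ d = 2 * ent w - ent p - ent q}

lemma kdist_eq (p : S → ℝ) (q : T → ℝ) : kdist p q = sInf (kset p q) := rfl

lemma kset_nonneg {p : S → ℝ} {q : T → ℝ} {d : ℝ} (hd : d ∈ kset p q) : 0 ≤ d := by
  obtain ⟨w, hw, rfl⟩ := hd
  have h1 := ent_left_le hw
  have h2 := ent_right_le hw
  linarith

lemma kset_nonempty {p : S → ℝ} {q : T → ℝ} (hp : IsDist p) (hq : IsDist q) :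
    (kset p q).Nonempty :=
  ⟨_, prodDist p q, prod_coupling hp hq, rfl⟩

lemma kset_bddBelow (p : S → ℝ) (q : T → ℝ) : BddBelow (kset p q) :=
  ⟨0, fun _ hd => kset_nonneg hd⟩

lemma kdist_nonneg' (p : S → ℝ) (q : T → ℝ) : 0 ≤ kdist p q :=
  Real.sInf_nonneg (fun _ hd => kset_nonneg hd)

lemma coupling_swap {w : S × T → ℝ} {p : S → ℝ} {q : T → ℝ}
    (h : IsCoupling w p q) : IsCoupling (w ∘ Prod.swap) q p := by
  refine ⟨⟨fun z => h.1.1 _, ?_⟩, fun y => by simpa using h.2.2 y,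
    fun x => by simpa using h.2.1 x⟩
  have : (w ∘ Prod.swap : T × S → ℝ) = w ∘ (Equiv.prodComm T S) := rfl
  rw [this]
  simp only [Function.comp]
  rw [Equiv.sum_comp (Equiv.prodComm T S) w]
  exact h.1.2

lemma ent_swap (w : S × T → ℝ) : ent (w ∘ Prod.swap) = ent w :=
  ent_equiv (Equiv.prodComm T S) w

lemma kset_symm (p : S → ℝ) (q : T → ℝ) : kset q p = kset p q := by
  ext d
  constructor
  · rintro ⟨w, hw, rfl⟩
    exact ⟨w ∘ Prod.swap, coupling_swap hw, by rw [ent_swap]; ring⟩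
  · rintro ⟨w, hw, rfl⟩
    exact ⟨w ∘ Prod.swap, coupling_swap hw, by rw [ent_swap]; ring⟩

lemma kdist_symm (p : S → ℝ) (q : T → ℝ) : kdist p q = kdist q p := by
  rw [kdist_eq, kdist_eq, kset_symm]

/-- The diagonal coupling. -/
def diag (p : S → ℝ) : S × S → ℝ := fun z => if z.1 = z.2 then p z.1 else 0

lemma diag_coupling {p : S → ℝ} (hp : IsDist p) : IsCoupling (diag p) p p := by
  have hm1 : ∀ x, ∑ y, diag p (x, y) = p x := by
    intro x; unfold diag; simp [Finset.sum_ite_eq]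
  have hm2 : ∀ y, ∑ x, diag p (x, y) = p y := by
    intro y; unfold diag
    simp only []
    rw [Finset.sum_congr rfl (fun x _ => by
      show (if x = y then p x else 0) = (if x = y then p y else 0)
      split <;> simp_all)]
    simp [Finset.sum_ite_eq']
  refine ⟨⟨fun z => by unfold diag; split <;> simp [hp.1], ?_⟩, hm1, hm2⟩
  rw [Fintype.sum_prod_type]
  simp_rw [hm1]
  exact hp.2

lemma ent_diag (p : S → ℝ) : ent (diag p) = ent p := by
  unfold ent diag
  congr 1
  rw [Fintype.sum_prod_type]
  refine Finset.sum_congr rfl fun x _ => ?_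
  rw [Finset.sum_congr rfl (fun y _ => by
    show (if x = y then p x else 0) * Real.log (if x = y then p x else 0)
      = (if x = y then p x * Real.log (p x) else 0)
    split <;> simp)]
  simp [Finset.sum_ite_eq]

lemma kdist_self {p : S → ℝ} (hp : IsDist p) : kdist p p = 0 := by
  have h0 : (0 : ℝ) ∈ kset p p :=
    ⟨diag p, diag_coupling hp, by rw [ent_diag]; ring⟩
  have := csInf_le (kset_bddBelow p p) h0
  have h2 := kdist_nonneg' p p
  rw [kdist_eq] at h2 ⊢
  linarith


section Glue

variable {p : S → ℝ} {q : T → ℝ} {u : U → ℝ}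
variable {w12 : S × T → ℝ} {w23 : T × U → ℝ}

/-- Gluing of two couplings along the common marginal. -/
def glue (w12 : S × T → ℝ) (w23 : T × U → ℝ) (q : T → ℝ) : S × T × U → ℝ :=
  fun t => if q t.2.1 = 0 then 0 else w12 (t.1, t.2.1) * w23 (t.2.1, t.2.2) / q t.2.1

lemma sum_zero_term {f : S → ℝ} (hf : ∀ x, 0 ≤ f x) (h : ∑ x, f x = 0) (x : S) :
    f x = 0 :=
  (Finset.sum_eq_zero_iff_of_nonneg (fun x _ => hf x)).mp h x (Finset.mem_univ x)

lemma glue_nonneg (h12 : IsCoupling w12 p q) (h23 : IsCoupling w23 q u)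
    (hq : IsDist q) (t : S × T × U) : 0 ≤ glue w12 w23 q t := by
  unfold glue
  split
  · exact le_refl 0
  · next h =>
    have hq' : 0 < q t.2.1 := lt_of_le_of_ne (hq.1 _) (Ne.symm h)
    exact div_nonneg (mul_nonneg (h12.1.1 _) (h23.1.1 _)) hq'.le

lemma glue_sum_z (h12 : IsCoupling w12 p q) (h23 : IsCoupling w23 q u)
    (hq : IsDist q) (x : S) (y : T) :
    ∑ z, glue w12 w23 q (x, y, z) = w12 (x, y) := by
  unfold glue
  by_cases h : q y = 0
  · simp only [h, if_pos rfl]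
    have hw : w12 (x, y) = 0 := by
      have := sum_zero_term (f := fun x' => w12 (x', y))
        (fun x' => h12.1.1 _) (by rw [h12.2.2 y, h]) x
      simpa using this
    simp [hw]
  · simp only [if_neg h]
    rw [← Finset.sum_div, ← Finset.mul_sum, h23.2.1 y, mul_div_assoc,
      div_self h, mul_one]

lemma glue_sum_x (h12 : IsCoupling w12 p q) (h23 : IsCoupling w23 q u)
    (hq : IsDist q) (y : T) (z : U) :
    ∑ x, glue w12 w23 q (x, y, z) = w23 (y, z) := by
  unfold glue
  by_cases h : q y = 0
  · simp only [h, if_pos rfl]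
    have hw : w23 (y, z) = 0 := by
      have := sum_zero_term (f := fun z' => w23 (y, z'))
        (fun z' => h23.1.1 _) (by rw [h23.2.1 y, h]) z
      simpa using this
    simp [hw]
  · simp only [if_neg h]
    rw [← Finset.sum_div, ← Finset.sum_mul, h12.2.2 y, mul_comm,
      mul_div_assoc, div_self h, mul_one]

lemma glue_isDist (h12 : IsCoupling w12 p q) (h23 : IsCoupling w23 q u)
    (hq : IsDist q) (hp : IsDist p) : IsDist (glue w12 w23 q) := by
  refine ⟨glue_nonneg h12 h23 hq, ?_⟩
  rw [Fintype.sum_prod_type]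
  have : ∀ x : S, ∑ yz : T × U, glue w12 w23 q (x, yz) = p x := by
    intro x
    rw [Fintype.sum_prod_type]
    simp_rw [glue_sum_z h12 h23 hq x]
    exact h12.2.1 x
  simp_rw [this]
  exact hp.2

lemma glue_support (h12 : IsCoupling w12 p q) (h23 : IsCoupling w23 q u)
    {t : S × T × U} (h : glue w12 w23 q t ≠ 0) :
    q t.2.1 ≠ 0 ∧ w12 (t.1, t.2.1) ≠ 0 ∧ w23 (t.2.1, t.2.2) ≠ 0 := by
  unfold glue at h
  by_cases hq : q t.2.1 = 0
  · simp [hq] at h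
  · refine ⟨hq, ?_, ?_⟩ <;> (intro h0; rw [if_neg hq] at h; simp [h0] at h)

lemma ent_glue (h12 : IsCoupling w12 p q) (h23 : IsCoupling w23 q u)
    (hq : IsDist q) :
    ent (glue w12 w23 q) = ent w12 + ent w23 - ent q := by
  set g : S × T × U → ℝ := glue w12 w23 q with hg
  have key : ∀ t : S × T × U, g t * Real.log (g t)
      = g t * Real.log (w12 (t.1, t.2.1)) + g t * Real.log (w23 (t.2.1, t.2.2))
        - g t * Real.log (q t.2.1) := by
    intro t
    by_cases h : g t = 0
    · simp [h]
    · obtain ⟨hq0, h120, h230⟩ := glue_support h12 h23 h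
      have hqpos : 0 < q t.2.1 := lt_of_le_of_ne (hq.1 _) (Ne.symm hq0)
      have hlog : Real.log (g t)
          = Real.log (w12 (t.1, t.2.1)) + Real.log (w23 (t.2.1, t.2.2))
            - Real.log (q t.2.1) := by
        rw [hg]
        show Real.log (glue w12 w23 q t) = _
        unfold glue
        rw [if_neg hq0, Real.log_div (mul_ne_zero h120 h230) hq0,
          Real.log_mul h120 h230]
      rw [hlog]; ring
  have e1 : ∑ t : S × T × U, g t * Real.log (w12 (t.1, t.2.1))
      = ∑ z : S × T, w12 z * Real.log (w12 z) := by
    simp only [Fintype.sum_prod_type]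
    refine Finset.sum_congr rfl fun x _ => Finset.sum_congr rfl fun y _ => ?_
    rw [← Finset.sum_mul, glue_sum_z h12 h23 hq]
  have e2 : ∑ t : S × T × U, g t * Real.log (w23 (t.2.1, t.2.2))
      = ∑ z : T × U, w23 z * Real.log (w23 z) := by
    rw [Fintype.sum_prod_type_right]
    refine Finset.sum_congr rfl fun yz _ => ?_
    show (∑ x, g (x, yz) * Real.log (w23 yz)) = w23 yz * Real.log (w23 yz)
    rw [← Finset.sum_mul]
    rw [show (∑ x, g (x, yz)) = w23 yz from by
      simpa using glue_sum_x h12 h23 hq yz.1 yz.2]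
  have e3 : ∑ t : S × T × U, g t * Real.log (q t.2.1)
      = ∑ y : T, q y * Real.log (q y) := by
    rw [Fintype.sum_prod_type_right, Fintype.sum_prod_type]
    refine Finset.sum_congr rfl fun y _ => ?_
    show (∑ z : U, ∑ x : S, g (x, y, z) * Real.log (q y)) = q y * Real.log (q y)
    rw [Finset.sum_congr rfl (fun z _ => by
      rw [← Finset.sum_mul, glue_sum_x h12 h23 hq y])]
    rw [← Finset.sum_mul, h23.2.1 y]
  unfold ent
  rw [Finset.sum_congr rfl fun t _ => key t]
  rw [Finset.sum_sub_distrib, Finset.sum_add_distrib, e1, e2, e3]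
  ring

/-- The induced coupling between the outer marginals. -/
def glue13 (w12 : S × T → ℝ) (w23 : T × U → ℝ) (q : T → ℝ) : S × U → ℝ :=
  fun z => ∑ y, glue w12 w23 q (z.1, y, z.2)

lemma glue13_eq_push :
    glue13 w12 w23 q = push (fun t : S × T × U => (t.1, t.2.2)) (glue w12 w23 q) := by
  funext z
  unfold glue13 push
  symm
  simp only [Fintype.sum_prod_type]
  simp [Prod.ext_iff, ite_and, Finset.sum_ite_eq', Finset.sum_ite_eq]

lemma glue13_coupling (h12 : IsCoupling w12 p q) (h23 : IsCoupling w23 q u)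
    (hq : IsDist q) (hp : IsDist p) : IsCoupling (glue13 w12 w23 q) p u := by
  refine ⟨⟨fun z => Finset.sum_nonneg fun y _ => glue_nonneg h12 h23 hq _, ?_⟩,
    fun x => ?_, fun z => ?_⟩
  · rw [glue13_eq_push, sum_push, (glue_isDist h12 h23 hq hp).2]
  · show (∑ z, ∑ y, glue w12 w23 q (x, y, z)) = p x
    rw [Finset.sum_comm]
    simp_rw [glue_sum_z h12 h23 hq x]
    exact h12.2.1 x
  · show (∑ x, ∑ y, glue w12 w23 q (x, y, z)) = u z
    rw [Finset.sum_comm]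
    simp_rw [glue_sum_x h12 h23 hq]
    exact h23.2.2 z

lemma ent_glue13_le (h12 : IsCoupling w12 p q) (h23 : IsCoupling w23 q u)
    (hq : IsDist q) (hp : IsDist p) :
    ent (glue13 w12 w23 q) ≤ ent w12 + ent w23 - ent q := by
  rw [← ent_glue h12 h23 hq, glue13_eq_push]
  exact ent_push_le _ (glue_isDist h12 h23 hq hp).1

lemma kdist_triangle' {d12 d23 : ℝ} (hp : IsDist p) (hq : IsDist q) (hu : IsDist u)
    (h12 : d12 ∈ kset p q) (h23 : d23 ∈ kset q u) :
    kdist p u ≤ d12 + d23 := by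
  obtain ⟨w12, hw12, rfl⟩ := h12
  obtain ⟨w23, hw23, rfl⟩ := h23
  have hmem : 2 * ent (glue13 w12 w23 q) - ent p - ent u ∈ kset p u :=
    ⟨glue13 w12 w23 q, glue13_coupling hw12 hw23 hq hp, rfl⟩
  have hle := csInf_le (kset_bddBelow p u) hmem
  have h1 := ent_glue13_le hw12 hw23 hq hp
  rw [kdist_eq]
  linarith

lemma kdist_triangle (hp : IsDist p) (hq : IsDist q) (hu : IsDist u) :
    kdist p u ≤ kdist p q + kdist q u := by
  have h1 : ∀ d23 ∈ kset q u, kdist p u ≤ kdist p q + d23 := by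
    intro d23 hd23
    have : kdist p u - d23 ≤ kdist p q := by
      rw [show kdist p q = sInf (kset p q) from rfl]
      refine le_csInf (kset_nonempty hp hq) fun d12 hd12 => ?_
      have h := kdist_triangle' hp hq hu hd12 hd23
      linarith
    linarith
  have : kdist p u - kdist p q ≤ kdist q u := by
    rw [show kdist q u = sInf (kset q u) from rfl]
    exact le_csInf (kset_nonempty hq hu) fun d23 hd23 => by
      have := h1 d23 hd23; linarith
  linarith

end Glue

section Iso

variable {p : S → ℝ} {q : T → ℝ}

lemma sum_support (f : S → ℝ) (hf : ∀ x, p x = 0 → f x = 0) :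
    ∑ x, f x = ∑ x : {x // p x ≠ 0}, f x.val := by
  rw [← Finset.sum_filter_of_ne (p := fun x => p x ≠ 0)
    (fun x _ hfx hpx => hfx (hf x hpx))]
  exact Finset.sum_subtype _ (by simp) f

lemma ent_iso (h : ProbIso p q) : ent p = ent q := by
  obtain ⟨e, he⟩ := h
  unfold ent
  congr 1
  rw [sum_support (p := p) (f := fun x => p x * Real.log (p x)) (fun x h0 => by simp [h0]),
    sum_support (p := q) (f := fun y => q y * Real.log (q y)) (fun y h0 => by simp [h0])]
  rw [← Equiv.sum_comp e (fun y : {y // q y ≠ 0} => q y.val * Real.log (q y.val))]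
  exact Finset.sum_congr rfl fun x _ => by rw [he x]

lemma kdist_eq_zero_of_iso (hp : IsDist p) (hq : IsDist q) (h : ProbIso p q) :
    kdist p q = 0 := by
  obtain ⟨e, he⟩ := h
  set E : S → T → Prop := fun x y => ∃ hx : p x ≠ 0, (e ⟨x, hx⟩).val = y with hE
  set w : S × T → ℝ := fun z => if E z.1 z.2 then p z.1 else 0 with hwdef
  have hEiff : ∀ (x : S) (hx : p x ≠ 0) (y : T), E x y ↔ (e ⟨x, hx⟩).val = y := by
    intro x hx y
    constructor
    · rintro ⟨hx', hh⟩; exact hh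
    · intro hh; exact ⟨hx, hh⟩
  have hEpq : ∀ x y, E x y → p x = q y := by
    rintro x y ⟨hx, hh⟩
    rw [← hh]; exact (he ⟨x, hx⟩).symm
  have hwval : ∀ x y, w (x, y) = if E x y then p x else 0 := fun x y => rfl
  have marg1 : ∀ x, ∑ y, w (x, y) = p x := by
    intro x
    by_cases hx : p x ≠ 0
    · rw [Finset.sum_congr rfl fun y _ => by
        rw [hwval, if_congr (hEiff x hx y) rfl rfl]]
      simp [Finset.sum_ite_eq]
    · push_neg at hx
      rw [hx]
      refine Finset.sum_eq_zero fun y _ => ?_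
      rw [hwval]
      split
      · exact hx
      · rfl
  have marg2 : ∀ y, ∑ x, w (x, y) = q y := by
    intro y
    by_cases hy : q y = 0
    · rw [hy]
      refine Finset.sum_eq_zero fun x _ => ?_
      rw [hwval]
      split
      · next hExy => rw [hEpq x y hExy, hy]
      · rfl
    · rw [Finset.sum_eq_single (e.symm ⟨y, hy⟩).val]
      · rw [hwval]
        have hx0 : p (e.symm ⟨y, hy⟩).val ≠ 0 := (e.symm ⟨y, hy⟩).2
        have hcond : E (e.symm ⟨y, hy⟩).val y := by
          refine ⟨hx0, ?_⟩
          have h4 : (⟨(e.symm ⟨y, hy⟩).val, hx0⟩ : {x // p x ≠ 0}) = e.symm ⟨y, hy⟩ :=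
            Subtype.ext rfl
          rw [h4, e.apply_symm_apply]
        rw [if_pos hcond, hEpq _ _ hcond]
      · intro x _ hxne
        rw [hwval, if_neg]
        rintro ⟨hx, hh⟩
        apply hxne
        have h2 : e ⟨x, hx⟩ = ⟨y, hy⟩ := Subtype.ext hh
        have h3 : (⟨x, hx⟩ : {x // p x ≠ 0}) = e.symm ⟨y, hy⟩ := by
          rw [← h2, e.symm_apply_apply]
        exact congrArg Subtype.val h3
      · intro h'; exact absurd (Finset.mem_univ _) h'
  have hnn : ∀ z, 0 ≤ w z := fun z => by
    rw [hwdef]; dsimp only; split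
    · exact hp.1 _
    · exact le_refl 0
  have hcoup : IsCoupling w p q := by
    refine ⟨⟨hnn, ?_⟩, marg1, marg2⟩
    rw [Fintype.sum_prod_type]
    simp_rw [marg1]
    exact hp.2
  have hentw : ent w = ent p := by
    unfold ent
    congr 1
    rw [Fintype.sum_prod_type]
    refine Finset.sum_congr rfl fun x _ => ?_
    by_cases hx : p x ≠ 0
    · rw [Finset.sum_congr rfl fun y _ => by
        rw [hwval, if_congr (hEiff x hx y) rfl rfl,
          show (if (e ⟨x, hx⟩).val = y then p x else 0) *
            Real.log (if (e ⟨x, hx⟩).val = y then p x else 0)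
          = (if (e ⟨x, hx⟩).val = y then p x * Real.log (p x) else 0) from by
            split <;> simp]]
      simp [Finset.sum_ite_eq]
    · push_neg at hx
      have hz : ∀ y ∈ univ, w (x, y) * Real.log (w (x, y)) = 0 := fun y _ => by
        rw [hwval]
        split
        · rw [hx]; simp
        · simp
      rw [Finset.sum_eq_zero hz, hx]
      simp
  have hmem : (0 : ℝ) ∈ kset p q := by
    refine ⟨w, hcoup, ?_⟩
    rw [hentw, ent_iso ⟨e, he⟩]
    ring
  have h1 := csInf_le (kset_bddBelow p q) hmem
  have h2 := kdist_nonneg' p q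
  rw [kdist_eq] at h2
  rw [kdist_eq]
  linarith

lemma kdist_attained (hp : IsDist p) (hq : IsDist q) :
    ∃ w, IsCoupling w p q ∧ 2 * ent w - ent p - ent q = kdist p q := by
  set K : Set (S × T → ℝ) := {w | IsCoupling w p q} with hK
  have hKne : K.Nonempty := ⟨prodDist p q, prod_coupling hp hq⟩
  have hKc : IsCompact K := by
    have hsub : K ⊆ Set.pi Set.univ (fun _ : S × T => Set.Icc (0:ℝ) 1) := by
      intro w hw
      rw [Set.mem_univ_pi]
      intro z
      refine ⟨hw.1.1 z, ?_⟩
      have h1 := Finset.single_le_sum (f := w) (fun z _ => hw.1.1 z) (Finset.mem_univ z)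
      rw [hw.1.2] at h1
      exact h1
    have hc1 : IsClosed {w : S × T → ℝ | ∀ z, 0 ≤ w z} := by
      have : {w : S × T → ℝ | ∀ z, 0 ≤ w z} = ⋂ z, {w | 0 ≤ w z} := by
        ext w; simp [Set.mem_iInter]
      rw [this]
      exact isClosed_iInter fun z => isClosed_le continuous_const (continuous_apply z)
    have hc2 : IsClosed {w : S × T → ℝ | ∑ z, w z = 1} :=
      isClosed_eq (continuous_finset_sum _ fun z _ => continuous_apply z) continuous_const
    have hc3 : IsClosed {w : S × T → ℝ | ∀ x, ∑ y, w (x, y) = p x} := by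
      have : {w : S × T → ℝ | ∀ x, ∑ y, w (x, y) = p x}
          = ⋂ x, {w | ∑ y, w (x, y) = p x} := by
        ext w; simp [Set.mem_iInter]
      rw [this]
      exact isClosed_iInter fun x =>
        isClosed_eq (continuous_finset_sum _ fun y _ => continuous_apply (x, y)) continuous_const
    have hc4 : IsClosed {w : S × T → ℝ | ∀ y, ∑ x, w (x, y) = q y} := by
      have : {w : S × T → ℝ | ∀ y, ∑ x, w (x, y) = q y}
          = ⋂ y, {w | ∑ x, w (x, y) = q y} := by
        ext w; simp [Set.mem_iInter]
      rw [this]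
      exact isClosed_iInter fun y =>
        isClosed_eq (continuous_finset_sum _ fun x _ => continuous_apply (x, y)) continuous_const
    have hKeq : K = ({w : S × T → ℝ | ∀ z, 0 ≤ w z} ∩ {w | ∑ z, w z = 1})
        ∩ ({w | ∀ x, ∑ y, w (x, y) = p x} ∩ {w | ∀ y, ∑ x, w (x, y) = q y}) := by
      ext w
      simp only [hK, Set.mem_setOf_eq, Set.mem_inter_iff, IsCoupling, IsDist]
      try tauto
    refine IsCompact.of_isClosed_subset (isCompact_univ_pi fun _ => isCompact_Icc) ?_ hsub
    rw [hKeq]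
    exact ((hc1.inter hc2).inter (hc3.inter hc4))
  have hent : Continuous (fun w : S × T → ℝ => ent w) := by
    unfold ent
    exact (continuous_finset_sum _ fun z _ =>
      (Real.continuous_mul_log.comp (continuous_apply z))).neg
  have hf : Continuous (fun w : S × T → ℝ => 2 * ent w - ent p - ent q) :=
    ((continuous_const.mul hent).sub continuous_const).sub continuous_const
  obtain ⟨w0, hw0K, hmin⟩ := hKc.exists_isMinOn hKne hf.continuousOn
  refine ⟨w0, hw0K, ?_⟩
  have h1 : kdist p q ≤ 2 * ent w0 - ent p - ent q :=
    csInf_le (kset_bddBelow p q) ⟨w0, hw0K, rfl⟩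
  have h2 : 2 * ent w0 - ent p - ent q ≤ kdist p q := by
    rw [kdist_eq]
    refine le_csInf (kset_nonempty hp hq) fun d hd => ?_
    obtain ⟨w, hw, rfl⟩ := hd
    exact isMinOn_iff.mp hmin w hw
  linarith

lemma iso_of_kdist_zero (hp : IsDist p) (hq : IsDist q) (h : kdist p q = 0) :
    ProbIso p q := by
  obtain ⟨w, hw, hval⟩ := kdist_attained hp hq
  rw [h] at hval
  have hEp : ent p ≤ ent w := ent_left_le hw
  have hEq : ent q ≤ ent w := ent_right_le hw
  have hep : ent w = ent p := by linarith
  have heq : ent w = ent q := by linarith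
  have hcp : ∀ z : S × T, w z = 0 ∨ w z = p z.1 := by
    intro z
    have h' := ent_push_eq Prod.fst hw.1.1 (by rw [push_fst_eq hw, hep]) z
    rwa [push_fst_eq hw] at h'
  have hcq : ∀ z : S × T, w z = 0 ∨ w z = q z.2 := by
    intro z
    have h' := ent_push_eq Prod.snd hw.1.1 (by rw [push_snd_eq hw, heq]) z
    rwa [push_snd_eq hw] at h'
  have key1 : ∀ x, p x ≠ 0 → ∃ y, w (x, y) ≠ 0 ∧ ∀ y', w (x, y') ≠ 0 → y' = y := by
    intro x hx
    have hsum : ∑ y, w (x, y) = p x := hw.2.1 x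
    have hex : ∃ y, w (x, y) ≠ 0 := by
      by_contra hno; push_neg at hno
      exact hx (by rw [← hsum, Finset.sum_eq_zero fun y _ => hno y])
    obtain ⟨y, hy⟩ := hex
    refine ⟨y, hy, fun y' hy' => ?_⟩
    by_contra hne
    have h1 : w (x, y) = p x := (hcp (x, y)).resolve_left hy
    have h2 : w (x, y') = p x := by
      have := (hcp (x, y')).resolve_left hy'
      simpa using this
    have hsub : w (x, y') + w (x, y) ≤ ∑ y, w (x, y) := by
      rw [← Finset.sum_pair (f := fun y => w (x, y)) hne]
      exact Finset.sum_le_sum_of_subset_of_nonneg (Finset.subset_univ _)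
        fun y _ _ => hw.1.1 (x, y)
    have hppos : 0 < p x := lt_of_le_of_ne (hp.1 x) (Ne.symm hx)
    rw [hsum, h1, h2] at hsub
    linarith
  have key2 : ∀ y, q y ≠ 0 → ∃ x, w (x, y) ≠ 0 ∧ ∀ x', w (x', y) ≠ 0 → x' = x := by
    intro y hy
    have hsum : ∑ x, w (x, y) = q y := hw.2.2 y
    have hex : ∃ x, w (x, y) ≠ 0 := by
      by_contra hno; push_neg at hno
      exact hy (by rw [← hsum, Finset.sum_eq_zero fun x _ => hno x])
    obtain ⟨x, hx⟩ := hex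
    refine ⟨x, hx, fun x' hx' => ?_⟩
    by_contra hne
    have h1 : w (x, y) = q y := (hcq (x, y)).resolve_left hx
    have h2 : w (x', y) = q y := by
      have := (hcq (x', y)).resolve_left hx'
      simpa using this
    have hsub : w (x', y) + w (x, y) ≤ ∑ x, w (x, y) := by
      rw [← Finset.sum_pair (f := fun x' => w (x', y)) hne]
      exact Finset.sum_le_sum_of_subset_of_nonneg (Finset.subset_univ _)
        fun x _ _ => hw.1.1 (x, y)
    have hqpos : 0 < q y := lt_of_le_of_ne (hq.1 y) (Ne.symm hy)
    rw [hsum, h1, h2] at hsub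
    linarith
  choose F hF hFu using fun (x : {x // p x ≠ 0}) => key1 x.1 x.2
  choose G hG hGu using fun (y : {y // q y ≠ 0}) => key2 y.1 y.2
  have hFq : ∀ x : {x // p x ≠ 0}, q (F x) ≠ 0 := by
    intro x
    have := (hcq (x.1, F x)).resolve_left (hF x)
    rw [← this]
    exact hF x
  have hGp : ∀ y : {y // q y ≠ 0}, p (G y) ≠ 0 := by
    intro y
    have := (hcp (G y, y.1)).resolve_left (hG y)
    rw [← this]
    exact hG y
  refine ⟨⟨fun x => ⟨F x, hFq x⟩, fun y => ⟨G y, hGp y⟩, ?_, ?_⟩, ?_⟩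
  · intro x
    apply Subtype.ext
    exact (hGu ⟨F x, hFq x⟩ x.1 (hF x)).symm ▸ rfl
  · intro y
    apply Subtype.ext
    exact (hFu ⟨G y, hGp y⟩ y.1 (hG y)).symm ▸ rfl
  · intro x
    show q (F x) = p x.1
    have h1 := (hcp (x.1, F x)).resolve_left (hF x)
    have h2 := (hcq (x.1, F x)).resolve_left (hF x)
    simp only at h1 h2
    rw [← h2, h1]

end Iso


end KD




end KDAux

theorem stmt10 :
    (∀ (S T : Type) [Fintype S] [Fintype T] (p : S → ℝ) (q : T → ℝ),
      IsDist p → IsDist q → 0 ≤ kdist p q) ∧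
    (∀ (S T : Type) [Fintype S] [Fintype T] (p : S → ℝ) (q : T → ℝ),
      IsDist p → IsDist q → kdist p q = kdist q p) ∧
    (∀ (S : Type) [Fintype S] (p : S → ℝ), IsDist p → kdist p p = 0) ∧
    (∀ (S T U : Type) [Fintype S] [Fintype T] [Fintype U]
        (p : S → ℝ) (q : T → ℝ) (u : U → ℝ),
      IsDist p → IsDist q → IsDist u →
        kdist p u ≤ kdist p q + kdist q u) ∧
    (∀ (S T : Type) [Fintype S] [Fintype T] (p : S → ℝ) (q : T → ℝ),
      IsDist p → IsDist q → (kdist p q = 0 ↔ ProbIso p q)) := by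
  refine ⟨?_, ?_, ?_, ?_, ?_⟩
  · intro S T _ _ p q _ _
    exact KD.kdist_nonneg' p q
  · intro S T _ _ p q _ _
    exact KD.kdist_symm p q
  · intro S _ p hp
    exact KD.kdist_self hp
  · intro S T U _ _ _ p q u hp hq hu
    exact KD.kdist_triangle hp hq hu
  · intro S T _ _ p q hp hq
    exact ⟨KD.iso_of_kdist_zero hp hq, KD.kdist_eq_zero_of_iso hp hq⟩
end

section
/- The tensor product of finite probability spaces is 1-Lipschitz in each argument with respect to the intrinsic Kolmogorov–Sinai distance: for finite probability spaces X, Y, Y', one has k(X⊗Y, X⊗Y') ≤ k(Y, Y'). -/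
open scoped Classical BigOperators
open Finset

section Aux

variable {S T T' : Type*} [Fintype S] [Fintype T] [Fintype T']

lemma IsDist.le_one' {p : S → ℝ} (hp : IsDist p) (x : S) : p x ≤ 1 := by
  have := Finset.single_le_sum (f := p) (fun i _ => hp.1 i) (Finset.mem_univ x)
  simpa [hp.2] using this

lemma ent_nonneg' {p : S → ℝ} (hp : IsDist p) : 0 ≤ ent p := by
  unfold ent
  rw [neg_nonneg]
  apply Finset.sum_nonpos
  intro x _
  exact mul_nonpos_of_nonneg_of_nonpos (hp.1 x) (Real.log_nonpos (hp.1 x) (hp.le_one' x))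

lemma ent_le_card' {p : S → ℝ} (hp : IsDist p) : ent p ≤ Fintype.card S := by
  unfold ent
  rw [← Finset.sum_neg_distrib]
  calc ∑ x, -(p x * Real.log (p x)) ≤ ∑ _x : S, (1 : ℝ) := by
        apply Finset.sum_le_sum
        intro x _
        rcases eq_or_lt_of_le (hp.1 x) with h | h
        · simp [← h]
        · have h1 : Real.log (1 / p x) ≤ 1 / p x - 1 :=
            Real.log_le_sub_one_of_pos (by positivity)
          rw [Real.log_div one_ne_zero (ne_of_gt h), Real.log_one] at h1
          have := mul_le_mul_of_nonneg_left h1 (le_of_lt h)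
          calc -(p x * Real.log (p x)) = p x * (0 - Real.log (p x)) := by ring
            _ ≤ p x * (1 / p x - 1) := this
            _ = 1 - p x := by field_simp
            _ ≤ 1 := by linarith [hp.1 x]
    _ = Fintype.card S := by simp

lemma prodDist_isDist {p : S → ℝ} {q : T → ℝ} (hp : IsDist p) (hq : IsDist q) :
    IsDist (prodDist p q) := by
  constructor
  · intro z; exact mul_nonneg (hp.1 _) (hq.1 _)
  · rw [show (∑ z, prodDist p q z) = ∑ x, ∑ y, p x * q y from Fintype.sum_prod_type _]
    simp [← Finset.mul_sum, hq.2, hp.2]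

lemma ent_prodDist {p : S → ℝ} {q : T → ℝ} (hp : IsDist p) (hq : IsDist q) :
    ent (prodDist p q) = ent p + ent q := by
  unfold ent prodDist
  rw [Fintype.sum_prod_type]
  have key : ∀ x y, p x * q y * Real.log (p x * q y)
      = q y * (p x * Real.log (p x)) + p x * (q y * Real.log (q y)) := by
    intro x y
    rcases eq_or_ne (p x) 0 with h | h
    · simp [h]
    rcases eq_or_ne (q y) 0 with h' | h'
    · simp [h']
    rw [Real.log_mul h h']; ring
  have : ∑ x, ∑ y, p x * q y * Real.log (p x * q y)
      = ∑ x, ∑ y, (q y * (p x * Real.log (p x)) + p x * (q y * Real.log (q y))) := by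
    refine Finset.sum_congr rfl fun x _ => Finset.sum_congr rfl fun y _ => key x y
  rw [this]
  have h1 : ∀ x : S, ∑ y, (q y * (p x * Real.log (p x)) + p x * (q y * Real.log (q y)))
      = p x * Real.log (p x) + p x * ∑ y, q y * Real.log (q y) := by
    intro x
    rw [Finset.sum_add_distrib, ← Finset.sum_mul, hq.2, ← Finset.mul_sum, one_mul]
  simp only [h1]
  rw [Finset.sum_add_distrib, ← Finset.sum_mul, hp.2, one_mul]
  ring

end Aux

theorem stmt11 {S T T' : Type*} [Fintype S] [Fintype T] [Fintype T']
    (p : S → ℝ) (q : T → ℝ) (q' : T' → ℝ)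
    (hp : IsDist p) (hq : IsDist q) (hq' : IsDist q') :
    kdist (prodDist p q) (prodDist p q') ≤ kdist q q' := by
  unfold kdist
  set A := {d : ℝ | ∃ w : (S × T) × (S × T') → ℝ,
    IsCoupling w (prodDist p q) (prodDist p q') ∧
    d = 2 * ent w - ent (prodDist p q) - ent (prodDist p q')} with hA
  set B := {d : ℝ | ∃ w : T × T' → ℝ, IsCoupling w q q' ∧
    d = 2 * ent w - ent q - ent q'} with hB
  -- key: from any coupling w of q q' build a coupling of the products with
  -- entropy ent p + ent w
  have lift : ∀ w : T × T' → ℝ, IsCoupling w q q' →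
      ∃ W : (S × T) × (S × T') → ℝ,
        IsCoupling W (prodDist p q) (prodDist p q') ∧ ent W = ent p + ent w := by
    intro w hw
    obtain ⟨hwD, hw1, hw2⟩ := hw
    set W : (S × T) × (S × T') → ℝ :=
      fun z => (if z.1.1 = z.2.1 then p z.1.1 else 0) * w (z.1.2, z.2.2) with hW
    have hWnn : ∀ z, 0 ≤ W z := by
      intro z
      apply mul_nonneg _ (hwD.1 _)
      split
      · exact hp.1 _
      · exact le_rfl
    have hmarg1 : ∀ a : S × T, ∑ b : S × T', W (a, b) = prodDist p q a := by
      intro a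
      rw [Fintype.sum_prod_type]
      have : ∀ x' : S, ∑ y' : T', W (a, (x', y'))
          = (if a.1 = x' then p a.1 else 0) * q a.2 := by
        intro x'
        simp only [hW]
        rw [← Finset.mul_sum]
        congr 1
        exact hw1 a.2
      simp only [this, ite_mul, zero_mul]
      rw [Finset.sum_ite_eq]
      simp [prodDist]
    have hmarg2 : ∀ b : S × T', ∑ a : S × T, W (a, b) = prodDist p q' b := by
      intro b
      rw [Fintype.sum_prod_type]
      have : ∀ x : S, ∑ y : T, W ((x, y), b)
          = (if x = b.1 then p x else 0) * q' b.2 := by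
        intro x
        simp only [hW]
        rw [← Finset.mul_sum]
        congr 1
        exact hw2 b.2
      simp only [this, ite_mul, zero_mul]
      rw [Finset.sum_ite_eq']
      simp [prodDist]
    have hWsum : ∑ z, W z = 1 := by
      rw [Fintype.sum_prod_type]
      have : ∀ a : S × T, ∑ b : S × T', W (a, b) = prodDist p q a := hmarg1
      simp only [this]
      exact (prodDist_isDist hp hq).2
    have hWent : ent W = ent p + ent w := by
      have hentW : ent W = ent (prodDist p w) := by
        unfold ent
        congr 1
        have hL : (∑ z : (S × T) × (S × T'), W z * Real.log (W z))
            = ∑ x : S, ∑ y : T, ∑ x' : S, ∑ y' : T',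
                W ((x, y), (x', y')) * Real.log (W ((x, y), (x', y'))) := by
          rw [Fintype.sum_prod_type, Fintype.sum_prod_type]
          exact Finset.sum_congr rfl fun x _ => Finset.sum_congr rfl fun y _ => by
            rw [Fintype.sum_prod_type]
        have hR : (∑ z : S × (T × T'), prodDist p w z * Real.log (prodDist p w z))
            = ∑ x : S, ∑ y : T, ∑ y' : T',
                p x * w (y, y') * Real.log (p x * w (y, y')) := by
          rw [Fintype.sum_prod_type]
          exact Finset.sum_congr rfl fun x _ => by
            rw [Fintype.sum_prod_type]; rfl
        rw [hL, hR]
        refine Finset.sum_congr rfl fun x _ => Finset.sum_congr rfl fun y _ => ?_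
        have inner : ∀ x' : S, (∑ y' : T', W ((x, y), (x', y')) *
            Real.log (W ((x, y), (x', y'))))
            = if x = x' then ∑ y' : T', p x * w (y, y') * Real.log (p x * w (y, y'))
              else 0 := by
          intro x'
          by_cases h : x = x'
          · subst h; simp [hW]
          · simp [hW, if_neg h]
        simp only [inner]
        rw [Finset.sum_ite_eq]
        simp
      rw [hentW, ent_prodDist hp hwD]
    exact ⟨W, ⟨⟨hWnn, hWsum⟩, hmarg1, hmarg2⟩, hWent⟩
  -- B maps into A with the same value
  have hBA : B ⊆ A := by
    intro d hd
    obtain ⟨w, hw, hdval⟩ := hd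
    obtain ⟨W, hWc, hWe⟩ := lift w hw
    refine ⟨W, hWc, ?_⟩
    rw [hWe, ent_prodDist hp hq, ent_prodDist hp hq', hdval]
    ring
  have hBne : B.Nonempty := by
    refine ⟨2 * ent (prodDist q q') - ent q - ent q', prodDist q q', ⟨?_, ?_, ?_⟩, rfl⟩
    · exact prodDist_isDist hq hq'
    · intro x; simp [prodDist, ← Finset.mul_sum, hq'.2]
    · intro y; simp [prodDist, ← Finset.sum_mul, hq.2]
  have hAbdd : BddBelow A := by
    refine ⟨-(Fintype.card (S × T) : ℝ) - Fintype.card (S × T'), ?_⟩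
    rintro d ⟨W, ⟨hWD, _, _⟩, rfl⟩
    have h1 := ent_nonneg' hWD
    have h2 := ent_le_card' (prodDist_isDist hp hq)
    have h3 := ent_le_card' (prodDist_isDist hp hq')
    linarith
  exact csInf_le_csInf hAbdd hBne hBA
end

section
/- Slicing inequality: Let X, Y be finite probability spaces and U a finite probability space such that there are reductions from spaces X̂ → X, X̂ → U and Ŷ → Y, Ŷ → U (a 'two-tents' configuration X ← X̂ → U ← Ŷ → Y). Then k(X,Y) ≤ ∫_U k(X|u, Y|u) dp_U(u) + 2·Ent(U), where X|u and Y|u are the conditioned spaces. -/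
open scoped Classical BigOperators
open Finset

lemma gibbs_aux {ι : Type*} [Fintype ι] (a b : ι → ℝ) (ha : ∀ i, 0 ≤ a i)
    (hb : ∀ i, 0 ≤ b i) (hab : ∀ i, 0 < a i → 0 < b i) :
    ∑ i, a i * Real.log (b i / a i) ≤ ∑ i, b i - ∑ i, a i := by
  rw [← Finset.sum_sub_distrib]
  apply Finset.sum_le_sum
  intro i _
  rcases eq_or_lt_of_le (ha i) with h | h
  · simp [← h, hb i]
  · have hbi := hab i h
    have hlog : Real.log (b i / a i) ≤ b i / a i - 1 :=
      Real.log_le_sub_one_of_pos (by positivity)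
    have h1 : a i * Real.log (b i / a i) ≤ a i * (b i / a i - 1) :=
      mul_le_mul_of_nonneg_left hlog (le_of_lt h)
    have h2 : a i * (b i / a i - 1) = b i - a i := by field_simp
    linarith

lemma ent_marginal_le {S T : Type*} [Fintype S] [Fintype T] (w : S × T → ℝ)
    (hw : ∀ z, 0 ≤ w z) :
    ent (fun x => ∑ y, w (x, y)) ≤ ent w := by
  unfold ent
  rw [Fintype.sum_prod_type, neg_le_neg_iff]
  apply Finset.sum_le_sum
  intro x _
  have hs : ∀ y : T, w (x, y) ≤ ∑ y', w (x, y') := fun y =>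
    Finset.single_le_sum (fun y' _ => hw (x, y')) (Finset.mem_univ y)
  calc ∑ y, w (x, y) * Real.log (w (x, y))
      ≤ ∑ y, w (x, y) * Real.log (∑ y', w (x, y')) := by
        apply Finset.sum_le_sum
        intro y _
        rcases eq_or_lt_of_le (hw (x, y)) with h | h
        · simp [← h]
        · exact mul_le_mul_of_nonneg_left
            (Real.log_le_log (by exact h) (hs y)) (le_of_lt h)
      _ = (∑ y, w (x, y)) * Real.log (∑ y, w (x, y)) := by
        rw [Finset.sum_mul]

lemma ent_marginal_le' {S T : Type*} [Fintype S] [Fintype T] (w : S × T → ℝ)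
    (hw : ∀ z, 0 ≤ w z) :
    ent (fun y => ∑ x, w (x, y)) ≤ ent w := by
  have h1 : ent (fun z : T × S => w (z.2, z.1)) = ent w := by
    unfold ent
    congr 1
    exact Fintype.sum_equiv (Equiv.prodComm T S) _ _ (fun z => rfl)
  have h2 := ent_marginal_le (fun z : T × S => w (z.2, z.1)) (fun z => hw _)
  rw [h1] at h2
  exact h2

lemma coupling_val_nonneg {S T : Type*} [Fintype S] [Fintype T]
    {w : S × T → ℝ} {p : S → ℝ} {q : T → ℝ} (h : IsCoupling w p q) :
    0 ≤ 2 * ent w - ent p - ent q := by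
  have hp : p = fun x => ∑ y, w (x, y) := funext fun x => (h.2.1 x).symm
  have hq : q = fun y => ∑ x, w (x, y) := funext fun y => (h.2.2 y).symm
  have h1 := ent_marginal_le w h.1.1
  have h2 := ent_marginal_le' w h.1.1
  rw [hp, hq]
  linarith

lemma prodDist_coupling {S T : Type*} [Fintype S] [Fintype T]
    {p : S → ℝ} {q : T → ℝ} (hp : IsDist p) (hq : IsDist q) :
    IsCoupling (prodDist p q) p q := by
  refine ⟨⟨fun z => mul_nonneg (hp.1 z.1) (hq.1 z.2), ?_⟩, ?_, ?_⟩
  · rw [Fintype.sum_prod_type]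
    have : ∀ x : S, ∑ y, prodDist p q (x, y) = p x := by
      intro x
      show ∑ y, p x * q y = p x
      rw [← Finset.mul_sum, hq.2, mul_one]
    rw [Finset.sum_congr rfl (fun x _ => this x), hp.2]
  · intro x
    show ∑ y, p x * q y = p x
    rw [← Finset.mul_sum, hq.2, mul_one]
  · intro y
    show ∑ x, p x * q y = q y
    rw [← Finset.sum_mul, hp.2, one_mul]

lemma ent_chain {Z R : Type*} [Fintype Z] [Fintype R] (u : R → ℝ) (v : R → Z → ℝ)
    (hu : ∀ r, 0 ≤ u r) (hv : ∀ r z, 0 ≤ v r z) (hv1 : ∀ r, 0 < u r → ∑ z, v r z = 1) :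
    ent (fun zr : Z × R => u zr.2 * v zr.2 zr.1) = ent u + ∑ r, u r * ent (v r) := by
  unfold ent
  rw [Fintype.sum_prod_type, Finset.sum_comm]
  have key : ∀ r : R, ∑ z, u r * v r z * Real.log (u r * v r z)
      = u r * Real.log (u r) + u r * ∑ z, v r z * Real.log (v r z) := by
    intro r
    rcases eq_or_lt_of_le (hu r) with h | h
    · simp [← h]
    · have : ∀ z : Z, u r * v r z * Real.log (u r * v r z)
          = u r * v r z * Real.log (u r) + u r * (v r z * Real.log (v r z)) := by
        intro z
        rcases eq_or_lt_of_le (hv r z) with h2 | h2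
        · simp [← h2]
        · rw [Real.log_mul (ne_of_gt h) (ne_of_gt h2)]; ring
      rw [Finset.sum_congr rfl (fun z _ => this z), Finset.sum_add_distrib,
        ← Finset.mul_sum]
      have : ∑ i : Z, u r * v r i * Real.log (u r)
          = (u r * ∑ z, v r z) * Real.log (u r) := by
        rw [Finset.mul_sum, Finset.sum_mul]
      rw [this, hv1 r h]
      ring
  rw [Finset.sum_congr rfl (fun r _ => key r), Finset.sum_add_distrib, neg_add]
  congr 1
  rw [← Finset.sum_neg_distrib]
  exact Finset.sum_congr rfl (fun r _ => by ring)

lemma sum_mix_eq {Z R : Type*} [Fintype Z] [Fintype R] (u : R → ℝ) (v : R → Z → ℝ)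
    (hu1 : ∑ r, u r = 1) (hv1 : ∀ r, 0 < u r → ∑ z, v r z = 1)
    (hu : ∀ r, 0 ≤ u r) :
    ∑ z, ∑ r, u r * v r z = 1 := by
  rw [Finset.sum_comm]
  have : ∀ r : R, ∑ z, u r * v r z = u r := by
    intro r
    rw [← Finset.mul_sum]
    rcases eq_or_lt_of_le (hu r) with h | h
    · rw [← h]; ring
    · rw [hv1 r h]; ring
  rw [Finset.sum_congr rfl (fun r _ => this r), hu1]

lemma ent_mix {Z R : Type*} [Fintype Z] [Fintype R] (u : R → ℝ) (v : R → Z → ℝ)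
    (hu : ∀ r, 0 ≤ u r) (hu1 : ∑ r, u r = 1)
    (hv : ∀ r z, 0 ≤ v r z) (hv1 : ∀ r, 0 < u r → ∑ z, v r z = 1) :
    ∑ r, u r * ent (v r) ≤ ent (fun z => ∑ r, u r * v r z) := by
  set p : Z → ℝ := fun z => ∑ r, u r * v r z with hpdef
  have hpnn : ∀ z, 0 ≤ p z := fun z =>
    Finset.sum_nonneg (fun r _ => mul_nonneg (hu r) (hv r z))
  have hps : ∑ z, p z = 1 := sum_mix_eq u v hu1 hv1 hu
  have key : ∑ r, u r * ent (v r) - ent p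
      ≤ (∑ rz : R × Z, u rz.1 * p rz.2) - (∑ rz : R × Z, u rz.1 * v rz.1 rz.2) := by
    have hg := gibbs_aux (fun rz : R × Z => u rz.1 * v rz.1 rz.2)
      (fun rz : R × Z => u rz.1 * p rz.2)
      (fun rz => mul_nonneg (hu rz.1) (hv rz.1 rz.2))
      (fun rz => mul_nonneg (hu rz.1) (hpnn rz.2))
      (by
        rintro ⟨r, z⟩ h
        have hur : 0 < u r := by
          rcases eq_or_lt_of_le (hu r) with h' | h'
          · exfalso; simp [← h'] at h
          · exact h'
        have hvz : 0 < v r z := by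
          rcases eq_or_lt_of_le (hv r z) with h' | h'
          · exfalso; simp [← h'] at h
          · exact h'
        have : u r * v r z ≤ p z :=
          Finset.single_le_sum (fun r' _ => mul_nonneg (hu r') (hv r' z))
            (Finset.mem_univ r)
        exact mul_pos hur (lt_of_lt_of_le h this))
    refine le_trans (le_of_eq ?_) hg
    unfold ent
    rw [Fintype.sum_prod_type]
    have hpl : ∀ z : Z, p z * Real.log (p z) = ∑ r, u r * v r z * Real.log (p z) := by
      intro z
      conv_lhs => rw [hpdef]
      simp only
      rw [Finset.sum_mul]
    calc ∑ r, u r * -∑ z, v r z * Real.log (v r z) - -∑ z, p z * Real.log (p z)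
        = ∑ z, p z * Real.log (p z) - ∑ r, ∑ z, u r * (v r z * Real.log (v r z)) := by
          rw [Finset.sum_congr rfl (fun r _ => by rw [mul_neg, Finset.mul_sum] : ∀ r ∈ Finset.univ, u r * -∑ z, v r z * Real.log (v r z) = -∑ z, u r * (v r z * Real.log (v r z)))]
          rw [Finset.sum_neg_distrib]
          ring
      _ = ∑ r, ∑ z, u r * v r z * Real.log (p z) - ∑ r, ∑ z, u r * (v r z * Real.log (v r z)) := by
          rw [Finset.sum_congr rfl (fun z _ => hpl z), Finset.sum_comm]
      _ = ∑ r, ∑ z, (u r * v r z * Real.log (p z) - u r * (v r z * Real.log (v r z))) := by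
          rw [← Finset.sum_sub_distrib]
          exact Finset.sum_congr rfl (fun r _ => by rw [← Finset.sum_sub_distrib])
      _ = ∑ r, ∑ z, u r * v r z * Real.log ((u r * p z) / (u r * v r z)) := by
          apply Finset.sum_congr rfl; intro r _
          apply Finset.sum_congr rfl; intro z _
          rcases eq_or_lt_of_le (hu r) with h | h
          · simp [← h]
          rcases eq_or_lt_of_le (hv r z) with h2 | h2
          · simp [← h2]
          have hpz : 0 < p z := by
            have : u r * v r z ≤ p z :=
              Finset.single_le_sum (fun r' _ => mul_nonneg (hu r') (hv r' z))
                (Finset.mem_univ r)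
            exact lt_of_lt_of_le (mul_pos h h2) this
          rw [mul_div_mul_left _ _ (ne_of_gt h),
            Real.log_div (ne_of_gt hpz) (ne_of_gt h2)]
          ring
  have h1 : (∑ rz : R × Z, u rz.1 * p rz.2) = 1 := by
    rw [Fintype.sum_prod_type]
    have : ∀ r : R, ∑ z, u r * p z = u r := by
      intro r; rw [← Finset.mul_sum, hps, mul_one]
    rw [Finset.sum_congr rfl (fun r _ => this r), hu1]
  have h2 : (∑ rz : R × Z, u rz.1 * v rz.1 rz.2) = 1 := by
    rw [Fintype.sum_prod_type]
    have : ∀ r : R, ∑ z, u r * v r z = u r := by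
      intro r
      rw [← Finset.mul_sum]
      rcases eq_or_lt_of_le (hu r) with h | h
      · rw [← h]; ring
      · rw [hv1 r h]; ring
    rw [Finset.sum_congr rfl (fun r _ => this r), hu1]
  rw [h1, h2] at key
  linarith

theorem stmt15 {S T R : Type*} [Fintype S] [Fintype T] [Fintype R]
    (p : S → ℝ) (q : T → ℝ) (u : R → ℝ)
    (hp : IsDist p) (hq : IsDist q) (hu : IsDist u)
    (w₁ : S × R → ℝ) (w₂ : T × R → ℝ)
    (hw₁ : IsCoupling w₁ p u) (hw₂ : IsCoupling w₂ q u) :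
    kdist p q ≤
      (∑ r : R, u r * kdist (fun x => w₁ (x, r) / u r) (fun y => w₂ (y, r) / u r))
        + 2 * ent u := by
  classical
  let pr : R → S → ℝ := fun r x => w₁ (x, r) / u r
  let qr : R → T → ℝ := fun r y => w₂ (y, r) / u r
  show kdist p q ≤ (∑ r : R, u r * kdist (pr r) (qr r)) + 2 * ent u
  -- basic facts
  have hw1nn : ∀ z, 0 ≤ w₁ z := hw₁.1.1
  have hw2nn : ∀ z, 0 ≤ w₂ z := hw₂.1.1
  have hw1zero : ∀ r, u r = 0 → ∀ x, w₁ (x, r) = 0 := by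
    intro r hr x
    have hs : ∑ x, w₁ (x, r) = 0 := by rw [hw₁.2.2 r, hr]
    have := (Finset.sum_eq_zero_iff_of_nonneg (fun x _ => hw1nn (x, r))).1 hs
    exact this x (Finset.mem_univ x)
  have hw2zero : ∀ r, u r = 0 → ∀ y, w₂ (y, r) = 0 := by
    intro r hr y
    have hs : ∑ y, w₂ (y, r) = 0 := by rw [hw₂.2.2 r, hr]
    have := (Finset.sum_eq_zero_iff_of_nonneg (fun y _ => hw2nn (y, r))).1 hs
    exact this y (Finset.mem_univ y)
  have hprnn : ∀ r x, 0 ≤ pr r x := fun r x => div_nonneg (hw1nn (x, r)) (hu.1 r)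
  have hqrnn : ∀ r y, 0 ≤ qr r y := fun r y => div_nonneg (hw2nn (y, r)) (hu.1 r)
  have hprd : ∀ r, 0 < u r → IsDist (pr r) := by
    intro r hr
    refine ⟨hprnn r, ?_⟩
    show ∑ x, w₁ (x, r) / u r = 1
    rw [← Finset.sum_div, hw₁.2.2 r, div_self (ne_of_gt hr)]
  have hqrd : ∀ r, 0 < u r → IsDist (qr r) := by
    intro r hr
    refine ⟨hqrnn r, ?_⟩
    show ∑ y, w₂ (y, r) / u r = 1
    rw [← Finset.sum_div, hw₂.2.2 r, div_self (ne_of_gt hr)]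
  have hmul₁ : ∀ r x, u r * pr r x = w₁ (x, r) := by
    intro r x
    rcases eq_or_lt_of_le (hu.1 r) with h | h
    · rw [← h, zero_mul, hw1zero r h.symm x]
    · show u r * (w₁ (x, r) / u r) = w₁ (x, r)
      field_simp
  have hmul₂ : ∀ r y, u r * qr r y = w₂ (y, r) := by
    intro r y
    rcases eq_or_lt_of_le (hu.1 r) with h | h
    · rw [← h, zero_mul, hw2zero r h.symm y]
    · show u r * (w₂ (y, r) / u r) = w₂ (y, r)
      field_simp
  have hpeq : p = fun x => ∑ r, u r * pr r x := by
    funext x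
    rw [Finset.sum_congr rfl (fun r _ => hmul₁ r x), hw₁.2.1 x]
  have hqeq : q = fun y => ∑ r, u r * qr r y := by
    funext y
    rw [Finset.sum_congr rfl (fun r _ => hmul₂ r y), hw₂.2.1 y]
  -- lower bound for the coupling set
  have hbdd : ∀ (S' T' : Type _) [Fintype S'] [Fintype T'] (p' : S' → ℝ) (q' : T' → ℝ),
      BddBelow {d : ℝ | ∃ w : S' × T' → ℝ, IsCoupling w p' q' ∧
        d = 2 * ent w - ent p' - ent q'} := by
    intro S' T' _ _ p' q'
    refine ⟨0, ?_⟩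
    rintro d ⟨w, hw, rfl⟩
    exact coupling_val_nonneg hw
  -- epsilon argument
  apply le_of_forall_pos_le_add
  intro ε hε
  -- choose near-optimal couplings
  have hchoice : ∀ r : R, ∃ wr : S × T → ℝ, (∀ z, 0 ≤ wr z) ∧
      (0 < u r → IsCoupling wr (pr r) (qr r) ∧ ∑ z, wr z = 1 ∧
        2 * ent wr - ent (pr r) - ent (qr r) ≤ kdist (pr r) (qr r) + ε) := by
    intro r
    by_cases hur : 0 < u r
    · have hne : Set.Nonempty {d : ℝ | ∃ w : S × T → ℝ, IsCoupling w (pr r) (qr r) ∧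
          d = 2 * ent w - ent (pr r) - ent (qr r)} :=
        ⟨_, prodDist (pr r) (qr r),
          prodDist_coupling (hprd r hur) (hqrd r hur), rfl⟩
      obtain ⟨d, hd, hlt⟩ := Real.lt_sInf_add_pos hne hε
      obtain ⟨wr, hwr, rfl⟩ := hd
      refine ⟨wr, hwr.1.1, fun _ => ⟨hwr, hwr.1.2, ?_⟩⟩
      exact le_of_lt hlt
    · exact ⟨prodDist p q, (prodDist_coupling hp hq).1.1, fun h => absurd h hur⟩
  choose W hWnn hWc using hchoice
  set w : S × T → ℝ := fun z => ∑ r, u r * W r z with hwdef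
  have hwnn : ∀ z, 0 ≤ w z := fun z =>
    Finset.sum_nonneg (fun r _ => mul_nonneg (hu.1 r) (hWnn r z))
  -- w is a coupling of p and q
  have hcoup : IsCoupling w p q := by
    refine ⟨⟨hwnn, ?_⟩, ?_, ?_⟩
    · exact sum_mix_eq u (fun r z => W r z) hu.2 (fun r hr => (hWc r hr).2.1) hu.1
    · intro x
      show ∑ y, ∑ r, u r * W r (x, y) = p x
      rw [Finset.sum_comm]
      have : ∀ r : R, ∑ y, u r * W r (x, y) = u r * pr r x := by
        intro r
        rw [← Finset.mul_sum]
        rcases eq_or_lt_of_le (hu.1 r) with h | h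
        · rw [← h, zero_mul, zero_mul]
        · rw [((hWc r h).1).2.1 x]
      rw [Finset.sum_congr rfl (fun r _ => this r)]
      rw [hpeq]
    · intro y
      show ∑ x, ∑ r, u r * W r (x, y) = q y
      rw [Finset.sum_comm]
      have : ∀ r : R, ∑ x, u r * W r (x, y) = u r * qr r y := by
        intro r
        rw [← Finset.mul_sum]
        rcases eq_or_lt_of_le (hu.1 r) with h | h
        · rw [← h, zero_mul, zero_mul]
        · rw [((hWc r h).1).2.2 y]
      rw [Finset.sum_congr rfl (fun r _ => this r)]
      rw [hqeq]
  -- kdist p q ≤ value of w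
  have hstep1 : kdist p q ≤ 2 * ent w - ent p - ent q := by
    apply csInf_le (hbdd S T p q)
    exact ⟨w, hcoup, rfl⟩
  -- ent w ≤ ent u + ∑ r, u r * ent (W r)
  have hstep2 : ent w ≤ ent u + ∑ r, u r * ent (W r) := by
    have hch := ent_chain u (fun r z => W r z) hu.1 (fun r z => hWnn r z)
      (fun r hr => (hWc r hr).2.1)
    have hm := ent_marginal_le (fun zr : (S × T) × R => u zr.2 * W zr.2 zr.1)
      (fun zr => mul_nonneg (hu.1 zr.2) (hWnn zr.2 zr.1))
    rw [hch] at hm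
    exact hm
  -- ∑ r, u r * ent (pr r) ≤ ent p, similarly q
  have hstep3 : ∑ r, u r * ent (pr r) ≤ ent p := by
    have := ent_mix u pr hu.1 hu.2 hprnn (fun r hr => (hprd r hr).2)
    rw [hpeq]
    exact this
  have hstep4 : ∑ r, u r * ent (qr r) ≤ ent q := by
    have := ent_mix u qr hu.1 hu.2 hqrnn (fun r hr => (hqrd r hr).2)
    rw [hqeq]
    exact this
  -- per-r bound
  have hstep5 : ∀ r : R, u r * (2 * ent (W r) - ent (pr r) - ent (qr r))
      ≤ u r * (kdist (pr r) (qr r) + ε) := by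
    intro r
    rcases eq_or_lt_of_le (hu.1 r) with h | h
    · rw [← h, zero_mul, zero_mul]
    · exact mul_le_mul_of_nonneg_left (le_trans ((hWc r h).2.2) (le_refl _)) (le_of_lt h)
  -- assemble
  have e1 : ∑ r, u r * (2 * ent (W r) - ent (pr r) - ent (qr r))
      = 2 * (∑ r, u r * ent (W r)) - ∑ r, u r * ent (pr r) - ∑ r, u r * ent (qr r) := by
    rw [Finset.mul_sum, ← Finset.sum_sub_distrib, ← Finset.sum_sub_distrib]
    exact Finset.sum_congr rfl (fun r _ => by ring)
  have e2 : ∑ r, u r * (kdist (pr r) (qr r) + ε)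
      = (∑ r, u r * kdist (pr r) (qr r)) + ε := by
    have : ∀ r ∈ Finset.univ, u r * (kdist (pr r) (qr r) + ε)
        = u r * kdist (pr r) (qr r) + u r * ε := fun r _ => by ring
    rw [Finset.sum_congr rfl this, Finset.sum_add_distrib, ← Finset.sum_mul, hu.2, one_mul]
  have hsum : ∑ r, u r * (2 * ent (W r) - ent (pr r) - ent (qr r))
      ≤ (∑ r, u r * kdist (pr r) (qr r)) + ε := by
    rw [← e2]
    exact Finset.sum_le_sum (fun r _ => hstep5 r)
  rw [e1] at hsum
  linarith
end

section
/- Local estimate: Let S be a finite set, and let p, q ∈ Δ(S) be two distributions. Set X = (S,p), Y = (S,q), and α = (1/2)|p − q|₁. Then k(X,Y) ≤ 2(α·ln|S| + Ent(Λ_α)), where Λ_α is the binary probability space with atom weights α and 1−α. -/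
open scoped Classical BigOperators
open Finset

private lemma aux_log_ge {t : ℝ} (ht : 0 < t) : 1 - 1 / t ≤ Real.log t := by
  have h := Real.log_le_sub_one_of_pos (show (0:ℝ) < 1 / t by positivity)
  rw [Real.log_div one_ne_zero ht.ne', Real.log_one] at h
  linarith

private lemma aux_L1 {x y c d : ℝ} (hx : 0 ≤ x) (hy : 0 ≤ y) (hxc : x ≤ c) (hyd : y ≤ d)
    (hcd : c + d ≤ 1) :
    (x + y) * Real.log (x + y) ≤ x * Real.log (x / c) + y * Real.log (y / d) := by
  rcases hx.eq_or_lt with hx0 | hx0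
  · rcases hy.eq_or_lt with hy0 | hy0
    · simp [← hx0, ← hy0]
    · have hd0 : 0 < d := lt_of_lt_of_le hy0 hyd
      have hc0 : 0 ≤ c := hx.trans hxc
      have hd1 : d ≤ 1 := by linarith
      have hld : Real.log d ≤ 0 := Real.log_nonpos hd0.le hd1
      rw [← hx0, Real.log_div hy0.ne' hd0.ne']
      have h2 : 0 ≤ y * (-Real.log d) := mul_nonneg hy0.le (by linarith)
      simp only [zero_add, zero_mul]
      nlinarith
  · rcases hy.eq_or_lt with hy0 | hy0
    · have hc0 : 0 < c := lt_of_lt_of_le hx0 hxc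
      have hd0 : 0 ≤ d := hy.trans hyd
      have hc1 : c ≤ 1 := by linarith
      have hlc : Real.log c ≤ 0 := Real.log_nonpos hc0.le hc1
      rw [← hy0, Real.log_div hx0.ne' hc0.ne']
      have h2 : 0 ≤ x * (-Real.log c) := mul_nonneg hx0.le (by linarith)
      simp only [add_zero, zero_mul]
      nlinarith
    · have hc0 : 0 < c := lt_of_lt_of_le hx0 hxc
      have hd0 : 0 < d := lt_of_lt_of_le hy0 hyd
      have hs : 0 < x + y := by linarith
      have key : ∀ u e : ℝ, 0 < u → 0 < e →
          u - e * (x + y) ≤ u * Real.log (u / e) - u * Real.log (x + y) := by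
        intro u e hu he
        have h1 := aux_log_ge (show 0 < u / (e * (x + y)) by positivity)
        have h2 : 1 / (u / (e * (x + y))) = e * (x + y) / u := one_div_div _ _
        rw [h2] at h1
        have h3 := mul_le_mul_of_nonneg_left h1 hu.le
        have h4 : u * (1 - e * (x + y) / u) = u - e * (x + y) := by
          rw [mul_sub, mul_one, mul_div_cancel₀ _ hu.ne']
        have h5 : Real.log (u / (e * (x + y))) = Real.log (u / e) - Real.log (x + y) := by
          rw [← div_div,
            Real.log_div (show (0:ℝ) < u / e by positivity).ne' hs.ne']
        rw [h4, h5] at h3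
        have h6 : u * (Real.log (u / e) - Real.log (x + y))
            = u * Real.log (u / e) - u * Real.log (x + y) := by ring
        linarith
      have kx := key x c hx0 hc0
      have ky := key y d hy0 hd0
      have hsum : c * (x + y) + d * (x + y) ≤ x + y := by nlinarith
      have hexp : (x + y) * Real.log (x + y)
          = x * Real.log (x + y) + y * Real.log (x + y) := by ring
      linarith

private lemma aux_log_div_eq {m c : ℝ} (hm : 0 ≤ m) (hmc : m ≤ c) :
    m * Real.log (m / c) = m * Real.log m - m * Real.log c := by
  rcases hm.eq_or_lt with h | h
  · simp [← h]
  · have hc : 0 < c := lt_of_lt_of_le h hmc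
    rw [Real.log_div h.ne' hc.ne']; ring

private lemma aux_ent_term {a α : ℝ} {n : ℕ} (hn : 1 ≤ n) (ha : 0 ≤ a) (haα : a ≤ α) :
    -(a * Real.log a) - a * Real.log n + a * Real.log α ≤ α / n - a := by
  have hα0 : 0 ≤ α := ha.trans haα
  have hn0 : (0:ℝ) < n := by exact_mod_cast hn
  rcases ha.eq_or_lt with h | h
  · rw [← h]; simp; positivity
  · have hα : 0 < α := lt_of_lt_of_le h haα
    have key := Real.log_le_sub_one_of_pos (show (0:ℝ) < α / (a * n) by positivity)
    have e : Real.log (α / (a * n)) = Real.log α - Real.log a - Real.log n := by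
      rw [Real.log_div hα.ne' (by positivity), Real.log_mul h.ne' hn0.ne']
      ring
    rw [e] at key
    have h3 := mul_le_mul_of_nonneg_left key h.le
    have h4 : a * (α / (a * n) - 1) = α / n - a := by
      field_simp
    have h5 : a * (Real.log α - Real.log a - Real.log n)
        = -(a * Real.log a) - a * Real.log n + a * Real.log α := by ring
    linarith

private lemma kdist_le_aux {S : Type*} [Fintype S] (p q m a b : S → ℝ) (α : ℝ)
    (hp0 : ∀ x, 0 ≤ p x) (hp1 : ∑ x, p x = 1)
    (hq0 : ∀ x, 0 ≤ q x) (hq1 : ∑ x, q x = 1)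
    (hm0 : ∀ x, 0 ≤ m x) (ha0 : ∀ x, 0 ≤ a x) (hb0 : ∀ x, 0 ≤ b x)
    (hab0 : ∀ x, a x * b x = 0)
    (hpa : ∀ x, p x = m x + a x) (hqb : ∀ x, q x = m x + b x)
    (hsa : ∑ x, a x = α) (hsb : ∑ x, b x = α) (hsm : ∑ x, m x = 1 - α) :
    kdist p q ≤ 2 * (α * Real.log (Fintype.card S)
      - (α * Real.log α + (1 - α) * Real.log (1 - α))) := by
  classical
  -- basic facts
  have hα0 : 0 ≤ α := by
    rw [← hsa]; exact Finset.sum_nonneg fun i _ => ha0 i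
  have hα1 : α ≤ 1 := by
    have h := Finset.sum_nonneg fun i (_ : i ∈ (univ : Finset S)) => hm0 i
    rw [hsm] at h; linarith
  have haα : ∀ x, a x ≤ α := fun x => by
    have := Finset.single_le_sum (fun i (_ : i ∈ (univ : Finset S)) => ha0 i) (mem_univ x)
    rwa [hsa] at this
  have hbα : ∀ x, b x ≤ α := fun x => by
    have := Finset.single_le_sum (fun i (_ : i ∈ (univ : Finset S)) => hb0 i) (mem_univ x)
    rwa [hsb] at this
  have hm1α : ∀ x, m x ≤ 1 - α := fun x => by
    have := Finset.single_le_sum (fun i (_ : i ∈ (univ : Finset S)) => hm0 i) (mem_univ x)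
    rwa [hsm] at this
  have hune : (univ : Finset S).Nonempty := by
    by_contra h
    rw [Finset.not_nonempty_iff_eq_empty] at h
    rw [h, Finset.sum_empty] at hp1
    norm_num at hp1
  have hn1 : 1 ≤ Fintype.card S := by
    rw [← Finset.card_univ]; exact Finset.card_pos.2 hune
  -- the coupling
  set w : S × S → ℝ := fun z => (if z.1 = z.2 then m z.1 else 0) + a z.1 * b z.2 / α
    with hw_def
  have hw0 : ∀ z, 0 ≤ w z := by
    intro z
    refine add_nonneg ?_ (div_nonneg (mul_nonneg (ha0 _) (hb0 _)) hα0)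
    split <;> simp [hm0]
  have hwm1 : ∀ x, ∑ y, w (x, y) = p x := by
    intro x
    rw [hw_def]
    simp only []
    rw [Finset.sum_add_distrib]
    have e1 : ∑ y, (if (x, y).1 = (x, y).2 then m (x, y).1 else 0) = m x := by
      simp [Finset.sum_ite_eq]
    have e2 : ∑ y, a (x, y).1 * b (x, y).2 / α = a x := by
      simp only
      by_cases hα : α = 0
      · have hax : a x = 0 := le_antisymm (hα ▸ haα x) (ha0 x)
        simp [hα, hax]
      · rw [← Finset.sum_div, ← Finset.mul_sum, hsb, mul_div_assoc, div_self hα, mul_one]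
    rw [e1, e2, hpa x]
  have hwm2 : ∀ y, ∑ x, w (x, y) = q y := by
    intro y
    rw [hw_def]
    simp only []
    rw [Finset.sum_add_distrib]
    have e1 : ∑ x, (if (x, y).1 = (x, y).2 then m (x, y).1 else 0) = m y := by
      simp only
      rw [Finset.sum_congr rfl (fun x (_ : x ∈ univ) => by
        rw [show (if x = y then m x else 0) = (if x = y then m y else 0) from by
          split <;> simp_all])]
      simp [Finset.sum_ite_eq']
    have e2 : ∑ x, a (x, y).1 * b (x, y).2 / α = b y := by
      simp only
      by_cases hα : α = 0
      · have hby : b y = 0 := le_antisymm (hα ▸ hbα y) (hb0 y)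
        simp [hα, hby]
      · rw [← Finset.sum_div, ← Finset.sum_mul, hsa, mul_comm, mul_div_assoc,
          div_self hα, mul_one]
    rw [e1, e2, hqb y]
  have hcoup : IsCoupling w p q := by
    refine ⟨⟨hw0, ?_⟩, hwm1, hwm2⟩
    rw [Fintype.sum_prod_type]
    rw [Finset.sum_congr rfl fun x _ => hwm1 x]
    exact hp1
  -- entropy of w
  have hwterm : ∀ z : S × S, w z * Real.log (w z) =
      (if z.1 = z.2 then m z.1 * Real.log (m z.1) else 0)
      + ((a z.1 * b z.2 / α) * Real.log (a z.1)
         + (a z.1 * b z.2 / α) * Real.log (b z.2)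
         - (a z.1 * b z.2 / α) * Real.log α) := by
    rintro ⟨x, y⟩
    by_cases hxy : x = y
    · subst hxy
      simp [hw_def, hab0 x]
    · simp only [hw_def, if_neg hxy, zero_add]
      by_cases hax : a x = 0
      · simp [hax]
      by_cases hby : b y = 0
      · simp [hby]
      by_cases hα : α = 0
      · simp [hα]
      · rw [Real.log_div (mul_ne_zero hax hby) hα, Real.log_mul hax hby]
        ring
  have hsum1 : ∑ z : S × S, (if z.1 = z.2 then m z.1 * Real.log (m z.1) else 0)
      = ∑ x, m x * Real.log (m x) := by
    rw [Fintype.sum_prod_type]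
    simp [Finset.sum_ite_eq]
  have hsum2a : ∑ z : S × S, (a z.1 * b z.2 / α) * Real.log (a z.1)
      = ∑ x, a x * Real.log (a x) := by
    rw [Fintype.sum_prod_type]
    refine Finset.sum_congr rfl fun x _ => ?_
    by_cases hα : α = 0
    · have hax : a x = 0 := le_antisymm (hα ▸ haα x) (ha0 x)
      simp [hax]
    · rw [Finset.sum_congr rfl fun y (_ : y ∈ univ) =>
        (show (a x * b y / α) * Real.log (a x) = (a x * Real.log (a x) / α) * b y by ring)]
      rw [← Finset.mul_sum, hsb]
      field_simp
  have hsum2b : ∑ z : S × S, (a z.1 * b z.2 / α) * Real.log (b z.2)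
      = ∑ y, b y * Real.log (b y) := by
    rw [Fintype.sum_prod_type_right]
    refine Finset.sum_congr rfl fun y _ => ?_
    by_cases hα : α = 0
    · have hby : b y = 0 := le_antisymm (hα ▸ hbα y) (hb0 y)
      simp [hby]
    · rw [Finset.sum_congr rfl fun x (_ : x ∈ univ) =>
        (show (a x * b y / α) * Real.log (b y) = (b y * Real.log (b y) / α) * a x by ring)]
      rw [← Finset.mul_sum, hsa]
      field_simp
  have hsum2c : ∑ z : S × S, (a z.1 * b z.2 / α) * Real.log α = α * Real.log α := by
    by_cases hα : α = 0
    · simp [hα]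
    · rw [Fintype.sum_prod_type]
      rw [Finset.sum_congr rfl fun x (_ : x ∈ univ) => (show
          (∑ y, (a x * b y / α) * Real.log α) = a x * Real.log α from by
        rw [Finset.sum_congr rfl fun y (_ : y ∈ univ) =>
          (show (a x * b y / α) * Real.log α = (a x * Real.log α / α) * b y by ring)]
        rw [← Finset.mul_sum, hsb]
        field_simp)]
      rw [← Finset.sum_mul, hsa]
  have hSW : ∑ z : S × S, w z * Real.log (w z)
      = (∑ x, m x * Real.log (m x))
        + ((∑ x, a x * Real.log (a x)) + (∑ x, b x * Real.log (b x)) - α * Real.log α) := by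
    rw [Finset.sum_congr rfl fun z _ => hwterm z]
    rw [Finset.sum_add_distrib, hsum1]
    congr 1
    rw [Finset.sum_sub_distrib, Finset.sum_add_distrib, hsum2a, hsum2b, hsum2c]
  -- bound for ∑ p log p
  have hP : ∑ x, p x * Real.log (p x)
      ≤ (∑ x, m x * Real.log (m x)) - (1 - α) * Real.log (1 - α)
        + ((∑ x, a x * Real.log (a x)) - α * Real.log α) := by
    have hterm : ∀ x, p x * Real.log (p x)
        ≤ m x * Real.log (m x) - m x * Real.log (1 - α)
          + (a x * Real.log (a x) - a x * Real.log α) := by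
      intro x
      have h := aux_L1 (hm0 x) (ha0 x) (hm1α x) (haα x) (by linarith)
      rw [aux_log_div_eq (hm0 x) (hm1α x), aux_log_div_eq (ha0 x) (haα x)] at h
      rw [hpa x]
      linarith
    have h := Finset.sum_le_sum fun x (_ : x ∈ univ) => hterm x
    have e : ∑ x, (m x * Real.log (m x) - m x * Real.log (1 - α)
          + (a x * Real.log (a x) - a x * Real.log α))
        = (∑ x, m x * Real.log (m x)) - (1 - α) * Real.log (1 - α)
          + ((∑ x, a x * Real.log (a x)) - α * Real.log α) := by
      rw [Finset.sum_add_distrib, Finset.sum_sub_distrib, Finset.sum_sub_distrib,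
        ← Finset.sum_mul, ← Finset.sum_mul, hsm, hsa]
    rw [e] at h
    exact h
  have hQ : ∑ x, q x * Real.log (q x)
      ≤ (∑ x, m x * Real.log (m x)) - (1 - α) * Real.log (1 - α)
        + ((∑ x, b x * Real.log (b x)) - α * Real.log α) := by
    have hterm : ∀ x, q x * Real.log (q x)
        ≤ m x * Real.log (m x) - m x * Real.log (1 - α)
          + (b x * Real.log (b x) - b x * Real.log α) := by
      intro x
      have h := aux_L1 (hm0 x) (hb0 x) (hm1α x) (hbα x) (by linarith)
      rw [aux_log_div_eq (hm0 x) (hm1α x), aux_log_div_eq (hb0 x) (hbα x)] at h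
      rw [hqb x]
      linarith
    have h := Finset.sum_le_sum fun x (_ : x ∈ univ) => hterm x
    have e : ∑ x, (m x * Real.log (m x) - m x * Real.log (1 - α)
          + (b x * Real.log (b x) - b x * Real.log α))
        = (∑ x, m x * Real.log (m x)) - (1 - α) * Real.log (1 - α)
          + ((∑ x, b x * Real.log (b x)) - α * Real.log α) := by
      rw [Finset.sum_add_distrib, Finset.sum_sub_distrib, Finset.sum_sub_distrib,
        ← Finset.sum_mul, ← Finset.sum_mul, hsm, hsb]
    rw [e] at h
    exact h
  -- max entropy bounds
  have hent : ∀ (f : S → ℝ), (∀ x, 0 ≤ f x) → (∀ x, f x ≤ α) → (∑ x, f x = α) →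
      -(∑ x, f x * Real.log (f x)) ≤ α * Real.log (Fintype.card S) - α * Real.log α := by
    intro f hf0 hfα hfs
    have h := Finset.sum_le_sum fun x (_ : x ∈ univ) => aux_ent_term hn1 (hf0 x) (hfα x)
    have e1 : ∑ x, (-(f x * Real.log (f x)) - f x * Real.log (Fintype.card S)
          + f x * Real.log α)
        = -(∑ x, f x * Real.log (f x)) - (∑ x, f x) * Real.log (Fintype.card S)
          + (∑ x, f x) * Real.log α := by
      rw [Finset.sum_add_distrib, Finset.sum_sub_distrib, Finset.sum_neg_distrib,
        ← Finset.sum_mul, ← Finset.sum_mul]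
    have hcne : (Fintype.card S : ℝ) ≠ 0 := by
      have : (0:ℝ) < (Fintype.card S : ℝ) := by exact_mod_cast hn1
      exact this.ne'
    have e2 : ∑ x : S, (α / (Fintype.card S : ℝ) - f x) = 0 := by
      rw [Finset.sum_sub_distrib, Finset.sum_const, Finset.card_univ, hfs, nsmul_eq_mul]
      field_simp
      ring
    rw [e1, e2, hfs] at h
    linarith
  have hA := hent a ha0 haα hsa
  have hB := hent b hb0 hbα hsb
  -- lower bound: every element of the set is nonnegative
  have hlow : ∀ d ∈ {d : ℝ | ∃ w' : S × S → ℝ,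
      IsCoupling w' p q ∧ d = 2 * ent w' - ent p - ent q}, (0:ℝ) ≤ d := by
    rintro d ⟨w', ⟨⟨hw'0, _⟩, hw'1, hw'2⟩, rfl⟩
    have h1 : ∑ z : S × S, w' z * Real.log (w' z) ≤ ∑ x, p x * Real.log (p x) := by
      have hterm : ∀ z : S × S, w' z * Real.log (w' z) ≤ w' z * Real.log (p z.1) := by
        intro z
        rcases (hw'0 z).eq_or_lt with h | h
        · rw [← h]; simp
        · have hle : w' z ≤ p z.1 := by
            have h2 := Finset.single_le_sum
              (f := fun y => w' (z.1, y)) (fun i _ => hw'0 _) (Finset.mem_univ z.2)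
            rw [hw'1 z.1] at h2
            simpa using h2
          exact mul_le_mul_of_nonneg_left (Real.log_le_log h hle) (hw'0 z)
      calc ∑ z : S × S, w' z * Real.log (w' z)
          ≤ ∑ z : S × S, w' z * Real.log (p z.1) :=
            Finset.sum_le_sum fun z _ => hterm z
        _ = ∑ x, p x * Real.log (p x) := by
            rw [Fintype.sum_prod_type]
            refine Finset.sum_congr rfl fun x _ => ?_
            have e : ∀ y : S, w' (x, y) * Real.log (p (x, y).1)
                = w' (x, y) * Real.log (p x) := fun y => rfl
            rw [Finset.sum_congr rfl fun y _ => e y, ← Finset.sum_mul, hw'1]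
    have h2 : ∑ z : S × S, w' z * Real.log (w' z) ≤ ∑ y, q y * Real.log (q y) := by
      have hterm : ∀ z : S × S, w' z * Real.log (w' z) ≤ w' z * Real.log (q z.2) := by
        intro z
        rcases (hw'0 z).eq_or_lt with h | h
        · rw [← h]; simp
        · have hle : w' z ≤ q z.2 := by
            have h2 := Finset.single_le_sum
              (f := fun x => w' (x, z.2)) (fun i _ => hw'0 _) (Finset.mem_univ z.1)
            rw [hw'2 z.2] at h2
            simpa using h2
          exact mul_le_mul_of_nonneg_left (Real.log_le_log h hle) (hw'0 z)
      calc ∑ z : S × S, w' z * Real.log (w' z)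
          ≤ ∑ z : S × S, w' z * Real.log (q z.2) :=
            Finset.sum_le_sum fun z _ => hterm z
        _ = ∑ y, q y * Real.log (q y) := by
            rw [Fintype.sum_prod_type_right]
            refine Finset.sum_congr rfl fun y _ => ?_
            have e : ∀ x : S, w' (x, y) * Real.log (q (x, y).2)
                = w' (x, y) * Real.log (q y) := fun x => rfl
            rw [Finset.sum_congr rfl fun x _ => e x, ← Finset.sum_mul, hw'2]
    simp only [ent]
    linarith
  -- conclude
  have hmem : 2 * ent w - ent p - ent q ∈ {d : ℝ | ∃ w' : S × S → ℝ,
      IsCoupling w' p q ∧ d = 2 * ent w' - ent p - ent q} := ⟨w, hcoup, rfl⟩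
  have hk : kdist p q ≤ 2 * ent w - ent p - ent q := by
    unfold kdist
    exact csInf_le ⟨0, hlow⟩ hmem
  refine hk.trans ?_
  simp only [ent]
  linarith

theorem stmt16 {S : Type*} [Fintype S] (p q : S → ℝ)
    (hp : IsDist p) (hq : IsDist q) :
    kdist p q ≤
      2 * (((∑ x, |p x - q x|) / 2) * Real.log (Fintype.card S)
        + ent (fun b : Bool =>
            if b then (∑ x, |p x - q x|) / 2 else 1 - (∑ x, |p x - q x|) / 2)) := by
  obtain ⟨hp0, hp1⟩ := hp
  obtain ⟨hq0, hq1⟩ := hq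
  set α : ℝ := (∑ x, |p x - q x|) / 2 with hα_def
  have habs : ∀ x, |p x - q x|
      = (p x - min (p x) (q x)) + (q x - min (p x) (q x)) := by
    intro x
    rcases le_total (p x) (q x) with h | h
    · rw [min_eq_left h, abs_of_nonpos (by linarith)]; ring
    · rw [min_eq_right h, abs_of_nonneg (by linarith)]; ring
  have h1 : (∑ x, (p x - min (p x) (q x))) + (∑ x, (q x - min (p x) (q x))) = 2 * α := by
    rw [← Finset.sum_add_distrib, Finset.sum_congr rfl fun x _ => (habs x).symm, hα_def]
    ring
  have h2 : (∑ x, (p x - min (p x) (q x))) = (∑ x, (q x - min (p x) (q x))) := by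
    have e : ∀ x, (p x - min (p x) (q x)) - (q x - min (p x) (q x)) = p x - q x :=
      fun x => by ring
    have h3 : (∑ x, (p x - min (p x) (q x))) - (∑ x, (q x - min (p x) (q x))) = 0 := by
      rw [← Finset.sum_sub_distrib, Finset.sum_congr rfl fun x _ => e x,
        Finset.sum_sub_distrib, hp1, hq1]
      ring
    linarith
  have hsa : ∑ x, (p x - min (p x) (q x)) = α := by linarith
  have hsb : ∑ x, (q x - min (p x) (q x)) = α := by linarith
  have hsm : ∑ x, min (p x) (q x) = 1 - α := by
    have e : ∀ x, min (p x) (q x) = p x - (p x - min (p x) (q x)) := fun x => by ring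
    rw [Finset.sum_congr rfl fun x _ => e x, Finset.sum_sub_distrib, hp1, hsa]
  have key := kdist_le_aux p q (fun x => min (p x) (q x))
    (fun x => p x - min (p x) (q x)) (fun x => q x - min (p x) (q x)) α
    hp0 hp1 hq0 hq1
    (fun x => le_min (hp0 x) (hq0 x))
    (fun x => sub_nonneg.2 (min_le_left _ _))
    (fun x => sub_nonneg.2 (min_le_right _ _))
    (fun x => by
      rcases le_total (p x) (q x) with h | h
      · simp [min_eq_left h]
      · simp [min_eq_right h])
    (fun x => by ring) (fun x => by ring)
    hsa hsb hsm
  have hbool : ent (fun b : Bool => if b then α else 1 - α)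
      = -(α * Real.log α + (1 - α) * Real.log (1 - α)) := by
    simp [ent, Fintype.sum_bool]
  rw [hbool]
  linarith
end

section
/- For uniform finite probability spaces U_n and U_m of cardinalities n and m: (1) k(U_n, U_m) ≤ 2 ln 2 + |ln(n/m)|; (2) the asymptotic Kolmogorov–Sinai distance satisfies ḱ(U_n, U_m) = |ln n − ln m| = |Ent(U_n) − Ent(U_m)|. -/
open scoped Classical BigOperators
open Finset

noncomputable section
namespace Aux17

/-! ### Generic entropy lemmas -/

lemma termwise (p K : ℝ) (hp : 0 ≤ p) (hK : 0 < K) :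
    -(p * Real.log p) ≤ p * Real.log K + (1/K - p) := by
  rcases eq_or_lt_of_le hp with h|h
  · simp [← h]
    positivity
  · have h1 : Real.log (1/(p*K)) ≤ 1/(p*K) - 1 :=
      Real.log_le_sub_one_of_pos (by positivity)
    have h2 : Real.log (1/(p*K)) = -(Real.log p + Real.log K) := by
      rw [one_div, Real.log_inv, Real.log_mul h.ne' hK.ne']
    have h3 : p * (1/(p*K)) = 1/K := by field_simp
    nlinarith [mul_le_mul_of_nonneg_left h1 h.le]

lemma ent_le_log {S : Type*} [Fintype S] (p : S → ℝ) (hp : IsDist p)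
    (A : Finset S) (hA : ∀ x ∉ A, p x = 0) (K : ℕ) (hK : 0 < K)
    (hcard : A.card ≤ K) : ent p ≤ Real.log K := by
  have hKR : (0:ℝ) < K := by exact_mod_cast hK
  have hsum : ∑ x ∈ A, p x = 1 := by
    rw [← hp.2]
    exact Finset.sum_subset (Finset.subset_univ A) (fun x _ hx => hA x hx)
  have h1 : ent p = ∑ x ∈ A, -(p x * Real.log (p x)) := by
    rw [ent, ← Finset.sum_neg_distrib]
    refine (Finset.sum_subset (Finset.subset_univ A) ?_).symm
    intro x _ hx
    simp [hA x hx]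
  rw [h1]
  calc ∑ x ∈ A, -(p x * Real.log (p x))
      ≤ ∑ x ∈ A, (p x * Real.log K + (1/K - p x)) := by
        exact Finset.sum_le_sum fun x _ => termwise _ _ (hp.1 x) hKR
    _ = Real.log K + (A.card / K - 1) := by
        rw [Finset.sum_add_distrib, ← Finset.sum_mul, hsum, Finset.sum_sub_distrib,
          hsum]
        simp [Finset.sum_const]
        ring
    _ ≤ Real.log K := by
        have h2 : (A.card : ℝ) ≤ K := by exact_mod_cast hcard
        have : (A.card : ℝ)/K ≤ 1 := by
          rw [div_le_one hKR]; exact h2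
        linarith

variable {S T : Type*} [Fintype S] [Fintype T]

lemma term_mono {a b : ℝ} (ha : 0 ≤ a) (hab : a ≤ b) :
    -(a * Real.log b) ≤ -(a * Real.log a) := by
  rcases eq_or_lt_of_le ha with h|h
  · simp [← h]
  · have : Real.log a ≤ Real.log b := Real.log_le_log h hab
    nlinarith

lemma ent_marg_left (w : S × T → ℝ) (p : S → ℝ) (q : T → ℝ)
    (h : IsCoupling w p q) : ent p ≤ ent w := by
  obtain ⟨⟨hw0, _⟩, hmx, _⟩ := h
  have key : ∀ x y, -(w (x,y) * Real.log (p x)) ≤ -(w (x,y) * Real.log (w (x,y))) := by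
    intro x y
    refine term_mono (hw0 _) ?_
    rw [← hmx x]
    exact Finset.single_le_sum (fun y' _ => hw0 (x, y')) (Finset.mem_univ y)
  calc ent p = -∑ x, p x * Real.log (p x) := rfl
    _ = ∑ x, ∑ y, -(w (x,y) * Real.log (p x)) := by
        rw [← Finset.sum_neg_distrib]
        refine Finset.sum_congr rfl fun x _ => ?_
        rw [← hmx x, Finset.sum_mul, Finset.sum_neg_distrib]
    _ ≤ ∑ x, ∑ y, -(w (x,y) * Real.log (w (x,y))) := by
        exact Finset.sum_le_sum fun x _ => Finset.sum_le_sum fun y _ => key x y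
    _ = ent w := by
        rw [ent, ← Finset.sum_neg_distrib, Fintype.sum_prod_type]

lemma ent_marg_right (w : S × T → ℝ) (p : S → ℝ) (q : T → ℝ)
    (h : IsCoupling w p q) : ent q ≤ ent w := by
  obtain ⟨⟨hw0, _⟩, _, hmy⟩ := h
  have key : ∀ x y, -(w (x,y) * Real.log (q y)) ≤ -(w (x,y) * Real.log (w (x,y))) := by
    intro x y
    refine term_mono (hw0 _) ?_
    rw [← hmy y]
    exact Finset.single_le_sum (fun x' _ => hw0 (x', y)) (Finset.mem_univ x)
  calc ent q = -∑ y, q y * Real.log (q y) := rfl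
    _ = ∑ y, ∑ x, -(w (x,y) * Real.log (q y)) := by
        rw [← Finset.sum_neg_distrib]
        refine Finset.sum_congr rfl fun y _ => ?_
        rw [← hmy y, Finset.sum_mul, Finset.sum_neg_distrib]
    _ ≤ ∑ y, ∑ x, -(w (x,y) * Real.log (w (x,y))) := by
        exact Finset.sum_le_sum fun y _ => Finset.sum_le_sum fun x _ => key x y
    _ = ent w := by
        rw [ent, ← Finset.sum_neg_distrib, Fintype.sum_prod_type_right]

lemma prod_coupling (p : S → ℝ) (q : T → ℝ) (hp : IsDist p) (hq : IsDist q) :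
    IsCoupling (prodDist p q) p q := by
  refine ⟨⟨fun z => mul_nonneg (hp.1 _) (hq.1 _), ?_⟩, fun x => ?_, fun y => ?_⟩
  · rw [Fintype.sum_prod_type]
    simp only [prodDist, ← Finset.mul_sum, hq.2, mul_one]
    exact hp.2
  · simp only [prodDist, ← Finset.mul_sum, hq.2, mul_one]
  · simp only [prodDist, ← Finset.sum_mul, hp.2, one_mul]

lemma kdist_mem_lb (p : S → ℝ) (q : T → ℝ) :
    ∀ d ∈ {d : ℝ | ∃ w : S × T → ℝ, IsCoupling w p q ∧ d = 2 * ent w - ent p - ent q},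
      |ent p - ent q| ≤ d := by
  rintro d ⟨w, hw, rfl⟩
  have h1 := ent_marg_left w p q hw
  have h2 := ent_marg_right w p q hw
  rw [abs_sub_le_iff]
  constructor <;> linarith

lemma kdist_bddBelow (p : S → ℝ) (q : T → ℝ) :
    BddBelow {d : ℝ | ∃ w : S × T → ℝ, IsCoupling w p q ∧ d = 2 * ent w - ent p - ent q} :=
  ⟨|ent p - ent q|, kdist_mem_lb p q⟩

lemma kdist_ge (p : S → ℝ) (q : T → ℝ) (hp : IsDist p) (hq : IsDist q) :
    |ent p - ent q| ≤ kdist p q :=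
  le_csInf ⟨_, prodDist p q, prod_coupling p q hp hq, rfl⟩ (kdist_mem_lb p q)

lemma kdist_le (p : S → ℝ) (q : T → ℝ) (w : S × T → ℝ) (hw : IsCoupling w p q) :
    kdist p q ≤ 2 * ent w - ent p - ent q :=
  csInf_le (kdist_bddBelow p q) ⟨w, hw, rfl⟩

/-! ### The uniform distribution -/

lemma unif_isDist (a : ℕ) (ha : Fintype.card S = a) (h0 : 0 < a) :
    IsDist (fun _ : S => (1:ℝ)/a) := by
  have haR : (0:ℝ) < a := by exact_mod_cast h0
  refine ⟨fun x => by positivity, ?_⟩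
  rw [Finset.sum_const, Finset.card_univ, ha, nsmul_eq_mul]
  field_simp

lemma ent_unif (a : ℕ) (ha : Fintype.card S = a) (h0 : 0 < a) :
    ent (fun _ : S => (1:ℝ)/a) = Real.log a := by
  have haR : (0:ℝ) < a := by exact_mod_cast h0
  rw [ent, Finset.sum_const, Finset.card_univ, ha, nsmul_eq_mul, one_div,
    Real.log_inv]
  field_simp

/-! ### The monotone coupling of two uniform distributions -/

lemma clamp_eq (u v s t : ℝ) (huv : u ≤ v) (hst : s ≤ t) :
    max 0 (min v t - max u s) = max u (min v t) - max u (min v s) := by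
  rcases le_total v t with h|h <;> rcases le_total u s with h'|h' <;>
    simp [max_def, min_def] <;> split_ifs <;> linarith

lemma clamp_eq' (u v s t : ℝ) (huv : u ≤ v) (hst : s ≤ t) :
    max 0 (min v t - max u s) = max s (min t v) - max s (min t u) := by
  rcases le_total v t with h|h <;> rcases le_total u s with h'|h' <;>
    simp [max_def, min_def] <;> split_ifs <;> linarith

def W (n m : ℕ) : Fin n × Fin m → ℝ :=
  fun z => max 0 (min (((z.1 : ℕ) + 1 : ℝ)/n) (((z.2 : ℕ) + 1 : ℝ)/m)
    - max (((z.1 : ℕ) : ℝ)/n) (((z.2 : ℕ) : ℝ)/m))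

lemma W_nonneg (n m : ℕ) (z : Fin n × Fin m) : 0 ≤ W n m z := le_max_left _ _

lemma W_marg_left (n m : ℕ) (hn : 0 < n) (hm : 0 < m) (i : Fin n) :
    ∑ j : Fin m, W n m (i, j) = 1 / n := by
  have hnR : (0:ℝ) < n := by exact_mod_cast hn
  have hmR : (0:ℝ) < m := by exact_mod_cast hm
  set F : ℝ → ℝ := fun x => max (((i:ℕ):ℝ)/n) (min (((i:ℕ)+1:ℝ)/n) x) with hF
  have step : ∀ j : Fin m, W n m (i, j) = F (((j:ℕ)+1:ℝ)/m) - F (((j:ℕ):ℝ)/m) := by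
    intro j
    rw [W, hF]
    exact clamp_eq _ _ _ _ (by apply div_le_div_of_nonneg_right <;> linarith)
      (by apply div_le_div_of_nonneg_right <;> linarith)
  simp only [step]
  rw [Fin.sum_univ_eq_sum_range (fun j => F (((j:ℕ)+1:ℝ)/m) - F (((j:ℕ):ℝ)/m))]
  have tele : ∑ j ∈ Finset.range m, (F (((j:ℕ)+1:ℝ)/m) - F (((j:ℕ):ℝ)/m))
      = F ((m:ℝ)/m) - F ((0:ℝ)/m) := by
    have := Finset.sum_range_sub (fun j : ℕ => F ((j:ℝ)/m)) m
    simpa using this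
  rw [tele]
  have hi1 : ((i:ℕ):ℝ) + 1 ≤ n := by exact_mod_cast i.2
  have hFm : F ((m:ℝ)/m) = ((i:ℕ)+1:ℝ)/n := by
    rw [div_self hmR.ne', hF]
    simp only
    rw [min_eq_left (by rw [div_le_one hnR]; linarith),
      max_eq_right (by apply div_le_div_of_nonneg_right <;> linarith)]
  have hF0 : F ((0:ℝ)/m) = ((i:ℕ):ℝ)/n := by
    rw [zero_div, hF]
    simp only
    rw [min_eq_right (by positivity), max_eq_left (by positivity)]
  rw [hFm, hF0]
  field_simp
  ring

lemma W_marg_right (n m : ℕ) (hn : 0 < n) (hm : 0 < m) (j : Fin m) :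
    ∑ i : Fin n, W n m (i, j) = 1 / m := by
  have hnR : (0:ℝ) < n := by exact_mod_cast hn
  have hmR : (0:ℝ) < m := by exact_mod_cast hm
  set F : ℝ → ℝ := fun x => max (((j:ℕ):ℝ)/m) (min (((j:ℕ)+1:ℝ)/m) x) with hF
  have step : ∀ i : Fin n, W n m (i, j) = F (((i:ℕ)+1:ℝ)/n) - F (((i:ℕ):ℝ)/n) := by
    intro i
    rw [W, hF]
    exact clamp_eq' _ _ _ _ (by apply div_le_div_of_nonneg_right <;> linarith)
      (by apply div_le_div_of_nonneg_right <;> linarith)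
  simp only [step]
  rw [Fin.sum_univ_eq_sum_range (fun i => F (((i:ℕ)+1:ℝ)/n) - F (((i:ℕ):ℝ)/n))]
  have tele : ∑ i ∈ Finset.range n, (F (((i:ℕ)+1:ℝ)/n) - F (((i:ℕ):ℝ)/n))
      = F ((n:ℝ)/n) - F ((0:ℝ)/n) := by
    have := Finset.sum_range_sub (fun i : ℕ => F ((i:ℝ)/n)) n
    simpa using this
  rw [tele]
  have hj1 : ((j:ℕ):ℝ) + 1 ≤ m := by exact_mod_cast j.2
  have hFm : F ((n:ℝ)/n) = ((j:ℕ)+1:ℝ)/m := by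
    rw [div_self hnR.ne', hF]
    simp only
    rw [min_eq_left (by rw [div_le_one hmR]; linarith),
      max_eq_right (by apply div_le_div_of_nonneg_right <;> linarith)]
  have hF0 : F ((0:ℝ)/n) = ((j:ℕ):ℝ)/m := by
    rw [zero_div, hF]
    simp only
    rw [min_eq_right (by positivity), max_eq_left (by positivity)]
  rw [hFm, hF0]
  field_simp
  ring

lemma W_sum (n m : ℕ) (hn : 0 < n) (hm : 0 < m) : ∑ z, W n m z = 1 := by
  have hnR : (0:ℝ) < n := by exact_mod_cast hn
  rw [Fintype.sum_prod_type]
  simp only [W_marg_left n m hn hm]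
  rw [Finset.sum_const, Finset.card_univ, Fintype.card_fin, nsmul_eq_mul]
  field_simp

lemma W_coupling (n m : ℕ) (hn : 0 < n) (hm : 0 < m) :
    IsCoupling (W n m) (fun _ : Fin n => (1:ℝ)/n) (fun _ : Fin m => (1:ℝ)/m) :=
  ⟨⟨W_nonneg n m, W_sum n m hn hm⟩, W_marg_left n m hn hm, W_marg_right n m hn hm⟩

/-! ### Support bound for W -/

lemma W_overlap {n m : ℕ} {z : Fin n × Fin m} (h : W n m z ≠ 0) :
    max (((z.1:ℕ):ℝ)/n) (((z.2:ℕ):ℝ)/m)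
      < min (((z.1:ℕ)+1:ℝ)/n) (((z.2:ℕ)+1:ℝ)/m) := by
  by_contra hc
  push_neg at hc
  apply h
  rw [W, max_eq_left (by linarith)]

def phi (n m : ℕ) : Fin n × Fin m → Fin n ⊕ Fin m :=
  fun z => if ((z.2:ℕ):ℝ)/m ≤ ((z.1:ℕ):ℝ)/n then Sum.inl z.1 else Sum.inr z.2

lemma nat_eq_of_div {m : ℕ} (hm : (0:ℝ) < m) {a b : ℕ} {c : ℝ}
    (h1 : (a:ℝ)/m ≤ c) (h2 : c < ((a:ℝ)+1)/m) (h3 : (b:ℝ)/m ≤ c)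
    (h4 : c < ((b:ℝ)+1)/m) : a = b := by
  have k1 : (a:ℝ)/m < ((b:ℝ)+1)/m := lt_of_le_of_lt h1 h4
  have k2 : (b:ℝ)/m < ((a:ℝ)+1)/m := lt_of_le_of_lt h3 h2
  have l1 : (a:ℝ) < (b:ℝ)+1 := by
    have := (div_lt_div_iff₀ hm hm).mp k1
    nlinarith
  have l2 : (b:ℝ) < (a:ℝ)+1 := by
    have := (div_lt_div_iff₀ hm hm).mp k2
    nlinarith
  have : a < b + 1 := by exact_mod_cast l1
  have : b < a + 1 := by exact_mod_cast l2
  omega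

lemma phi_injOn (n m : ℕ) (hn : 0 < n) (hm : 0 < m) :
    Set.InjOn (phi n m) {z | W n m z ≠ 0} := by
  have hnR : (0:ℝ) < n := by exact_mod_cast hn
  have hmR : (0:ℝ) < m := by exact_mod_cast hm
  rintro ⟨i, j⟩ hz ⟨i', j'⟩ hz' heq
  have hov := W_overlap hz
  have hov' := W_overlap hz'
  simp only at hov hov'
  have a1 : ((j:ℕ):ℝ)/m < (((i:ℕ):ℝ)+1)/n :=
    lt_of_le_of_lt (le_max_right _ _) (lt_of_lt_of_le hov (min_le_left _ _))
  have a2 : ((i:ℕ):ℝ)/n < (((j:ℕ):ℝ)+1)/m :=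
    lt_of_le_of_lt (le_max_left _ _) (lt_of_lt_of_le hov (min_le_right _ _))
  have a1' : ((j':ℕ):ℝ)/m < (((i':ℕ):ℝ)+1)/n :=
    lt_of_le_of_lt (le_max_right _ _) (lt_of_lt_of_le hov' (min_le_left _ _))
  have a2' : ((i':ℕ):ℝ)/n < (((j':ℕ):ℝ)+1)/m :=
    lt_of_le_of_lt (le_max_left _ _) (lt_of_lt_of_le hov' (min_le_right _ _))
  by_cases hc : ((j:ℕ):ℝ)/m ≤ ((i:ℕ):ℝ)/n <;>
    by_cases hc' : ((j':ℕ):ℝ)/m ≤ ((i':ℕ):ℝ)/n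
  · rw [phi, phi] at heq
    simp only at heq
    rw [if_pos hc, if_pos hc'] at heq
    have hii : i = i' := by simpa using heq
    subst hii
    have hjj : (j:ℕ) = (j':ℕ) := nat_eq_of_div hmR hc a2 hc' a2'
    simp [Prod.ext_iff, Fin.ext_iff, hjj]
  · rw [phi, phi] at heq
    simp only at heq
    rw [if_pos hc, if_neg hc'] at heq
    exact absurd heq (by simp)
  · rw [phi, phi] at heq
    simp only at heq
    rw [if_neg hc, if_pos hc'] at heq
    exact absurd heq (by simp)
  · rw [phi, phi] at heq
    simp only at heq
    rw [if_neg hc, if_neg hc'] at heq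
    push_neg at hc hc'
    have hjj : j = j' := by simpa using heq
    subst hjj
    have hii : (i:ℕ) = (i':ℕ) := nat_eq_of_div hnR hc.le a1 hc'.le a1'
    simp [Prod.ext_iff, Fin.ext_iff, hii]

lemma support_card (n m : ℕ) (hn : 0 < n) (hm : 0 < m) :
    (Finset.univ.filter (fun z => W n m z ≠ 0)).card ≤ n + m := by
  calc (Finset.univ.filter (fun z => W n m z ≠ 0)).card
      ≤ (Finset.univ : Finset (Fin n ⊕ Fin m)).card := by
        refine Finset.card_le_card_of_injOn (phi n m)
          (fun z _ => Finset.mem_univ (phi n m z)) ?_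
        intro z hz z' hz' heq
        exact phi_injOn n m hn hm (by simpa using hz) (by simpa using hz') heq
    _ = n + m := by simp

lemma ent_W_le (n m : ℕ) (hn : 0 < n) (hm : 0 < m) :
    ent (W n m) ≤ Real.log (n + m : ℕ) := by
  refine ent_le_log (W n m) ⟨W_nonneg n m, W_sum n m hn hm⟩
    (Finset.univ.filter (fun z => W n m z ≠ 0)) ?_ (n + m) (by omega)
    (support_card n m hn hm)
  intro x hx
  by_contra hne
  exact hx (Finset.mem_filter.mpr ⟨Finset.mem_univ _, hne⟩)

/-! ### Transport to arbitrary finite types -/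

lemma kdist_unif_le (S T : Type*) [Fintype S] [Fintype T] (a b : ℕ)
    (ha : Fintype.card S = a) (hb : Fintype.card T = b)
    (h0a : 0 < a) (h0b : 0 < b) :
    kdist (fun _ : S => (1:ℝ)/a) (fun _ : T => (1:ℝ)/b)
      ≤ 2 * Real.log (a + b : ℕ) - Real.log a - Real.log b := by
  let e : S ≃ Fin a := Fintype.equivFinOfCardEq ha
  let f : T ≃ Fin b := Fintype.equivFinOfCardEq hb
  set w : S × T → ℝ := fun z => W a b (e z.1, f z.2) with hw
  have hcoup : IsCoupling w (fun _ : S => (1:ℝ)/a) (fun _ : T => (1:ℝ)/b) := by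
    refine ⟨⟨fun z => W_nonneg a b _, ?_⟩, fun x => ?_, fun y => ?_⟩
    · rw [Fintype.sum_equiv (e.prodCongr f) w (W a b) (fun z => rfl)]
      exact W_sum a b h0a h0b
    · rw [Fintype.sum_equiv f (fun y => w (x, y)) (fun y' => W a b (e x, y'))
        (fun y => rfl)]
      exact W_marg_left a b h0a h0b (e x)
    · rw [Fintype.sum_equiv e (fun x => w (x, y)) (fun x' => W a b (x', f y))
        (fun x => rfl)]
      exact W_marg_right a b h0a h0b (f y)
  have hent : ent w = ent (W a b) := by
    rw [ent, ent]
    rw [Fintype.sum_equiv (e.prodCongr f) (fun z => w z * Real.log (w z))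
      (fun z => W a b z * Real.log (W a b z)) (fun z => rfl)]
  have h := kdist_le (fun _ : S => (1:ℝ)/a) (fun _ : T => (1:ℝ)/b) w hcoup
  rw [hent, ent_unif a ha h0a, ent_unif b hb h0b] at h
  have hW := ent_W_le a b h0a h0b
  linarith

lemma two_log_max (a b : ℕ) (h0a : 0 < a) (h0b : 0 < b) :
    2 * Real.log (a + b : ℕ) - Real.log a - Real.log b
      ≤ 2 * Real.log 2 + |Real.log a - Real.log b| := by
  have haR : (0:ℝ) < a := by exact_mod_cast h0a
  have hbR : (0:ℝ) < b := by exact_mod_cast h0b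
  have habR : ((a + b : ℕ) : ℝ) = (a:ℝ) + b := by push_cast; ring
  rcases le_total a b with h|h
  · have hlog : Real.log a ≤ Real.log b :=
      Real.log_le_log haR (by exact_mod_cast h)
    have h1 : Real.log (a + b : ℕ) ≤ Real.log 2 + Real.log b := by
      rw [habR, ← Real.log_mul (by norm_num) hbR.ne']
      apply Real.log_le_log (by linarith)
      have : (a:ℝ) ≤ b := by exact_mod_cast h
      linarith
    rw [abs_of_nonpos (by linarith)]
    linarith
  · have hlog : Real.log b ≤ Real.log a :=
      Real.log_le_log hbR (by exact_mod_cast h)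
    have h1 : Real.log (a + b : ℕ) ≤ Real.log 2 + Real.log a := by
      rw [habR, ← Real.log_mul (by norm_num) haR.ne']
      apply Real.log_le_log (by linarith)
      have : (b:ℝ) ≤ a := by exact_mod_cast h
      linarith
    rw [abs_of_nonneg (by linarith)]
    linarith

lemma kdist_unif_bound (S T : Type*) [Fintype S] [Fintype T] (a b : ℕ)
    (ha : Fintype.card S = a) (hb : Fintype.card T = b)
    (h0a : 0 < a) (h0b : 0 < b) :
    kdist (fun _ : S => (1:ℝ)/a) (fun _ : T => (1:ℝ)/b)
      ≤ 2 * Real.log 2 + |Real.log a - Real.log b| :=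
  le_trans (kdist_unif_le S T a b ha hb h0a h0b) (two_log_max a b h0a h0b)

lemma kdist_unif_ge (S T : Type*) [Fintype S] [Fintype T] (a b : ℕ)
    (ha : Fintype.card S = a) (hb : Fintype.card T = b)
    (h0a : 0 < a) (h0b : 0 < b) :
    |Real.log a - Real.log b| ≤ kdist (fun _ : S => (1:ℝ)/a) (fun _ : T => (1:ℝ)/b) := by
  have := kdist_ge (fun _ : S => (1:ℝ)/a) (fun _ : T => (1:ℝ)/b)
    (unif_isDist a ha h0a) (unif_isDist b hb h0b)
  rwa [ent_unif a ha h0a, ent_unif b hb h0b] at this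

lemma powDist_unif (n N : ℕ) :
    powDist (fun _ : Fin n => (1:ℝ)/n) N = fun _ => (1:ℝ)/((n^N : ℕ):ℝ) := by
  funext g
  rw [powDist, Finset.prod_const, Finset.card_univ, Fintype.card_fin]
  push_cast
  rw [div_pow, one_pow]

end Aux17
end

theorem stmt17 (n m : ℕ) (hn : 0 < n) (hm : 0 < m) :
    kdist (fun _ : Fin n => (1 : ℝ) / n) (fun _ : Fin m => (1 : ℝ) / m)
        ≤ 2 * Real.log 2 + |Real.log ((n : ℝ) / m)| ∧
    Filter.Tendsto (fun N : ℕ =>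
        kdist (powDist (fun _ : Fin n => (1 : ℝ) / n) N)
              (powDist (fun _ : Fin m => (1 : ℝ) / m) N) / N)
      Filter.atTop (nhds |Real.log n - Real.log m|) ∧
    |Real.log n - Real.log m|
      = |ent (fun _ : Fin n => (1 : ℝ) / n) - ent (fun _ : Fin m => (1 : ℝ) / m)| := by
  have hnR : (0:ℝ) < n := by exact_mod_cast hn
  have hmR : (0:ℝ) < m := by exact_mod_cast hm
  set L : ℝ := |Real.log n - Real.log m| with hL
  refine ⟨?_, ?_, ?_⟩
  · -- part 1
    have h := Aux17.kdist_unif_bound (Fin n) (Fin m) n m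
      (Fintype.card_fin n) (Fintype.card_fin m) hn hm
    rwa [← Real.log_div hnR.ne' hmR.ne'] at h
  · -- part 2
    have key : ∀ N : ℕ,
        kdist (powDist (fun _ : Fin n => (1 : ℝ) / n) N)
          (powDist (fun _ : Fin m => (1 : ℝ) / m) N)
        = kdist (fun _ : Fin N → Fin n => (1:ℝ)/((n^N : ℕ):ℝ))
            (fun _ : Fin N → Fin m => (1:ℝ)/((m^N : ℕ):ℝ)) := by
      intro N
      rw [Aux17.powDist_unif n N, Aux17.powDist_unif m N]
    have hcardn : ∀ N : ℕ, Fintype.card (Fin N → Fin n) = n ^ N := by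
      intro N; rw [Fintype.card_fun, Fintype.card_fin, Fintype.card_fin]
    have hcardm : ∀ N : ℕ, Fintype.card (Fin N → Fin m) = m ^ N := by
      intro N; rw [Fintype.card_fun, Fintype.card_fin, Fintype.card_fin]
    have hlogpow : ∀ N : ℕ,
        |Real.log ((n^N : ℕ) : ℝ) - Real.log ((m^N : ℕ) : ℝ)| = N * L := by
      intro N
      push_cast
      rw [Real.log_pow, Real.log_pow, ← mul_sub, abs_mul, Nat.abs_cast, hL]
    have hub : ∀ N : ℕ, kdist (powDist (fun _ : Fin n => (1 : ℝ) / n) N)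
        (powDist (fun _ : Fin m => (1 : ℝ) / m) N) ≤ 2 * Real.log 2 + N * L := by
      intro N
      rw [key N, ← hlogpow N]
      exact Aux17.kdist_unif_bound _ _ _ _ (hcardn N) (hcardm N)
        (pow_pos hn N) (pow_pos hm N)
    have hlb : ∀ N : ℕ, (N : ℝ) * L ≤ kdist (powDist (fun _ : Fin n => (1 : ℝ) / n) N)
        (powDist (fun _ : Fin m => (1 : ℝ) / m) N) := by
      intro N
      rw [key N, ← hlogpow N]
      exact Aux17.kdist_unif_ge _ _ _ _ (hcardn N) (hcardm N)
        (pow_pos hn N) (pow_pos hm N)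
    have hto : Filter.Tendsto (fun N : ℕ => L + 2 * Real.log 2 / N)
        Filter.atTop (nhds L) := by
      have := tendsto_const_div_atTop_nhds_zero_nat (2 * Real.log 2)
      have h2 := Filter.Tendsto.add (tendsto_const_nhds (x := L)) this
      simpa using h2
    refine tendsto_of_tendsto_of_tendsto_of_le_of_le' (g := fun _ : ℕ => L) tendsto_const_nhds hto ?_ ?_
    all_goals {
      filter_upwards [Filter.eventually_ge_atTop 1] with N hN
      have hNR : (0:ℝ) < N := by exact_mod_cast hN
      first
      | { rw [le_div_iff₀ hNR, mul_comm]
          exact hlb N }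
      | { rw [div_le_iff₀ hNR]
          have := hub N
          calc kdist (powDist (fun _ : Fin n => (1 : ℝ) / n) N)
                (powDist (fun _ : Fin m => (1 : ℝ) / m) N)
              ≤ 2 * Real.log 2 + N * L := hub N
            _ = (L + 2 * Real.log 2 / N) * N := by field_simp; ring }
    }
  · -- part 3
    rw [Aux17.ent_unif n (Fintype.card_fin n) hn,
      Aux17.ent_unif m (Fintype.card_fin m) hm]
end
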